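/- arXiv:2108.13167 — 2 statements merged into one kernel-verified Lean document; each statement's English description precedes it below -/
import Mathlib

section
/- Let ν ∈ ℤ_{>0}^m and μ ∈ ℤ_{>0}^n with ∑_{i∈I} ν_i = ∑_{j∈J} μ_j, and let d ≥ 1. Suppose there exist partitions I = I_1 ⊔ ⋯ ⊔ I_d and J = J_1 ⊔ ⋯ ⊔ J_d into nonempty sets with ∑_{i∈I_l} ν_i = ∑_{j∈J_l} μ_j for every l ∈ {1,…,d}. Then there exists E ⊆ I × J such that T_E(ν,μ) is nonempty, the ERP number of T_E(ν,μ) equals d, and |E| = m + n − d if d ≥ d_⋆ while |E| = m + n − d + 1 if d < d_⋆. -/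
open scoped Classical

noncomputable section

variable {m n : ℕ}

/-- The transportation polytope `T_E(ν,μ)`: nonnegative `m × n` matrices with row sums `ν`,
column sums `μ`, supported on the edge set `E`. -/
def transportationPolytope (ν : Fin m → ℝ) (μ : Fin n → ℝ)
    (E : Finset (Fin m × Fin n)) : Set (Fin m → Fin n → ℝ) :=
  {x | (∀ i j, 0 ≤ x i j) ∧ (∀ i, ∑ j, x i j = ν i) ∧
    (∀ j, ∑ i, x i j = μ j) ∧ ∀ i j, (i, j) ∉ E → x i j = 0}

/-- The neighborhood `N_F(S) = {j : ∃ i ∈ S, (i,j) ∈ F}`. -/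
def nbr (F : Finset (Fin m × Fin n)) (S : Finset (Fin m)) : Finset (Fin n) :=
  Finset.univ.filter fun j => ∃ i ∈ S, (i, j) ∈ F

/-- `ν` satisfies the capacity condition for `(μ, E)`. -/
def capacityCond (ν : Fin m → ℝ) (μ : Fin n → ℝ) (E : Finset (Fin m × Fin n)) : Prop :=
  ∀ S : Finset (Fin m), ∑ i ∈ S, ν i ≤ ∑ j ∈ nbr E S, μ j

/-- The CRP condition for `(ν, μ, E)`. -/
def crpCond (ν : Fin m → ℝ) (μ : Fin n → ℝ) (E : Finset (Fin m × Fin n)) : Prop :=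
  (∑ i, ν i) = (∑ j, μ j) ∧
  ∀ S : Finset (Fin m), S.Nonempty → S ≠ Finset.univ →
    ∑ i ∈ S, ν i < ∑ j ∈ nbr E S, μ j

/-- The bipartite simple graph `G(F)` on `I ⊔ J` determined by the edge set `F`. -/
def bipartiteGraph (F : Finset (Fin m × Fin n)) : SimpleGraph (Fin m ⊕ Fin n) :=
  SimpleGraph.fromRel fun u v => ∃ i j, u = Sum.inl i ∧ v = Sum.inr j ∧ (i, j) ∈ F

/-- The number of connected components of `G(F)`. -/
def numComponents (F : Finset (Fin m × Fin n)) : ℕ :=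
  Nat.card (bipartiteGraph F).ConnectedComponent

/-- The set `E_r` of redundant edges of `T_E(ν,μ)`. -/
def redundantEdges (ν : Fin m → ℝ) (μ : Fin n → ℝ)
    (E : Finset (Fin m × Fin n)) : Finset (Fin m × Fin n) :=
  E.filter fun e => ∀ x ∈ transportationPolytope ν μ E, x e.1 e.2 = 0

/-- The ERP number of `T_E(ν,μ)`: the number of connected components of `G(E ∖ E_r)`. -/
def erpNumber (ν : Fin m → ℝ) (μ : Fin n → ℝ) (E : Finset (Fin m × Fin n)) : ℕ :=
  numComponents (E \ redundantEdges ν μ E)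

/-- The support edge set `B(x) = {(i,j) ∈ E : x_{ij} > 0}`. -/
def supportEdges (E : Finset (Fin m × Fin n)) (x : Fin m → Fin n → ℝ) :
    Finset (Fin m × Fin n) :=
  E.filter fun e => 0 < x e.1 e.2

/-- The indicator vector `𝟙_S ∈ ℝ^m` of `S ⊆ I`. -/
def indicatorVec (S : Finset (Fin m)) : Fin m → ℝ := fun i => if i ∈ S then 1 else 0

/-- `S ⊆ I` is binding if `∑_{i∈S} ν_i = ∑_{j∈N_E(S)} μ_j`. -/
def IsBinding (ν : Fin m → ℝ) (μ : Fin n → ℝ) (E : Finset (Fin m × Fin n))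
    (S : Finset (Fin m)) : Prop :=
  (∑ i ∈ S, ν i) = ∑ j ∈ nbr E S, μ j

/-- The greatest common divisor of all `m + n` components of `ν` and `μ`. -/
def gcdVec (ν : Fin m → ℕ) (μ : Fin n → ℕ) : ℕ :=
  Nat.gcd (Finset.univ.gcd ν) (Finset.univ.gcd μ)

/-- `d_⋆ = max {1, m + n − (∑ᵢ νᵢ) / gcd(ν,μ)}`. -/
def dStar (ν : Fin m → ℕ) (μ : Fin n → ℕ) : ℕ :=
  max 1 (m + n - (∑ i, ν i) / gcdVec ν μ)

/-- The CRP-gap `δ_F(ν,μ)` of the edge set `F` (computed with respect to the redundant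
edges of `T_F(ν,μ)`). -/
def crpGap (ν : Fin m → ℝ) (μ : Fin n → ℝ) (F : Finset (Fin m × Fin n)) : ℝ :=
  sInf {t : ℝ | ∃ C : Finset (Fin m),
    (∑ i ∈ C, ν i) < (∑ j ∈ nbr (F \ redundantEdges ν μ F) C, μ j) ∧
    t = (∑ j ∈ nbr F C, μ j) - ∑ i ∈ C, ν i}

/-- The CRP-graph relation `R` on the connected components of `G(E ∖ E_r)`:
`R c₁ c₂` holds iff `c₁ ≠ c₂` and some edge `(i,j) ∈ E` has `i` in the demand side of `c₁`
and `j` in the supply side of `c₂`. -/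
def crpRel (ν : Fin m → ℝ) (μ : Fin n → ℝ) (E : Finset (Fin m × Fin n)) :
    (bipartiteGraph (E \ redundantEdges ν μ E)).ConnectedComponent →
    (bipartiteGraph (E \ redundantEdges ν μ E)).ConnectedComponent → Prop :=
  fun c₁ c₂ => c₁ ≠ c₂ ∧ ∃ i j, (i, j) ∈ E ∧
    (bipartiteGraph (E \ redundantEdges ν μ E)).connectedComponentMk (Sum.inl i) = c₁ ∧
    (bipartiteGraph (E \ redundantEdges ν μ E)).connectedComponentMk (Sum.inr j) = c₂

end

noncomputable section Aux

variable {m n : ℕ} {α : Type*} [Zero α]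

/-- support of a matrix as a finset of pairs -/
def fsupp (x : Fin m → Fin n → α) : Finset (Fin m × Fin n) :=
  Finset.univ.filter fun e => x e.1 e.2 ≠ 0

lemma mem_fsupp {x : Fin m → Fin n → α} {e : Fin m × Fin n} :
    e ∈ fsupp x ↔ x e.1 e.2 ≠ 0 := by simp [fsupp]

/-- one-step adjacency through a nonzero entry -/
def estep (x : Fin m → Fin n → α) : (Fin m ⊕ Fin n) → (Fin m ⊕ Fin n) → Prop :=
  fun u v => ∃ i j, x i j ≠ 0 ∧
    ((u = Sum.inl i ∧ v = Sum.inr j) ∨ (v = Sum.inl i ∧ u = Sum.inr j))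

/-- reachability through nonzero entries -/
def reach (x : Fin m → Fin n → α) : (Fin m ⊕ Fin n) → (Fin m ⊕ Fin n) → Prop :=
  Relation.ReflTransGen (estep x)

lemma estep.symm {x : Fin m → Fin n → α} {u v} (h : estep x u v) : estep x v u := by
  obtain ⟨i, j, hx, h | h⟩ := h
  · exact ⟨i, j, hx, Or.inr ⟨h.1, h.2⟩⟩
  · exact ⟨i, j, hx, Or.inl ⟨h.1, h.2⟩⟩

lemma reach.refl {x : Fin m → Fin n → α} {u} : reach x u u := Relation.ReflTransGen.refl

lemma reach.trans {x : Fin m → Fin n → α} {u v w} (h : reach x u v) (h' : reach x v w) :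
    reach x u w := Relation.ReflTransGen.trans h h'

lemma reach.symm {x : Fin m → Fin n → α} {u v} (h : reach x u v) : reach x v u := by
  induction h with
  | refl => exact reach.refl
  | tail _ h2 ih => exact reach.trans (Relation.ReflTransGen.single h2.symm) ih

lemma estep.reach {x : Fin m → Fin n → α} {u v} (h : estep x u v) : reach x u v :=
  Relation.ReflTransGen.single h

lemma reach_lift {β : Type*} [Zero β] {x : Fin m → Fin n → α} {y : Fin m → Fin n → β}
    (H : ∀ u v, estep x u v → reach y u v) {u v} (h : reach x u v) : reach y u v := by
  induction h with
  | refl => exact reach.refl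
  | tail _ h2 ih => exact reach.trans ih (H _ _ h2)

lemma estep_of_entries {x : Fin m → Fin n → α} {i : Fin m} {j : Fin n} (h : x i j ≠ 0) :
    estep x (Sum.inl i) (Sum.inr j) := ⟨i, j, h, Or.inl ⟨rfl, rfl⟩⟩

/-- counting connected components via a labelling -/
lemma numComponents_eq_of_lab (E : Finset (Fin m × Fin n)) (d : ℕ)
    (lab : (Fin m ⊕ Fin n) → Fin d)
    (hlab : ∀ i j, (i, j) ∈ E → lab (Sum.inl i) = lab (Sum.inr j))
    (hconn : ∀ u v, lab u = lab v → (bipartiteGraph E).Reachable u v)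
    (hsurj : Function.Surjective lab) :
    numComponents E = d := by
  have hadj : ∀ u v, (bipartiteGraph E).Adj u v → lab u = lab v := by
    intro u v h
    rw [bipartiteGraph, SimpleGraph.fromRel_adj] at h
    obtain ⟨-, ⟨i, j, rfl, rfl, hij⟩ | ⟨i, j, rfl, rfl, hij⟩⟩ := h
    · exact hlab i j hij
    · exact (hlab i j hij).symm
  have hwalk : ∀ u v, (bipartiteGraph E).Reachable u v → lab u = lab v := by
    intro u v h
    obtain ⟨w⟩ := h
    induction w with
    | nil => rfl
    | cons h _ ih => exact (hadj _ _ h).trans ih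
  let φ : (bipartiteGraph E).ConnectedComponent → Fin d :=
    SimpleGraph.ConnectedComponent.lift lab (fun v w p _ => hwalk v w ⟨p⟩)
  have hφmk : ∀ u, φ ((bipartiteGraph E).connectedComponentMk u) = lab u := fun u => rfl
  have hbij : Function.Bijective φ := by
    constructor
    · intro c c'
      refine SimpleGraph.ConnectedComponent.ind₂ (fun u v h => ?_) c c'
      rw [hφmk, hφmk] at h
      exact SimpleGraph.ConnectedComponent.sound (hconn u v h)
    · intro t
      obtain ⟨u, hu⟩ := hsurj t
      exact ⟨(bipartiteGraph E).connectedComponentMk u, by rw [hφmk, hu]⟩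
  rw [numComponents, Nat.card_eq_of_bijective φ hbij, Nat.card_eq_fintype_card,
    Fintype.card_fin]

/-- the main plumbing lemma: an everywhere-positive solution with a component labelling -/
lemma main_construct (νr : Fin m → ℝ) (μr : Fin n → ℝ) (x : Fin m → Fin n → ℝ) (d : ℕ)
    (hx0 : ∀ i j, 0 ≤ x i j) (hrow : ∀ i, ∑ j, x i j = νr i)
    (hcol : ∀ j, ∑ i, x i j = μr j)
    (lab : (Fin m ⊕ Fin n) → Fin d)
    (hlab : ∀ i j, x i j ≠ 0 → lab (Sum.inl i) = lab (Sum.inr j))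
    (hconn : ∀ u v, lab u = lab v → reach x u v)
    (hsurj : Function.Surjective lab) :
    (transportationPolytope νr μr (fsupp x)).Nonempty ∧
      erpNumber νr μr (fsupp x) = d := by
  have hmem : x ∈ transportationPolytope νr μr (fsupp x) := by
    refine ⟨hx0, hrow, hcol, fun i j hij => ?_⟩
    by_contra h
    exact hij (mem_fsupp.2 h)
  have hred : redundantEdges νr μr (fsupp x) = ∅ := by
    rw [redundantEdges, Finset.filter_eq_empty_iff]
    intro e he h
    exact mem_fsupp.1 he (h x hmem)
  have hreach : ∀ u v, reach x u v → (bipartiteGraph (fsupp x)).Reachable u v := by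
    intro u v h
    induction h with
    | refl => exact SimpleGraph.Reachable.refl _
    | tail _ h2 ih =>
        refine ih.trans (SimpleGraph.Adj.reachable ?_)
        obtain ⟨i, j, hx, h | h⟩ := h2
        · rw [h.1, h.2, bipartiteGraph, SimpleGraph.fromRel_adj]
          exact ⟨by simp, Or.inl ⟨i, j, rfl, rfl, mem_fsupp.2 hx⟩⟩
        · rw [h.1, h.2, bipartiteGraph, SimpleGraph.fromRel_adj]
          exact ⟨by simp, Or.inr ⟨i, j, rfl, rfl, mem_fsupp.2 hx⟩⟩
  refine ⟨⟨x, hmem⟩, ?_⟩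
  rw [erpNumber, hred, Finset.sdiff_empty]
  refine numComponents_eq_of_lab _ d lab (fun i j hij => hlab i j (mem_fsupp.1 hij))
    (fun u v h => hreach u v (hconn u v h)) hsurj

def inCmp (C : Finset (Fin m) × Finset (Fin n)) : (Fin m ⊕ Fin n) → Prop :=
  Sum.elim (· ∈ C.1) (· ∈ C.2)

def cedges (x : Fin m → Fin n → α) (C : Finset (Fin m) × Finset (Fin n)) :
    Finset (Fin m × Fin n) :=
  (C.1 ×ˢ C.2).filter fun e => x e.1 e.2 ≠ 0

lemma mem_cedges {x : Fin m → Fin n → α} {C} {e : Fin m × Fin n} :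
    e ∈ cedges x C ↔ e.1 ∈ C.1 ∧ e.2 ∈ C.2 ∧ x e.1 e.2 ≠ 0 := by
  simp [cedges, Finset.mem_filter, Finset.mem_product, and_assoc]

structure PPS (R : Finset (Fin m)) (Cs : Finset (Fin n)) (a : Fin m → ℕ) (b : Fin n → ℕ) where
  x : Fin m → Fin n → ℕ
  comps : Finset (Finset (Fin m) × Finset (Fin n))
  hsupp : ∀ i j, x i j ≠ 0 → i ∈ R ∧ j ∈ Cs
  hrow : ∀ i ∈ R, ∑ j, x i j = a i
  hcol : ∀ j ∈ Cs, ∑ i, x i j = b j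
  hcovR : ∀ i ∈ R, ∃ C ∈ comps, i ∈ C.1
  hcovC : ∀ j ∈ Cs, ∃ C ∈ comps, j ∈ C.2
  hsubR : ∀ C ∈ comps, C.1 ⊆ R
  hsubC : ∀ C ∈ comps, C.2 ⊆ Cs
  hdisR : ∀ C ∈ comps, ∀ C' ∈ comps, ∀ i, i ∈ C.1 → i ∈ C'.1 → C = C'
  hdisC : ∀ C ∈ comps, ∀ C' ∈ comps, ∀ j, j ∈ C.2 → j ∈ C'.2 → C = C'
  hedge : ∀ i j, x i j ≠ 0 → ∀ C ∈ comps, (i ∈ C.1 → j ∈ C.2) ∧ (j ∈ C.2 → i ∈ C.1)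
  hconn : ∀ C ∈ comps, ∀ u v, inCmp C u → inCmp C v → reach x u v
  hneR : ∀ C ∈ comps, C.1.Nonempty
  hneC : ∀ C ∈ comps, C.2.Nonempty
  htree : ∀ C ∈ comps, (cedges x C).card + 1 = C.1.card + C.2.card

/-- the empty state -/
def ppsEmpty (a : Fin m → ℕ) (b : Fin n → ℕ) : PPS ∅ ∅ a b where
  x := fun _ _ => 0
  comps := ∅
  hsupp := fun i j h => absurd rfl h
  hrow := fun i hi => absurd hi (by simp)
  hcol := fun j hj => absurd hj (by simp)
  hcovR := fun i hi => absurd hi (by simp)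
  hcovC := fun j hj => absurd hj (by simp)
  hsubR := fun C hC => absurd hC (by simp)
  hsubC := fun C hC => absurd hC (by simp)
  hdisR := fun C hC => absurd hC (by simp)
  hdisC := fun C hC => absurd hC (by simp)
  hedge := fun i j h => absurd rfl h
  hconn := fun C hC => absurd hC (by simp)
  hneR := fun C hC => absurd hC (by simp)
  hneC := fun C hC => absurd hC (by simp)
  htree := fun C hC => absurd hC (by simp)

/-- attach a balanced pair `(i₀, j₀)` as a new singleton component -/
lemma pps_attach_pair {R' : Finset (Fin m)} {C' : Finset (Fin n)} {a : Fin m → ℕ}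
    {b : Fin n → ℕ} {i₀ : Fin m} {j₀ : Fin n} (hi₀ : i₀ ∉ R') (hj₀ : j₀ ∉ C')
    (st : PPS R' C' a b) (hpos : 0 < a i₀) (heq : a i₀ = b j₀) :
    Nonempty (PPS (insert i₀ R') (insert j₀ C') a b) := by
  classical
  have hx0r : ∀ j, st.x i₀ j = 0 := by
    intro j; by_contra h; exact hi₀ (st.hsupp _ _ h).1
  have hx0c : ∀ i, st.x i j₀ = 0 := by
    intro i; by_contra h; exact hj₀ (st.hsupp _ _ h).2
  set x : Fin m → Fin n → ℕ :=
    fun i j => st.x i j + (if i = i₀ ∧ j = j₀ then a i₀ else 0) with hxdef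
  have hxval : ∀ i j, ¬(i = i₀ ∧ j = j₀) → x i j = st.x i j := by
    intro i j h; simp [hxdef, h]
  have hxij : x i₀ j₀ = a i₀ := by simp [hxdef, hx0r]
  have hchi_row : ∀ i, (∑ j, if i = i₀ ∧ j = j₀ then a i₀ else 0)
      = if i = i₀ then a i₀ else 0 := by
    intro i; by_cases h : i = i₀ <;> simp [h]
  have hchi_col : ∀ j, (∑ i, if i = i₀ ∧ j = j₀ then a i₀ else 0)
      = if j = j₀ then a i₀ else 0 := by
    intro j; by_cases h : j = j₀ <;> simp [h]
  have hestep : ∀ u v, estep st.x u v → reach x u v := by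
    intro u v ⟨i, j, hij, h⟩
    have : ¬(i = i₀ ∧ j = j₀) := by
      rintro ⟨rfl, rfl⟩; exact hij (hx0r j)
    exact estep.reach ⟨i, j, by rw [hxval i j this]; exact hij, h⟩
  set M : Finset (Fin m) × Finset (Fin n) := ({i₀}, {j₀}) with hMdef
  refine ⟨⟨x, insert M st.comps, ?_, ?_, ?_, ?_, ?_, ?_, ?_, ?_, ?_, ?_, ?_, ?_, ?_, ?_⟩⟩
  · -- hsupp
    intro i j h
    by_cases hc : i = i₀ ∧ j = j₀
    · exact ⟨by simp [hc.1], by simp [hc.2]⟩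
    · rw [hxval i j hc] at h
      exact ⟨Finset.mem_insert_of_mem (st.hsupp _ _ h).1,
        Finset.mem_insert_of_mem (st.hsupp _ _ h).2⟩
  · -- hrow
    intro i hi
    rw [hxdef]
    simp only [Finset.sum_add_distrib, hchi_row]
    rcases Finset.mem_insert.1 hi with rfl | hi'
    · rw [if_pos rfl, Finset.sum_eq_zero (fun j _ => hx0r j)]; omega
    · rw [if_neg (by rintro rfl; exact hi₀ hi'), st.hrow i hi']; ring
  · -- hcol
    intro j hj
    rw [hxdef]
    simp only [Finset.sum_add_distrib, hchi_col]
    rcases Finset.mem_insert.1 hj with rfl | hj'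
    · rw [if_pos rfl, Finset.sum_eq_zero (fun i _ => hx0c i), heq]; omega
    · rw [if_neg (by rintro rfl; exact hj₀ hj'), st.hcol j hj']; ring
  · -- hcovR
    intro i hi
    rcases Finset.mem_insert.1 hi with rfl | hi'
    · exact ⟨M, Finset.mem_insert_self _ _, by simp [hMdef]⟩
    · obtain ⟨C, hC, hiC⟩ := st.hcovR i hi'
      exact ⟨C, Finset.mem_insert_of_mem hC, hiC⟩
  · -- hcovC
    intro j hj
    rcases Finset.mem_insert.1 hj with rfl | hj'
    · exact ⟨M, Finset.mem_insert_self _ _, by simp [hMdef]⟩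
    · obtain ⟨C, hC, hjC⟩ := st.hcovC j hj'
      exact ⟨C, Finset.mem_insert_of_mem hC, hjC⟩
  · -- hsubR
    intro C hC
    rcases Finset.mem_insert.1 hC with rfl | hC'
    · simp [hMdef]
    · exact (st.hsubR C hC').trans (Finset.subset_insert _ _)
  · -- hsubC
    intro C hC
    rcases Finset.mem_insert.1 hC with rfl | hC'
    · simp [hMdef]
    · exact (st.hsubC C hC').trans (Finset.subset_insert _ _)
  · -- hdisR
    intro C hC C' hC' i hiC hiC'
    rcases Finset.mem_insert.1 hC with rfl | h1 <;> rcases Finset.mem_insert.1 hC' with rfl | h2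
    · rfl
    · exfalso
      have : i = i₀ := by simpa [hMdef] using hiC
      exact hi₀ (st.hsubR C' h2 (this ▸ hiC'))
    · exfalso
      have : i = i₀ := by simpa [hMdef] using hiC'
      exact hi₀ (st.hsubR C h1 (this ▸ hiC))
    · exact st.hdisR C h1 C' h2 i hiC hiC'
  · -- hdisC
    intro C hC C' hC' j hjC hjC'
    rcases Finset.mem_insert.1 hC with rfl | h1 <;> rcases Finset.mem_insert.1 hC' with rfl | h2
    · rfl
    · exfalso
      have : j = j₀ := by simpa [hMdef] using hjC
      exact hj₀ (st.hsubC C' h2 (this ▸ hjC'))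
    · exfalso
      have : j = j₀ := by simpa [hMdef] using hjC'
      exact hj₀ (st.hsubC C h1 (this ▸ hjC))
    · exact st.hdisC C h1 C' h2 j hjC hjC'
  · -- hedge
    intro i j hxne C hC
    by_cases hc : i = i₀ ∧ j = j₀
    · obtain ⟨rfl, rfl⟩ := hc
      rcases Finset.mem_insert.1 hC with rfl | hC'
      · exact ⟨fun _ => by simp [hMdef], fun _ => by simp [hMdef]⟩
      · exact ⟨fun h => absurd (st.hsubR C hC' h) hi₀,
          fun h => absurd (st.hsubC C hC' h) hj₀⟩
    · rw [hxval i j hc] at hxne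
      rcases Finset.mem_insert.1 hC with rfl | hC'
      · constructor
        · intro h
          have : i = i₀ := by simpa [hMdef] using h
          exact absurd (hx0r j) (this ▸ hxne)
        · intro h
          have : j = j₀ := by simpa [hMdef] using h
          exact absurd (hx0c i) (this ▸ hxne)
      · exact st.hedge i j hxne C hC'
  · -- hconn
    intro C hC u v hu hv
    rcases Finset.mem_insert.1 hC with rfl | hC'
    · have key : ∀ w, inCmp M w → reach x w (Sum.inr j₀) := by
        intro w hw
        match w with
        | Sum.inl i =>
            have : i = i₀ := by simpa [hMdef, inCmp] using hw
            subst this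
            exact estep.reach (estep_of_entries (by rw [hxij]; omega))
        | Sum.inr j =>
            have : j = j₀ := by simpa [hMdef, inCmp] using hw
            subst this
            exact reach.refl
      exact (key u hu).trans (key v hv).symm
    · exact reach_lift hestep (st.hconn C hC' u v hu hv)
  · -- hneR
    intro C hC
    rcases Finset.mem_insert.1 hC with rfl | hC'
    · simp [hMdef]
    · exact st.hneR C hC'
  · -- hneC
    intro C hC
    rcases Finset.mem_insert.1 hC with rfl | hC'
    · simp [hMdef]
    · exact st.hneC C hC'
  · -- htree
    intro C hC
    rcases Finset.mem_insert.1 hC with rfl | hC'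
    · have : cedges x M = {(i₀, j₀)} := by
        ext ⟨i, j⟩
        simp only [mem_cedges, hMdef, Finset.mem_singleton, Finset.mem_singleton,
          Prod.mk.injEq]
        constructor
        · rintro ⟨h1, h2, -⟩
          exact ⟨by simpa using h1, by simpa using h2⟩
        · rintro ⟨rfl, rfl⟩
          exact ⟨by simp, by simp, by rw [hxij]; omega⟩
      rw [this]
      simp [hMdef]
    · have : cedges x C = cedges st.x C := by
        ext ⟨i, j⟩
        simp only [mem_cedges]
        constructor
        · rintro ⟨h1, h2, h3⟩
          refine ⟨h1, h2, ?_⟩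
          rwa [hxval i j (by rintro ⟨rfl, rfl⟩; exact hi₀ (st.hsubR C hC' h1))] at h3
        · rintro ⟨h1, h2, h3⟩
          refine ⟨h1, h2, ?_⟩
          rwa [hxval i j (by rintro ⟨rfl, rfl⟩; exact hi₀ (st.hsubR C hC' h1))]
      rw [this]
      exact st.htree C hC'

/-- attach row `i₀` as a leaf onto column `j₀` (which belongs to component `D`) -/
lemma pps_attach_row {R' : Finset (Fin m)} {Cs : Finset (Fin n)} {a : Fin m → ℕ}
    {b : Fin n → ℕ} {i₀ : Fin m} {j₀ : Fin n} (hi₀ : i₀ ∉ R') (hj₀ : j₀ ∈ Cs)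
    (st : PPS R' Cs a (Function.update b j₀ (b j₀ - a i₀)))
    (hpos : 0 < a i₀) (hlt : a i₀ < b j₀) :
    Nonempty (PPS (insert i₀ R') Cs a b) := by
  classical
  obtain ⟨D, hD, hjD⟩ := st.hcovC j₀ hj₀
  have hx0r : ∀ j, st.x i₀ j = 0 := by
    intro j; by_contra h; exact hi₀ (st.hsupp _ _ h).1
  have hi₀D : i₀ ∉ D.1 := fun h => hi₀ (st.hsubR D hD h)
  set x : Fin m → Fin n → ℕ :=
    fun i j => st.x i j + (if i = i₀ ∧ j = j₀ then a i₀ else 0) with hxdef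
  have hxval : ∀ i j, ¬(i = i₀ ∧ j = j₀) → x i j = st.x i j := by
    intro i j h; simp [hxdef, h]
  have hxij : x i₀ j₀ = a i₀ := by simp [hxdef, hx0r]
  have hchi_row : ∀ i, (∑ j, if i = i₀ ∧ j = j₀ then a i₀ else 0)
      = if i = i₀ then a i₀ else 0 := by
    intro i; by_cases h : i = i₀ <;> simp [h]
  have hchi_col : ∀ j, (∑ i, if i = i₀ ∧ j = j₀ then a i₀ else 0)
      = if j = j₀ then a i₀ else 0 := by
    intro j; by_cases h : j = j₀ <;> simp [h]
  have hestep : ∀ u v, estep st.x u v → reach x u v := by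
    intro u v ⟨i, j, hij, h⟩
    have : ¬(i = i₀ ∧ j = j₀) := by
      rintro ⟨rfl, rfl⟩; exact hij (hx0r j)
    exact estep.reach ⟨i, j, by rw [hxval i j this]; exact hij, h⟩
  set M : Finset (Fin m) × Finset (Fin n) := (insert i₀ D.1, D.2) with hMdef
  refine ⟨⟨x, insert M (st.comps.erase D),
    ?_, ?_, ?_, ?_, ?_, ?_, ?_, ?_, ?_, ?_, ?_, ?_, ?_, ?_⟩⟩
  · -- hsupp
    intro i j h
    by_cases hc : i = i₀ ∧ j = j₀
    · exact ⟨by simp [hc.1], hc.2 ▸ hj₀⟩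
    · rw [hxval i j hc] at h
      exact ⟨Finset.mem_insert_of_mem (st.hsupp _ _ h).1, (st.hsupp _ _ h).2⟩
  · -- hrow
    intro i hi
    rw [hxdef]
    simp only [Finset.sum_add_distrib, hchi_row]
    rcases Finset.mem_insert.1 hi with rfl | hi'
    · rw [if_pos rfl, Finset.sum_eq_zero (fun j _ => hx0r j)]; omega
    · rw [if_neg (by rintro rfl; exact hi₀ hi'), st.hrow i hi']; ring
  · -- hcol
    intro j hj
    rw [hxdef]
    simp only [Finset.sum_add_distrib, hchi_col]
    by_cases hjj : j = j₀
    · subst hjj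
      rw [if_pos rfl, st.hcol j hj, Function.update_self]
      omega
    · rw [if_neg hjj, st.hcol j hj, Function.update_of_ne hjj]; ring
  · -- hcovR
    intro i hi
    rcases Finset.mem_insert.1 hi with rfl | hi'
    · exact ⟨M, Finset.mem_insert_self _ _, by simp [hMdef]⟩
    · obtain ⟨C, hC, hiC⟩ := st.hcovR i hi'
      by_cases hCD : C = D
      · exact ⟨M, Finset.mem_insert_self _ _, by
          simp only [hMdef]; exact Finset.mem_insert_of_mem (hCD ▸ hiC)⟩
      · exact ⟨C, Finset.mem_insert_of_mem (Finset.mem_erase.2 ⟨hCD, hC⟩), hiC⟩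
  · -- hcovC
    intro j hj
    obtain ⟨C, hC, hjC⟩ := st.hcovC j hj
    by_cases hCD : C = D
    · exact ⟨M, Finset.mem_insert_self _ _, by simp only [hMdef]; exact hCD ▸ hjC⟩
    · exact ⟨C, Finset.mem_insert_of_mem (Finset.mem_erase.2 ⟨hCD, hC⟩), hjC⟩
  · -- hsubR
    intro C hC
    rcases Finset.mem_insert.1 hC with rfl | hC'
    · simp only [hMdef]
      exact Finset.insert_subset_insert _ (st.hsubR D hD)
    · exact (st.hsubR C (Finset.mem_of_mem_erase hC')).trans (Finset.subset_insert _ _)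
  · -- hsubC
    intro C hC
    rcases Finset.mem_insert.1 hC with rfl | hC'
    · exact st.hsubC D hD
    · exact st.hsubC C (Finset.mem_of_mem_erase hC')
  · -- hdisR
    intro C hC C' hC' i hiC hiC'
    rcases Finset.mem_insert.1 hC with rfl | h1 <;> rcases Finset.mem_insert.1 hC' with rfl | h2
    · rfl
    · exfalso
      rcases Finset.mem_insert.1 hiC with h3 | hiD
      · exact hi₀ (st.hsubR C' (Finset.mem_of_mem_erase h2) (h3 ▸ hiC'))
      · exact (Finset.mem_erase.1 h2).1
          (st.hdisR C' (Finset.mem_of_mem_erase h2) D hD i hiC' hiD)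
    · exfalso
      rcases Finset.mem_insert.1 hiC' with h3 | hiD
      · exact hi₀ (st.hsubR C (Finset.mem_of_mem_erase h1) (h3 ▸ hiC))
      · exact (Finset.mem_erase.1 h1).1
          (st.hdisR C (Finset.mem_of_mem_erase h1) D hD i hiC hiD)
    · exact st.hdisR C (Finset.mem_of_mem_erase h1) C' (Finset.mem_of_mem_erase h2) i hiC hiC'
  · -- hdisC
    intro C hC C' hC' j hjC hjC'
    rcases Finset.mem_insert.1 hC with rfl | h1 <;> rcases Finset.mem_insert.1 hC' with rfl | h2
    · rfl
    · exfalso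
      exact (Finset.mem_erase.1 h2).1
        (st.hdisC C' (Finset.mem_of_mem_erase h2) D hD j hjC' hjC)
    · exfalso
      exact (Finset.mem_erase.1 h1).1
        (st.hdisC C (Finset.mem_of_mem_erase h1) D hD j hjC hjC')
    · exact st.hdisC C (Finset.mem_of_mem_erase h1) C' (Finset.mem_of_mem_erase h2) j hjC hjC'
  · -- hedge
    intro i j hxne C hC
    by_cases hc : i = i₀ ∧ j = j₀
    · obtain ⟨hc1, hc2⟩ := hc
      rcases Finset.mem_insert.1 hC with rfl | hC'
      · refine ⟨fun _ => by rw [hc2]; exact hjD, fun _ => by rw [hc1]; exact Finset.mem_insert_self _ _⟩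
      · constructor
        · intro h
          rw [hc1] at h
          exact absurd (st.hsubR C (Finset.mem_of_mem_erase hC') h) hi₀
        · intro h
          rw [hc2] at h
          exact absurd (st.hdisC C (Finset.mem_of_mem_erase hC') D hD j₀ h hjD)
            (Finset.mem_erase.1 hC').1
    · rw [hxval i j hc] at hxne
      rcases Finset.mem_insert.1 hC with rfl | hC'
      · constructor
        · intro h
          rcases Finset.mem_insert.1 h with rfl | hiD
          · exact absurd (hx0r j) hxne
          · exact (st.hedge i j hxne D hD).1 hiD
        · intro h
          exact Finset.mem_insert_of_mem ((st.hedge i j hxne D hD).2 h)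
      · exact st.hedge i j hxne C (Finset.mem_of_mem_erase hC')
  · -- hconn
    intro C hC u v hu hv
    rcases Finset.mem_insert.1 hC with rfl | hC'
    · have key : ∀ w, inCmp M w → reach x w (Sum.inr j₀) := by
        intro w hw
        match w with
        | Sum.inl i =>
            have hi : i ∈ insert i₀ D.1 := by simpa [hMdef, inCmp] using hw
            rcases Finset.mem_insert.1 hi with rfl | hiD
            · exact estep.reach (estep_of_entries (by rw [hxij]; omega))
            · exact reach_lift hestep (st.hconn D hD (Sum.inl i) (Sum.inr j₀) hiD hjD)
        | Sum.inr j =>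
            have hj : j ∈ D.2 := by simpa [hMdef, inCmp] using hw
            exact reach_lift hestep (st.hconn D hD (Sum.inr j) (Sum.inr j₀) hj hjD)
      exact (key u hu).trans (key v hv).symm
    · exact reach_lift hestep
        (st.hconn C (Finset.mem_of_mem_erase hC') u v hu hv)
  · -- hneR
    intro C hC
    rcases Finset.mem_insert.1 hC with rfl | hC'
    · exact ⟨i₀, Finset.mem_insert_self _ _⟩
    · exact st.hneR C (Finset.mem_of_mem_erase hC')
  · -- hneC
    intro C hC
    rcases Finset.mem_insert.1 hC with rfl | hC'
    · exact st.hneC D hD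
    · exact st.hneC C (Finset.mem_of_mem_erase hC')
  · -- htree
    intro C hC
    rcases Finset.mem_insert.1 hC with rfl | hC'
    · have hceq : cedges x M = insert (i₀, j₀) (cedges st.x D) := by
        ext ⟨i, j⟩
        rw [Finset.mem_insert]
        simp only [mem_cedges, hMdef]
        constructor
        · rintro ⟨h1, h2, h3⟩
          rcases Finset.mem_insert.1 h1 with h4 | hiD
          · left
            have hj : j = j₀ := by
              by_contra hne
              exact h3 (by rw [hxval i j (by tauto), h4]; exact hx0r j)
            rw [h4, hj]
          · right
            exact ⟨hiD, h2,
              by rwa [hxval i j (by rintro ⟨rfl, rfl⟩; exact hi₀D hiD)] at h3⟩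
        · rintro (h | h)
          · obtain ⟨h4, h5⟩ := Prod.mk.injEq .. ▸ h
            refine ⟨?_, ?_, ?_⟩
            · rw [h4]; exact Finset.mem_insert_self _ _
            · rw [h5]; exact hjD
            · rw [h4, h5, hxij]; omega
          · obtain ⟨h1, h2, h3⟩ := h
            exact ⟨Finset.mem_insert_of_mem h1, h2,
              by rwa [hxval i j (by rintro ⟨rfl, rfl⟩; exact hi₀D h1)]⟩
      have hnotin : (i₀, j₀) ∉ cedges st.x D := by
        intro h
        exact hi₀D (mem_cedges.1 h).1
      rw [hceq, Finset.card_insert_of_notMem hnotin]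
      have := st.htree D hD
      simp only [hMdef, Finset.card_insert_of_notMem hi₀D]
      omega
    · have : cedges x C = cedges st.x C := by
        ext ⟨i, j⟩
        simp only [mem_cedges]
        have hiC : i ∈ C.1 → ¬(i = i₀ ∧ j = j₀) := by
          rintro h ⟨rfl, rfl⟩
          exact hi₀ (st.hsubR C (Finset.mem_of_mem_erase hC') h)
        constructor
        · rintro ⟨h1, h2, h3⟩
          exact ⟨h1, h2, by rwa [hxval i j (hiC h1)] at h3⟩
        · rintro ⟨h1, h2, h3⟩
          exact ⟨h1, h2, by rwa [hxval i j (hiC h1)]⟩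
      rw [this]
      exact st.htree C (Finset.mem_of_mem_erase hC')

/-- attach column `j₀` as a leaf onto row `i₀` (which belongs to component `D`) -/
lemma pps_attach_col {Rs : Finset (Fin m)} {Cs' : Finset (Fin n)} {a : Fin m → ℕ}
    {b : Fin n → ℕ} {i₀ : Fin m} {j₀ : Fin n} (hi₀ : i₀ ∈ Rs) (hj₀ : j₀ ∉ Cs')
    (st : PPS Rs Cs' (Function.update a i₀ (a i₀ - b j₀)) b)
    (hpos : 0 < b j₀) (hlt : b j₀ < a i₀) :
    Nonempty (PPS Rs (insert j₀ Cs') a b) := by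
  classical
  obtain ⟨D, hD, hiD⟩ := st.hcovR i₀ hi₀
  have hx0c : ∀ i, st.x i j₀ = 0 := by
    intro i; by_contra h; exact hj₀ (st.hsupp _ _ h).2
  have hj₀D : j₀ ∉ D.2 := fun h => hj₀ (st.hsubC D hD h)
  set x : Fin m → Fin n → ℕ :=
    fun i j => st.x i j + (if i = i₀ ∧ j = j₀ then b j₀ else 0) with hxdef
  have hxval : ∀ i j, ¬(i = i₀ ∧ j = j₀) → x i j = st.x i j := by
    intro i j h; simp [hxdef, h]
  have hxij : x i₀ j₀ = b j₀ := by simp [hxdef, hx0c]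
  have hchi_row : ∀ i, (∑ j, if i = i₀ ∧ j = j₀ then b j₀ else 0)
      = if i = i₀ then b j₀ else 0 := by
    intro i; by_cases h : i = i₀ <;> simp [h]
  have hchi_col : ∀ j, (∑ i, if i = i₀ ∧ j = j₀ then b j₀ else 0)
      = if j = j₀ then b j₀ else 0 := by
    intro j; by_cases h : j = j₀ <;> simp [h]
  have hestep : ∀ u v, estep st.x u v → reach x u v := by
    intro u v ⟨i, j, hij, h⟩
    have : ¬(i = i₀ ∧ j = j₀) := by
      rintro ⟨rfl, rfl⟩; exact hij (hx0c i)
    exact estep.reach ⟨i, j, by rw [hxval i j this]; exact hij, h⟩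
  set M : Finset (Fin m) × Finset (Fin n) := (D.1, insert j₀ D.2) with hMdef
  refine ⟨⟨x, insert M (st.comps.erase D),
    ?_, ?_, ?_, ?_, ?_, ?_, ?_, ?_, ?_, ?_, ?_, ?_, ?_, ?_⟩⟩
  · -- hsupp
    intro i j h
    by_cases hc : i = i₀ ∧ j = j₀
    · exact ⟨hc.1 ▸ hi₀, by simp [hc.2]⟩
    · rw [hxval i j hc] at h
      exact ⟨(st.hsupp _ _ h).1, Finset.mem_insert_of_mem (st.hsupp _ _ h).2⟩
  · -- hrow
    intro i hi
    rw [hxdef]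
    simp only [Finset.sum_add_distrib, hchi_row]
    by_cases hii : i = i₀
    · subst hii
      rw [if_pos rfl, st.hrow i hi, Function.update_self]
      omega
    · rw [if_neg hii, st.hrow i hi, Function.update_of_ne hii]; ring
  · -- hcol
    intro j hj
    rw [hxdef]
    simp only [Finset.sum_add_distrib, hchi_col]
    rcases Finset.mem_insert.1 hj with rfl | hj'
    · rw [if_pos rfl, Finset.sum_eq_zero (fun i _ => hx0c i)]; omega
    · rw [if_neg (by rintro rfl; exact hj₀ hj'), st.hcol j hj']; ring
  · -- hcovR
    intro i hi
    obtain ⟨C, hC, hiC⟩ := st.hcovR i hi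
    by_cases hCD : C = D
    · exact ⟨M, Finset.mem_insert_self _ _, by simp only [hMdef]; exact hCD ▸ hiC⟩
    · exact ⟨C, Finset.mem_insert_of_mem (Finset.mem_erase.2 ⟨hCD, hC⟩), hiC⟩
  · -- hcovC
    intro j hj
    rcases Finset.mem_insert.1 hj with rfl | hj'
    · exact ⟨M, Finset.mem_insert_self _ _, by
        simp only [hMdef]; exact Finset.mem_insert_self _ _⟩
    · obtain ⟨C, hC, hjC⟩ := st.hcovC j hj'
      by_cases hCD : C = D
      · exact ⟨M, Finset.mem_insert_self _ _, by
          simp only [hMdef]; exact Finset.mem_insert_of_mem (hCD ▸ hjC)⟩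
      · exact ⟨C, Finset.mem_insert_of_mem (Finset.mem_erase.2 ⟨hCD, hC⟩), hjC⟩
  · -- hsubR
    intro C hC
    rcases Finset.mem_insert.1 hC with rfl | hC'
    · exact st.hsubR D hD
    · exact st.hsubR C (Finset.mem_of_mem_erase hC')
  · -- hsubC
    intro C hC
    rcases Finset.mem_insert.1 hC with rfl | hC'
    · simp only [hMdef]
      exact Finset.insert_subset_insert _ (st.hsubC D hD)
    · exact (st.hsubC C (Finset.mem_of_mem_erase hC')).trans (Finset.subset_insert _ _)
  · -- hdisR
    intro C hC C' hC' i hiC hiC'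
    rcases Finset.mem_insert.1 hC with rfl | h1 <;> rcases Finset.mem_insert.1 hC' with rfl | h2
    · rfl
    · exfalso
      exact (Finset.mem_erase.1 h2).1
        (st.hdisR C' (Finset.mem_of_mem_erase h2) D hD i hiC' hiC)
    · exfalso
      exact (Finset.mem_erase.1 h1).1
        (st.hdisR C (Finset.mem_of_mem_erase h1) D hD i hiC hiC')
    · exact st.hdisR C (Finset.mem_of_mem_erase h1) C' (Finset.mem_of_mem_erase h2) i hiC hiC'
  · -- hdisC
    intro C hC C' hC' j hjC hjC'
    rcases Finset.mem_insert.1 hC with rfl | h1 <;> rcases Finset.mem_insert.1 hC' with rfl | h2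
    · rfl
    · exfalso
      rcases Finset.mem_insert.1 hjC with h3 | hjD'
      · exact hj₀ (st.hsubC C' (Finset.mem_of_mem_erase h2) (h3 ▸ hjC'))
      · exact (Finset.mem_erase.1 h2).1
          (st.hdisC C' (Finset.mem_of_mem_erase h2) D hD j hjC' hjD')
    · exfalso
      rcases Finset.mem_insert.1 hjC' with h3 | hjD'
      · exact hj₀ (st.hsubC C (Finset.mem_of_mem_erase h1) (h3 ▸ hjC))
      · exact (Finset.mem_erase.1 h1).1
          (st.hdisC C (Finset.mem_of_mem_erase h1) D hD j hjC hjD')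
    · exact st.hdisC C (Finset.mem_of_mem_erase h1) C' (Finset.mem_of_mem_erase h2) j hjC hjC'
  · -- hedge
    intro i j hxne C hC
    by_cases hc : i = i₀ ∧ j = j₀
    · obtain ⟨hc1, hc2⟩ := hc
      rcases Finset.mem_insert.1 hC with rfl | hC'
      · refine ⟨fun _ => by rw [hc2]; exact Finset.mem_insert_self _ _,
          fun _ => by rw [hc1]; exact hiD⟩
      · constructor
        · intro h
          rw [hc1] at h
          exact absurd (st.hdisR C (Finset.mem_of_mem_erase hC') D hD i₀ h hiD)
            (Finset.mem_erase.1 hC').1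
        · intro h
          rw [hc2] at h
          exact absurd (st.hsubC C (Finset.mem_of_mem_erase hC') h) hj₀
    · rw [hxval i j hc] at hxne
      rcases Finset.mem_insert.1 hC with rfl | hC'
      · constructor
        · intro h
          exact Finset.mem_insert_of_mem ((st.hedge i j hxne D hD).1 h)
        · intro h
          rcases Finset.mem_insert.1 h with h4 | hjD'
          · rw [h4] at hxne
            exact absurd (hx0c i) hxne
          · exact (st.hedge i j hxne D hD).2 hjD'
      · exact st.hedge i j hxne C (Finset.mem_of_mem_erase hC')
  · -- hconn
    intro C hC u v hu hv
    rcases Finset.mem_insert.1 hC with rfl | hC'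
    · have key : ∀ w, inCmp M w → reach x w (Sum.inl i₀) := by
        intro w hw
        match w with
        | Sum.inl i =>
            have hi : i ∈ D.1 := by simpa [hMdef, inCmp] using hw
            exact reach_lift hestep (st.hconn D hD (Sum.inl i) (Sum.inl i₀) hi hiD)
        | Sum.inr j =>
            have hj : j ∈ insert j₀ D.2 := by simpa [hMdef, inCmp] using hw
            rcases Finset.mem_insert.1 hj with rfl | hjD'
            · exact (estep.reach (estep_of_entries (i := i₀) (by rw [hxij]; omega))).symm
            · exact reach_lift hestep (st.hconn D hD (Sum.inr j) (Sum.inl i₀) hjD' hiD)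
      exact (key u hu).trans (key v hv).symm
    · exact reach_lift hestep
        (st.hconn C (Finset.mem_of_mem_erase hC') u v hu hv)
  · -- hneR
    intro C hC
    rcases Finset.mem_insert.1 hC with rfl | hC'
    · exact st.hneR D hD
    · exact st.hneR C (Finset.mem_of_mem_erase hC')
  · -- hneC
    intro C hC
    rcases Finset.mem_insert.1 hC with rfl | hC'
    · exact ⟨j₀, Finset.mem_insert_self _ _⟩
    · exact st.hneC C (Finset.mem_of_mem_erase hC')
  · -- htree
    intro C hC
    rcases Finset.mem_insert.1 hC with rfl | hC'
    · have hceq : cedges x M = insert (i₀, j₀) (cedges st.x D) := by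
        ext ⟨i, j⟩
        rw [Finset.mem_insert]
        simp only [mem_cedges, hMdef]
        constructor
        · rintro ⟨h1, h2, h3⟩
          rcases Finset.mem_insert.1 h2 with h4 | hjD'
          · left
            have hii : i = i₀ := by
              by_contra hne
              exact h3 (by rw [hxval i j (by tauto), h4]; exact hx0c i)
            rw [hii, h4]
          · right
            exact ⟨h1, hjD',
              by rwa [hxval i j (by rintro ⟨rfl, rfl⟩; exact hj₀D hjD')] at h3⟩
        · rintro (h | h)
          · obtain ⟨h4, h5⟩ := Prod.mk.injEq .. ▸ h
            refine ⟨?_, ?_, ?_⟩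
            · rw [h4]; exact hiD
            · rw [h5]; exact Finset.mem_insert_self _ _
            · rw [h4, h5, hxij]; omega
          · obtain ⟨h1, h2, h3⟩ := h
            exact ⟨h1, Finset.mem_insert_of_mem h2,
              by rwa [hxval i j (by rintro ⟨rfl, rfl⟩; exact hj₀D h2)]⟩
      have hnotin : (i₀, j₀) ∉ cedges st.x D := by
        intro h
        exact hj₀D (mem_cedges.1 h).2.1
      rw [hceq, Finset.card_insert_of_notMem hnotin]
      have := st.htree D hD
      simp only [hMdef, Finset.card_insert_of_notMem hj₀D]
      omega
    · have : cedges x C = cedges st.x C := by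
        ext ⟨i, j⟩
        simp only [mem_cedges]
        have hjC : j ∈ C.2 → ¬(i = i₀ ∧ j = j₀) := by
          rintro h ⟨rfl, rfl⟩
          exact hj₀ (st.hsubC C (Finset.mem_of_mem_erase hC') h)
        constructor
        · rintro ⟨h1, h2, h3⟩
          exact ⟨h1, h2, by rwa [hxval i j (hjC h2)] at h3⟩
        · rintro ⟨h1, h2, h3⟩
          exact ⟨h1, h2, by rwa [hxval i j (hjC h2)]⟩
      rw [this]
      exact st.htree C (Finset.mem_of_mem_erase hC')

/-- Existence of a positive-forest state. -/
lemma exists_pps (N : ℕ) : ∀ (R : Finset (Fin m)) (Cs : Finset (Fin n)) (a : Fin m → ℕ)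
    (b : Fin n → ℕ), R.card + Cs.card ≤ N → R.Nonempty →
    (∀ i ∈ R, 0 < a i) → (∀ j ∈ Cs, 0 < b j) →
    (∑ i ∈ R, a i) = (∑ j ∈ Cs, b j) → Nonempty (PPS R Cs a b) := by
  induction N with
  | zero =>
      intro R Cs a b hN hR _ _ _
      obtain ⟨i, hi⟩ := hR
      have := Finset.card_pos.2 ⟨i, hi⟩
      omega
  | succ N ih =>
      intro R Cs a b hN hR haR hbC hbal
      obtain ⟨i₀, hi₀⟩ := hR
      have hCs : Cs.Nonempty := by
        by_contra h
        rw [Finset.not_nonempty_iff_eq_empty] at h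
        subst h
        simp only [Finset.sum_empty] at hbal
        have h1 := Finset.sum_pos (fun i hi => haR i hi) ⟨i₀, hi₀⟩
        omega
      obtain ⟨j₀, hj₀⟩ := hCs
      have hRcard := Finset.card_pos.2 ⟨i₀, hi₀⟩
      have hCcard := Finset.card_pos.2 ⟨j₀, hj₀⟩
      have hsumR : a i₀ + ∑ i ∈ R.erase i₀, a i = ∑ i ∈ R, a i :=
        Finset.add_sum_erase R a hi₀
      have hsumC : b j₀ + ∑ j ∈ Cs.erase j₀, b j = ∑ j ∈ Cs, b j :=
        Finset.add_sum_erase Cs b hj₀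
      rcases lt_trichotomy (a i₀) (b j₀) with hlt | heq | hgt
      · -- peel row i₀ onto column j₀
        have hR' : (R.erase i₀).Nonempty := by
          rcases Finset.eq_empty_or_nonempty (R.erase i₀) with h | h
          · exfalso
            rw [h, Finset.sum_empty] at hsumR
            have : b j₀ ≤ ∑ j ∈ Cs, b j :=
              Finset.single_le_sum (fun j _ => Nat.zero_le _) hj₀
            omega
          · exact h
        have hcard : (R.erase i₀).card + Cs.card ≤ N := by
          rw [Finset.card_erase_of_mem hi₀]; omega
        have hbal' : (∑ i ∈ R.erase i₀, a i)
            = ∑ j ∈ Cs, Function.update b j₀ (b j₀ - a i₀) j := by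
          rw [Finset.sum_update_of_mem hj₀, ← Finset.erase_eq]
          omega
        obtain ⟨st⟩ := ih (R.erase i₀) Cs a (Function.update b j₀ (b j₀ - a i₀)) hcard hR'
          (fun i hi => haR i (Finset.mem_of_mem_erase hi))
          (by
            intro j hj
            by_cases h : j = j₀
            · subst h; rw [Function.update_self]; omega
            · rw [Function.update_of_ne h]; exact hbC j hj)
          hbal'
        obtain ⟨st2⟩ := pps_attach_row (Finset.notMem_erase i₀ R) hj₀ st
          (haR i₀ hi₀) hlt
        rw [Finset.insert_erase hi₀] at st2
        exact ⟨st2⟩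
      · -- split off balanced pair
        rcases Finset.eq_empty_or_nonempty (R.erase i₀) with hRe | hR'
        · -- R = {i₀}, Cs = {j₀}
          have hRsing : R = {i₀} := by
            apply Finset.eq_singleton_iff_unique_mem.2
            refine ⟨hi₀, fun i hi => ?_⟩
            by_contra hne
            have : i ∈ R.erase i₀ := Finset.mem_erase.2 ⟨hne, hi⟩
            rw [hRe] at this
            exact absurd this (Finset.notMem_empty i)
          have hCe : ∑ j ∈ Cs.erase j₀, b j = 0 := by
            rw [hRsing, Finset.sum_singleton] at hbal
            omega
          have hCsing : Cs = {j₀} := by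
            apply Finset.eq_singleton_iff_unique_mem.2
            refine ⟨hj₀, fun j hj => ?_⟩
            by_contra hne
            have hmem : j ∈ Cs.erase j₀ := Finset.mem_erase.2 ⟨hne, hj⟩
            have : 0 < b j := hbC j hj
            have : b j ≤ ∑ j ∈ Cs.erase j₀, b j :=
              Finset.single_le_sum (fun _ _ => Nat.zero_le _) hmem
            omega
          obtain ⟨st2⟩ := pps_attach_pair (R' := ∅) (C' := ∅)
            (Finset.notMem_empty i₀) (Finset.notMem_empty j₀)
            (ppsEmpty a b) (haR i₀ hi₀) heq
          rw [hRsing, hCsing]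
          simpa using ⟨st2⟩
        · have hC' : (Cs.erase j₀).Nonempty := by
            rcases Finset.eq_empty_or_nonempty (Cs.erase j₀) with h | h
            · exfalso
              rw [h, Finset.sum_empty] at hsumC
              have h1 := Finset.sum_pos
                (fun i hi => haR i (Finset.mem_of_mem_erase hi)) hR'
              omega
            · exact h
          have hcard : (R.erase i₀).card + (Cs.erase j₀).card ≤ N := by
            rw [Finset.card_erase_of_mem hi₀, Finset.card_erase_of_mem hj₀]; omega
          obtain ⟨st⟩ := ih (R.erase i₀) (Cs.erase j₀) a b hcard hR'
            (fun i hi => haR i (Finset.mem_of_mem_erase hi))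
            (fun j hj => hbC j (Finset.mem_of_mem_erase hj))
            (by omega)
          obtain ⟨st2⟩ := pps_attach_pair (Finset.notMem_erase i₀ R)
            (Finset.notMem_erase j₀ Cs) st (haR i₀ hi₀) heq
          rw [Finset.insert_erase hi₀, Finset.insert_erase hj₀] at st2
          exact ⟨st2⟩
      · -- peel column j₀ onto row i₀
        have hC' : (Cs.erase j₀).Nonempty := by
          rcases Finset.eq_empty_or_nonempty (Cs.erase j₀) with h | h
          · exfalso
            rw [h, Finset.sum_empty] at hsumC
            have : a i₀ ≤ ∑ i ∈ R, a i :=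
              Finset.single_le_sum (fun i _ => Nat.zero_le _) hi₀
            omega
          · exact h
        have hcard : R.card + (Cs.erase j₀).card ≤ N := by
          rw [Finset.card_erase_of_mem hj₀]; omega
        have hbal' : (∑ i ∈ R, Function.update a i₀ (a i₀ - b j₀) i)
            = ∑ j ∈ Cs.erase j₀, b j := by
          rw [Finset.sum_update_of_mem hi₀, ← Finset.erase_eq]
          omega
        obtain ⟨st⟩ := ih R (Cs.erase j₀) (Function.update a i₀ (a i₀ - b j₀)) b hcard
          ⟨i₀, hi₀⟩
          (by
            intro i hi
            by_cases h : i = i₀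
            · subst h; rw [Function.update_self]; omega
            · rw [Function.update_of_ne h]; exact haR i hi)
          (fun j hj => hbC j (Finset.mem_of_mem_erase hj))
          hbal'
        obtain ⟨st2⟩ := pps_attach_col hi₀ (Finset.notMem_erase j₀ Cs) st
          (hbC j₀ hj₀) hgt
        rw [Finset.insert_erase hj₀] at st2
        exact ⟨st2⟩

/-- union of two disjoint positive-forest states -/
lemma pps_union {R1 R2 : Finset (Fin m)} {C1 C2 : Finset (Fin n)} {a : Fin m → ℕ}
    {b : Fin n → ℕ} (hdR : Disjoint R1 R2) (hdC : Disjoint C1 C2)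
    (s1 : PPS R1 C1 a b) (s2 : PPS R2 C2 a b) :
    ∃ st : PPS (R1 ∪ R2) (C1 ∪ C2) a b, st.comps = s1.comps ∪ s2.comps := by
  classical
  set x : Fin m → Fin n → ℕ := fun i j => s1.x i j + s2.x i j with hxdef
  have hval1 : ∀ i j, s1.x i j ≠ 0 → x i j = s1.x i j := by
    intro i j h
    have h2 : s2.x i j = 0 := by
      by_contra h2
      exact (Finset.disjoint_left.1 hdR) (s1.hsupp _ _ h).1 (s2.hsupp _ _ h2).1
    simp [hxdef, h2]
  have hval2 : ∀ i j, s2.x i j ≠ 0 → x i j = s2.x i j := by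
    intro i j h
    have h2 : s1.x i j = 0 := by
      by_contra h2
      exact (Finset.disjoint_left.1 hdR) (s1.hsupp _ _ h2).1 (s2.hsupp _ _ h).1
    simp [hxdef, h2]
  have hzero1 : ∀ i j, i ∈ R1 → s2.x i j = 0 := by
    intro i j hi
    by_contra h
    exact (Finset.disjoint_left.1 hdR) hi (s2.hsupp _ _ h).1
  have hzero2 : ∀ i j, i ∈ R2 → s1.x i j = 0 := by
    intro i j hi
    by_contra h
    exact (Finset.disjoint_left.1 hdR) (s1.hsupp _ _ h).1 hi
  have hzero1c : ∀ i j, j ∈ C1 → s2.x i j = 0 := by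
    intro i j hj
    by_contra h
    exact (Finset.disjoint_left.1 hdC) hj (s2.hsupp _ _ h).2
  have hzero2c : ∀ i j, j ∈ C2 → s1.x i j = 0 := by
    intro i j hj
    by_contra h
    exact (Finset.disjoint_left.1 hdC) (s1.hsupp _ _ h).2 hj
  have hes1 : ∀ u v, estep s1.x u v → reach x u v := by
    intro u v ⟨i, j, hij, h⟩
    exact estep.reach ⟨i, j, by rw [hval1 i j hij]; exact hij, h⟩
  have hes2 : ∀ u v, estep s2.x u v → reach x u v := by
    intro u v ⟨i, j, hij, h⟩
    exact estep.reach ⟨i, j, by rw [hval2 i j hij]; exact hij, h⟩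
  have hxne : ∀ i j, x i j ≠ 0 → s1.x i j ≠ 0 ∨ s2.x i j ≠ 0 := by
    intro i j h
    by_contra hc
    push_neg at hc
    exact h (by simp [hxdef, hc.1, hc.2])
  refine ⟨⟨x, s1.comps ∪ s2.comps,
    ?_, ?_, ?_, ?_, ?_, ?_, ?_, ?_, ?_, ?_, ?_, ?_, ?_, ?_⟩, rfl⟩
  · intro i j h
    rcases hxne i j h with h | h
    · exact ⟨Finset.mem_union_left _ (s1.hsupp _ _ h).1,
        Finset.mem_union_left _ (s1.hsupp _ _ h).2⟩
    · exact ⟨Finset.mem_union_right _ (s2.hsupp _ _ h).1,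
        Finset.mem_union_right _ (s2.hsupp _ _ h).2⟩
  · intro i hi
    rw [hxdef]
    simp only [Finset.sum_add_distrib]
    rcases Finset.mem_union.1 hi with hi | hi
    · rw [s1.hrow i hi, Finset.sum_eq_zero (fun j _ => hzero1 i j hi)]; omega
    · rw [s2.hrow i hi, Finset.sum_eq_zero (fun j _ => hzero2 i j hi)]; omega
  · intro j hj
    rw [hxdef]
    simp only [Finset.sum_add_distrib]
    rcases Finset.mem_union.1 hj with hj | hj
    · rw [s1.hcol j hj, Finset.sum_eq_zero (fun i _ => hzero1c i j hj)]; omega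
    · rw [s2.hcol j hj, Finset.sum_eq_zero (fun i _ => hzero2c i j hj)]; omega
  · intro i hi
    rcases Finset.mem_union.1 hi with hi | hi
    · obtain ⟨C, hC, h⟩ := s1.hcovR i hi
      exact ⟨C, Finset.mem_union_left _ hC, h⟩
    · obtain ⟨C, hC, h⟩ := s2.hcovR i hi
      exact ⟨C, Finset.mem_union_right _ hC, h⟩
  · intro j hj
    rcases Finset.mem_union.1 hj with hj | hj
    · obtain ⟨C, hC, h⟩ := s1.hcovC j hj
      exact ⟨C, Finset.mem_union_left _ hC, h⟩
    · obtain ⟨C, hC, h⟩ := s2.hcovC j hj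
      exact ⟨C, Finset.mem_union_right _ hC, h⟩
  · intro C hC
    rcases Finset.mem_union.1 hC with hC | hC
    · exact (s1.hsubR C hC).trans Finset.subset_union_left
    · exact (s2.hsubR C hC).trans Finset.subset_union_right
  · intro C hC
    rcases Finset.mem_union.1 hC with hC | hC
    · exact (s1.hsubC C hC).trans Finset.subset_union_left
    · exact (s2.hsubC C hC).trans Finset.subset_union_right
  · intro C hC C' hC' i hiC hiC'
    rcases Finset.mem_union.1 hC with h1 | h1 <;> rcases Finset.mem_union.1 hC' with h2 | h2
    · exact s1.hdisR C h1 C' h2 i hiC hiC'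
    · exact absurd (s2.hsubR C' h2 hiC')
        (Finset.disjoint_left.1 hdR (s1.hsubR C h1 hiC))
    · exact absurd (s1.hsubR C' h2 hiC')
        (fun hh => Finset.disjoint_left.1 hdR hh (s2.hsubR C h1 hiC))
    · exact s2.hdisR C h1 C' h2 i hiC hiC'
  · intro C hC C' hC' j hjC hjC'
    rcases Finset.mem_union.1 hC with h1 | h1 <;> rcases Finset.mem_union.1 hC' with h2 | h2
    · exact s1.hdisC C h1 C' h2 j hjC hjC'
    · exact absurd (s2.hsubC C' h2 hjC')
        (Finset.disjoint_left.1 hdC (s1.hsubC C h1 hjC))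
    · exact absurd (s1.hsubC C' h2 hjC')
        (fun hh => Finset.disjoint_left.1 hdC hh (s2.hsubC C h1 hjC))
    · exact s2.hdisC C h1 C' h2 j hjC hjC'
  · intro i j h C hC
    rcases hxne i j h with h | h <;> rcases Finset.mem_union.1 hC with hC | hC
    · exact s1.hedge i j h C hC
    · constructor
      · intro hi
        exact absurd (s2.hsubR C hC hi)
          (fun hh => Finset.disjoint_left.1 hdR (s1.hsupp _ _ h).1 hh)
      · intro hj
        exact absurd (s2.hsubC C hC hj)
          (fun hh => Finset.disjoint_left.1 hdC (s1.hsupp _ _ h).2 hh)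
    · constructor
      · intro hi
        exact absurd (s2.hsupp _ _ h).1
          (Finset.disjoint_left.1 hdR (s1.hsubR C hC hi))
      · intro hj
        exact absurd (s2.hsupp _ _ h).2
          (Finset.disjoint_left.1 hdC (s1.hsubC C hC hj))
    · exact s2.hedge i j h C hC
  · intro C hC u v hu hv
    rcases Finset.mem_union.1 hC with hC | hC
    · exact reach_lift hes1 (s1.hconn C hC u v hu hv)
    · exact reach_lift hes2 (s2.hconn C hC u v hu hv)
  · intro C hC
    rcases Finset.mem_union.1 hC with hC | hC
    · exact s1.hneR C hC
    · exact s2.hneR C hC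
  · intro C hC
    rcases Finset.mem_union.1 hC with hC | hC
    · exact s1.hneC C hC
    · exact s2.hneC C hC
  · intro C hC
    rcases Finset.mem_union.1 hC with hC | hC
    · have : cedges x C = cedges s1.x C := by
        ext ⟨i, j⟩
        simp only [mem_cedges]
        constructor
        · rintro ⟨h1, h2, h3⟩
          refine ⟨h1, h2, ?_⟩
          have := hzero1 i j (s1.hsubR C hC h1)
          intro hcon
          exact h3 (by simp [hxdef, hcon, this])
        · rintro ⟨h1, h2, h3⟩
          exact ⟨h1, h2, by rw [hval1 i j h3]; exact h3⟩
      rw [this]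
      exact s1.htree C hC
    · have : cedges x C = cedges s2.x C := by
        ext ⟨i, j⟩
        simp only [mem_cedges]
        constructor
        · rintro ⟨h1, h2, h3⟩
          refine ⟨h1, h2, ?_⟩
          have := hzero2 i j (s2.hsubR C hC h1)
          intro hcon
          exact h3 (by simp [hxdef, hcon, this])
        · rintro ⟨h1, h2, h3⟩
          exact ⟨h1, h2, by rw [hval2 i j h3]; exact h3⟩
      rw [this]
      exact s2.htree C hC

/-- initial forest state from a compatible partition -/
lemma pps_init {d : ℕ} (P : Fin d → Finset (Fin m)) (Q : Fin d → Finset (Fin n))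
    (a : Fin m → ℕ) (b : Fin n → ℕ)
    (hPne : ∀ l, (P l).Nonempty)
    (hPdisj : ∀ l₁ l₂, l₁ ≠ l₂ → Disjoint (P l₁) (P l₂))
    (hQdisj : ∀ l₁ l₂, l₁ ≠ l₂ → Disjoint (Q l₁) (Q l₂))
    (hapos : ∀ i, 0 < a i) (hbpos : ∀ j, 0 < b j)
    (hbal : ∀ l, (∑ i ∈ P l, a i) = ∑ j ∈ Q l, b j) :
    ∀ s : Finset (Fin d), ∃ st : PPS (s.biUnion P) (s.biUnion Q) a b,
      s.card ≤ st.comps.card := by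
  classical
  intro s
  induction s using Finset.induction_on with
  | empty =>
      refine ⟨?_, ?_⟩
      · simpa using ppsEmpty a b
      · simp
  | @insert l s hl ih =>
      obtain ⟨sts, hsts⟩ := ih
      obtain ⟨stl⟩ := exists_pps ((P l).card + (Q l).card) (P l) (Q l) a b le_rfl
        (hPne l) (fun i _ => hapos i) (fun j _ => hbpos j) (hbal l)
      have hdR : Disjoint (P l) (s.biUnion P) := by
        rw [Finset.disjoint_biUnion_right]
        exact fun l' hl' => hPdisj l l' (by rintro rfl; exact hl hl')
      have hdC : Disjoint (Q l) (s.biUnion Q) := by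
        rw [Finset.disjoint_biUnion_right]
        exact fun l' hl' => hQdisj l l' (by rintro rfl; exact hl hl')
      obtain ⟨st, hstcomps⟩ := pps_union hdR hdC stl sts
      rw [Finset.biUnion_insert, Finset.biUnion_insert]
      refine ⟨st, ?_⟩
      have hdisj : Disjoint stl.comps sts.comps := by
        rw [Finset.disjoint_left]
        intro C hC1 hC2
        obtain ⟨i, hi⟩ := stl.hneR C hC1
        exact Finset.disjoint_left.1 hdR (stl.hsubR C hC1 hi) (sts.hsubR C hC2 hi)
      have hlcard : 1 ≤ stl.comps.card := by
        obtain ⟨i, hi⟩ := hPne l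
        obtain ⟨C, hC, -⟩ := stl.hcovR i hi
        exact Finset.card_pos.2 ⟨C, hC⟩
      have : st.comps.card = stl.comps.card + sts.comps.card := by
        rw [hstcomps, Finset.card_union_of_disjoint hdisj]
      rw [Finset.card_insert_of_notMem hl]
      omega


lemma sum_swap_two {β : Type*} [Fintype β] [DecidableEq β] (f g : β → ℕ) (p q : β)
    (hpq : p ≠ q) (hagree : ∀ r, r ≠ p → r ≠ q → f r = g r)
    (hv : f p + f q = g p + g q) :
    ∑ r, f r = ∑ r, g r := by
  classical
  have hqp : q ∈ Finset.univ.erase p := Finset.mem_erase.2 ⟨hpq.symm, Finset.mem_univ q⟩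
  have h1 : ∀ h : β → ℕ, ∑ r, h r = h p + (h q + ∑ r ∈ (Finset.univ.erase p).erase q, h r) := by
    intro h
    rw [← Finset.add_sum_erase _ h (Finset.mem_univ p), ← Finset.add_sum_erase _ h hqp]
  have hS : ∑ r ∈ (Finset.univ.erase p).erase q, f r
      = ∑ r ∈ (Finset.univ.erase p).erase q, g r :=
    Finset.sum_congr rfl (fun r hr => hagree r
      (Finset.mem_erase.1 (Finset.mem_of_mem_erase hr)).1 (Finset.mem_erase.1 hr).1)
  rw [h1 f, h1 g, hS]
  omega

/-- the merge surgery: two components with edges of different flow merge into one -/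
lemma pps_merge {a : Fin m → ℕ} {b : Fin n → ℕ}
    (st : PPS (Finset.univ : Finset (Fin m)) (Finset.univ : Finset (Fin n)) a b)
    {C₀ C₁ : Finset (Fin m) × Finset (Fin n)}
    (hC₀ : C₀ ∈ st.comps) (hC₁ : C₁ ∈ st.comps) (hCne : C₀ ≠ C₁)
    {i₀ i₁ : Fin m} {j₀ j₁ : Fin n}
    (he₀ : (i₀, j₀) ∈ cedges st.x C₀) (he₁ : (i₁, j₁) ∈ cedges st.x C₁)
    (hflt : st.x i₀ j₀ < st.x i₁ j₁) :
    ∃ st' : PPS (Finset.univ : Finset (Fin m)) (Finset.univ : Finset (Fin n)) a b,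
      st'.comps.card + 1 = st.comps.card := by
  classical
  obtain ⟨hi₀C, hj₀C, hf0⟩ := mem_cedges.1 he₀
  obtain ⟨hi₁C, hj₁C, hf1⟩ := mem_cedges.1 he₁
  set f := st.x i₀ j₀ with hfdef
  set F := st.x i₁ j₁ with hFdef
  have hine : i₀ ≠ i₁ := by
    rintro rfl
    exact hCne (st.hdisR C₀ hC₀ C₁ hC₁ i₀ hi₀C hi₁C)
  have hjne : j₀ ≠ j₁ := by
    rintro rfl
    exact hCne (st.hdisC C₀ hC₀ C₁ hC₁ j₀ hj₀C hj₁C)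
  have hx01 : st.x i₀ j₁ = 0 := by
    by_contra h
    exact hCne (st.hdisC C₀ hC₀ C₁ hC₁ j₁ ((st.hedge i₀ j₁ h C₀ hC₀).1 hi₀C) hj₁C)
  have hx10 : st.x i₁ j₀ = 0 := by
    by_contra h
    exact hCne (st.hdisC C₀ hC₀ C₁ hC₁ j₀ hj₀C ((st.hedge i₁ j₀ h C₁ hC₁).1 hi₁C))
  set y : Fin m → Fin n → ℕ := fun i j =>
    if i = i₀ ∧ j = j₀ then 0
    else if i = i₀ ∧ j = j₁ then f
    else if i = i₁ ∧ j = j₀ then f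
    else if i = i₁ ∧ j = j₁ then F - f
    else st.x i j with hydef
  have hy00 : y i₀ j₀ = 0 := by simp [hydef]
  have hy01 : y i₀ j₁ = f := by simp [hydef, hjne, hjne.symm, hine, hine.symm]
  have hy10 : y i₁ j₀ = f := by simp [hydef, hjne, hjne.symm, hine, hine.symm]
  have hy11 : y i₁ j₁ = F - f := by simp [hydef, hjne, hjne.symm, hine, hine.symm]
  have hyval : ∀ i j, ¬(i = i₀ ∧ j = j₀) → ¬(i = i₀ ∧ j = j₁) → ¬(i = i₁ ∧ j = j₀) →
      ¬(i = i₁ ∧ j = j₁) → y i j = st.x i j := by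
    intro i j h1 h2 h3 h4
    simp [hydef, h1, h2, h3, h4]
  have hfpos : 0 < f := Nat.pos_of_ne_zero hf0
  -- reach in new state
  have hr00 : reach y (Sum.inl i₀) (Sum.inr j₀) := by
    refine reach.trans (estep.reach (estep_of_entries (by rw [hy01]; omega)))
      (reach.trans ?_ (estep.reach (estep_of_entries (by rw [hy10]; omega))))
    exact (estep.reach (estep_of_entries (by rw [hy11]; omega))).symm
  have hestep : ∀ u v, estep st.x u v → reach y u v := by
    intro u v ⟨i, j, hij, h⟩
    by_cases hc : i = i₀ ∧ j = j₀
    · obtain ⟨hc1, hc2⟩ := hc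
      rcases h with ⟨rfl, rfl⟩ | ⟨rfl, rfl⟩
      · rw [hc1, hc2]; exact hr00
      · rw [hc1, hc2]; exact hr00.symm
    · have hyne : y i j ≠ 0 := by
        by_cases h2 : i = i₀ ∧ j = j₁
        · rw [h2.1, h2.2] at hij; exact absurd hx01 hij
        · by_cases h3 : i = i₁ ∧ j = j₀
          · rw [h3.1, h3.2] at hij; exact absurd hx10 hij
          · by_cases h4 : i = i₁ ∧ j = j₁
            · rw [h4.1, h4.2, hy11]; omega
            · rw [hyval i j hc h2 h3 h4]; exact hij
      exact estep.reach ⟨i, j, hyne, h⟩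
  set M : Finset (Fin m) × Finset (Fin n) := (C₀.1 ∪ C₁.1, C₀.2 ∪ C₁.2) with hMdef
  have herase : ∀ C, C ∈ (st.comps.erase C₀).erase C₁ → C ∈ st.comps ∧ C ≠ C₀ ∧ C ≠ C₁ := by
    intro C hC
    obtain ⟨h1, h2⟩ := Finset.mem_erase.1 hC
    obtain ⟨h3, h4⟩ := Finset.mem_erase.1 h2
    exact ⟨h4, h3, h1⟩
  -- membership of special rows/cols in other components is impossible
  have hnotiR : ∀ C, C ∈ st.comps → C ≠ C₀ → i₀ ∉ C.1 :=
    fun C hC hne h => hne (st.hdisR C hC C₀ hC₀ i₀ h hi₀C)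
  have hnotiR1 : ∀ C, C ∈ st.comps → C ≠ C₁ → i₁ ∉ C.1 :=
    fun C hC hne h => hne (st.hdisR C hC C₁ hC₁ i₁ h hi₁C)
  have hnotjC : ∀ C, C ∈ st.comps → C ≠ C₀ → j₀ ∉ C.2 :=
    fun C hC hne h => hne (st.hdisC C hC C₀ hC₀ j₀ h hj₀C)
  have hnotjC1 : ∀ C, C ∈ st.comps → C ≠ C₁ → j₁ ∉ C.2 :=
    fun C hC hne h => hne (st.hdisC C hC C₁ hC₁ j₁ h hj₁C)
  -- generic value equality on other components
  have hyvalC : ∀ C, C ∈ st.comps → C ≠ C₀ → C ≠ C₁ → ∀ i j, i ∈ C.1 →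
      y i j = st.x i j := by
    intro C hC hn0 hn1 i j hi
    have h1 : i ≠ i₀ := fun h => hnotiR C hC hn0 (h ▸ hi)
    have h2 : i ≠ i₁ := fun h => hnotiR1 C hC hn1 (h ▸ hi)
    exact hyval i j (fun h => h1 h.1) (fun h => h1 h.1) (fun h => h2 h.1) (fun h => h2 h.1)
  refine ⟨⟨y, insert M ((st.comps.erase C₀).erase C₁),
    ?_, ?_, ?_, ?_, ?_, ?_, ?_, ?_, ?_, ?_, ?_, ?_, ?_, ?_⟩, ?_⟩
  · exact fun i j _ => ⟨Finset.mem_univ i, Finset.mem_univ j⟩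
  · -- hrow
    intro i _
    rw [← st.hrow i (Finset.mem_univ i)]
    by_cases h0 : i = i₀
    · subst h0
      refine sum_swap_two _ _ j₀ j₁ hjne (fun r hr1 hr2 => ?_) (by rw [hy00, hy01, hx01]; omega)
      exact hyval i r (fun h => hr1 h.2) (fun h => hr2 h.2) (fun h => hine h.1) (fun h => hine h.1)
    · by_cases h1 : i = i₁
      · subst h1
        refine sum_swap_two _ _ j₀ j₁ hjne (fun r hr1 hr2 => ?_)
          (by rw [hy10, hy11, hx10]; omega)
        exact hyval i r (fun h => h0 h.1) (fun h => h0 h.1) (fun h => hr1 h.2)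
          (fun h => hr2 h.2)
      · refine Finset.sum_congr rfl (fun r _ => ?_)
        exact hyval i r (fun h => h0 h.1) (fun h => h0 h.1) (fun h => h1 h.1) (fun h => h1 h.1)
  · -- hcol
    intro j _
    rw [← st.hcol j (Finset.mem_univ j)]
    by_cases h0 : j = j₀
    · subst h0
      refine sum_swap_two _ _ i₀ i₁ hine (fun r hr1 hr2 => ?_) (by rw [hy00, hy10, hx10]; omega)
      exact hyval r j (fun h => hr1 h.1) (fun h => hjne h.2) (fun h => hr2 h.1)
        (fun h => hjne h.2)
    · by_cases h1 : j = j₁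
      · subst h1
        refine sum_swap_two _ _ i₀ i₁ hine (fun r hr1 hr2 => ?_)
          (by rw [hy01, hy11, hx01]; omega)
        exact hyval r j (fun h => h0 h.2) (fun h => hr1 h.1) (fun h => h0 h.2)
          (fun h => hr2 h.1)
      · refine Finset.sum_congr rfl (fun r _ => ?_)
        exact hyval r j (fun h => h0 h.2) (fun h => h1 h.2) (fun h => h0 h.2) (fun h => h1 h.2)
  · -- hcovR
    intro i _
    obtain ⟨C, hC, hiC⟩ := st.hcovR i (Finset.mem_univ i)
    by_cases h0 : C = C₀
    · exact ⟨M, Finset.mem_insert_self _ _, Finset.mem_union_left _ (h0 ▸ hiC)⟩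
    · by_cases h1 : C = C₁
      · exact ⟨M, Finset.mem_insert_self _ _, Finset.mem_union_right _ (h1 ▸ hiC)⟩
      · exact ⟨C, Finset.mem_insert_of_mem (Finset.mem_erase.2 ⟨h1, Finset.mem_erase.2 ⟨h0, hC⟩⟩), hiC⟩
  · -- hcovC
    intro j _
    obtain ⟨C, hC, hjC⟩ := st.hcovC j (Finset.mem_univ j)
    by_cases h0 : C = C₀
    · exact ⟨M, Finset.mem_insert_self _ _, Finset.mem_union_left _ (h0 ▸ hjC)⟩
    · by_cases h1 : C = C₁
      · exact ⟨M, Finset.mem_insert_self _ _, Finset.mem_union_right _ (h1 ▸ hjC)⟩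
      · exact ⟨C, Finset.mem_insert_of_mem (Finset.mem_erase.2 ⟨h1, Finset.mem_erase.2 ⟨h0, hC⟩⟩), hjC⟩
  · exact fun C _ => Finset.subset_univ _
  · exact fun C _ => Finset.subset_univ _
  · -- hdisR
    intro C hC C' hC' i hiC hiC'
    have key : ∀ D, D ∈ insert M ((st.comps.erase C₀).erase C₁) → i ∈ D.1 →
        (D = M ∧ (i ∈ C₀.1 ∨ i ∈ C₁.1)) ∨ (D ∈ st.comps ∧ D ≠ C₀ ∧ D ≠ C₁) := by
      intro D hD hiD
      rcases Finset.mem_insert.1 hD with rfl | hD'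
      · exact Or.inl ⟨rfl, Finset.mem_union.1 hiD⟩
      · exact Or.inr (herase D hD')
    rcases key C hC hiC with ⟨rfl, hi1⟩ | ⟨h1, h2, h3⟩ <;>
      rcases key C' hC' hiC' with ⟨rfl, hi2⟩ | ⟨g1, g2, g3⟩
    · rfl
    · exfalso
      rcases hi1 with h | h
      · exact g2 (st.hdisR C' g1 C₀ hC₀ i hiC' h)
      · exact g3 (st.hdisR C' g1 C₁ hC₁ i hiC' h)
    · exfalso
      rcases hi2 with h | h
      · exact h2 (st.hdisR C h1 C₀ hC₀ i hiC h)
      · exact h3 (st.hdisR C h1 C₁ hC₁ i hiC h)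
    · exact st.hdisR C h1 C' g1 i hiC hiC'
  · -- hdisC
    intro C hC C' hC' j hjC hjC'
    have key : ∀ D, D ∈ insert M ((st.comps.erase C₀).erase C₁) → j ∈ D.2 →
        (D = M ∧ (j ∈ C₀.2 ∨ j ∈ C₁.2)) ∨ (D ∈ st.comps ∧ D ≠ C₀ ∧ D ≠ C₁) := by
      intro D hD hjD
      rcases Finset.mem_insert.1 hD with rfl | hD'
      · exact Or.inl ⟨rfl, Finset.mem_union.1 hjD⟩
      · exact Or.inr (herase D hD')
    rcases key C hC hjC with ⟨rfl, hj1⟩ | ⟨h1, h2, h3⟩ <;>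
      rcases key C' hC' hjC' with ⟨rfl, hj2⟩ | ⟨g1, g2, g3⟩
    · rfl
    · exfalso
      rcases hj1 with h | h
      · exact g2 (st.hdisC C' g1 C₀ hC₀ j hjC' h)
      · exact g3 (st.hdisC C' g1 C₁ hC₁ j hjC' h)
    · exfalso
      rcases hj2 with h | h
      · exact h2 (st.hdisC C h1 C₀ hC₀ j hjC h)
      · exact h3 (st.hdisC C h1 C₁ hC₁ j hjC h)
    · exact st.hdisC C h1 C' g1 j hjC hjC'
  · -- hedge
    intro i j hyne C hC
    rcases Finset.mem_insert.1 hC with rfl | hC'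
    · -- C = M
      constructor
      · intro hi
        by_cases h2 : i = i₀ ∧ j = j₁
        · exact Finset.mem_union_right _ (h2.2 ▸ hj₁C)
        · by_cases h3 : i = i₁ ∧ j = j₀
          · exact Finset.mem_union_left _ (h3.2 ▸ hj₀C)
          · by_cases h4 : i = i₁ ∧ j = j₁
            · exact Finset.mem_union_right _ (h4.2 ▸ hj₁C)
            · by_cases h1 : i = i₀ ∧ j = j₀
              · exact absurd (h1.1 ▸ h1.2 ▸ hy00) hyne
              · have hx := hyval i j h1 h2 h3 h4 ▸ hyne
                rcases Finset.mem_union.1 hi with h | h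
                · exact Finset.mem_union_left _ ((st.hedge i j hx C₀ hC₀).1 h)
                · exact Finset.mem_union_right _ ((st.hedge i j hx C₁ hC₁).1 h)
      · intro hj
        by_cases h2 : i = i₀ ∧ j = j₁
        · exact Finset.mem_union_left _ (h2.1 ▸ hi₀C)
        · by_cases h3 : i = i₁ ∧ j = j₀
          · exact Finset.mem_union_right _ (h3.1 ▸ hi₁C)
          · by_cases h4 : i = i₁ ∧ j = j₁
            · exact Finset.mem_union_right _ (h4.1 ▸ hi₁C)
            · by_cases h1 : i = i₀ ∧ j = j₀
              · exact absurd (h1.1 ▸ h1.2 ▸ hy00) hyne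
              · have hx := hyval i j h1 h2 h3 h4 ▸ hyne
                rcases Finset.mem_union.1 hj with h | h
                · exact Finset.mem_union_left _ ((st.hedge i j hx C₀ hC₀).2 h)
                · exact Finset.mem_union_right _ ((st.hedge i j hx C₁ hC₁).2 h)
    · -- other components
      obtain ⟨hCmem, hn0, hn1⟩ := herase C hC'
      constructor
      · intro hi
        have := hyvalC C hCmem hn0 hn1 i j hi
        rw [this] at hyne
        exact (st.hedge i j hyne C hCmem).1 hi
      · intro hj
        have h1 : j ≠ j₀ := fun h => hnotjC C hCmem hn0 (h ▸ hj)
        have h2 : j ≠ j₁ := fun h => hnotjC1 C hCmem hn1 (h ▸ hj)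
        have := hyval i j (fun h => h1 h.2) (fun h => h2 h.2) (fun h => h1 h.2)
          (fun h => h2 h.2)
        rw [this] at hyne
        exact (st.hedge i j hyne C hCmem).2 hj
  · -- hconn
    intro C hC u v hu hv
    rcases Finset.mem_insert.1 hC with rfl | hC'
    · have key : ∀ w, inCmp M w → reach y w (Sum.inr j₀) := by
        intro w hw
        have step10 : reach y (Sum.inl i₁) (Sum.inr j₀) :=
          estep.reach (estep_of_entries (by rw [hy10]; omega))
        have lift0 : ∀ w', inCmp C₀ w' → reach y w' (Sum.inr j₀) := by
          intro w' hw'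
          exact reach_lift hestep (st.hconn C₀ hC₀ w' (Sum.inr j₀) hw' hj₀C)
        have lift1 : ∀ w', inCmp C₁ w' → reach y w' (Sum.inr j₀) := by
          intro w' hw'
          exact reach.trans
            (reach_lift hestep (st.hconn C₁ hC₁ w' (Sum.inl i₁) hw' hi₁C)) step10
        match w with
        | Sum.inl i =>
            rcases Finset.mem_union.1 (by simpa [hMdef, inCmp] using hw) with h | h
            · exact lift0 (Sum.inl i) h
            · exact lift1 (Sum.inl i) h
        | Sum.inr j =>
            rcases Finset.mem_union.1 (by simpa [hMdef, inCmp] using hw) with h | h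
            · exact lift0 (Sum.inr j) h
            · exact lift1 (Sum.inr j) h
      exact (key u hu).trans (key v hv).symm
    · obtain ⟨hCmem, hn0, hn1⟩ := herase C hC'
      exact reach_lift hestep (st.hconn C hCmem u v hu hv)
  · -- hneR
    intro C hC
    rcases Finset.mem_insert.1 hC with rfl | hC'
    · exact ⟨i₀, Finset.mem_union_left _ hi₀C⟩
    · exact st.hneR C (herase C hC').1
  · -- hneC
    intro C hC
    rcases Finset.mem_insert.1 hC with rfl | hC'
    · exact ⟨j₀, Finset.mem_union_left _ hj₀C⟩
    · exact st.hneC C (herase C hC').1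
  · -- htree
    intro C hC
    rcases Finset.mem_insert.1 hC with rfl | hC'
    · have hceq : cedges y M = insert (i₀, j₁) (insert (i₁, j₀)
          ((cedges st.x C₀).erase (i₀, j₀) ∪ cedges st.x C₁)) := by
        ext ⟨i, j⟩
        rw [Finset.mem_insert, Finset.mem_insert, Finset.mem_union, Finset.mem_erase]
        simp only [mem_cedges, hMdef]
        constructor
        · rintro ⟨h1, h2, h3⟩
          by_cases hc2 : i = i₀ ∧ j = j₁
          · left; rw [hc2.1, hc2.2]
          · by_cases hc3 : i = i₁ ∧ j = j₀
            · right; left; rw [hc3.1, hc3.2]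
            · by_cases hc4 : i = i₁ ∧ j = j₁
              · right; right; right
                exact ⟨hc4.1 ▸ hi₁C, hc4.2 ▸ hj₁C, hc4.1 ▸ hc4.2 ▸ hf1⟩
              · by_cases hc1 : i = i₀ ∧ j = j₀
                · exact absurd (hc1.1 ▸ hc1.2 ▸ hy00) h3
                · right; right
                  have hx := hyval i j hc1 hc2 hc3 hc4 ▸ h3
                  rcases Finset.mem_union.1 h1 with h | h
                  · left
                    exact ⟨by rintro heq; obtain ⟨rfl, rfl⟩ := Prod.mk.injEq .. ▸ heq; exact hc1 ⟨rfl, rfl⟩,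
                      h, (st.hedge i j hx C₀ hC₀).1 h, hx⟩
                  · right
                    exact ⟨h, (st.hedge i j hx C₁ hC₁).1 h, hx⟩
        · rintro (heq | heq | ⟨hne, h1, h2, h3⟩ | ⟨h1, h2, h3⟩)
          · obtain ⟨h4, h5⟩ := Prod.mk.injEq .. ▸ heq
            refine ⟨?_, ?_, ?_⟩
            · rw [h4]; exact Finset.mem_union_left _ hi₀C
            · rw [h5]; exact Finset.mem_union_right _ hj₁C
            · rw [h4, h5, hy01]; omega
          · obtain ⟨h4, h5⟩ := Prod.mk.injEq .. ▸ heq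
            refine ⟨?_, ?_, ?_⟩
            · rw [h4]; exact Finset.mem_union_right _ hi₁C
            · rw [h5]; exact Finset.mem_union_left _ hj₀C
            · rw [h4, h5, hy10]; omega
          · refine ⟨Finset.mem_union_left _ h1, Finset.mem_union_left _ h2, ?_⟩
            have hcne1 : ¬(i = i₀ ∧ j = j₀) := by
              rintro ⟨hA, hB⟩
              exact hne (by rw [hA, hB])
            have hcne2 : ¬(i = i₀ ∧ j = j₁) := by
              rintro ⟨hA, hB⟩
              exact hCne (st.hdisC C₀ hC₀ C₁ hC₁ j₁ (hB ▸ h2) hj₁C)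
            have hcne3 : ¬(i = i₁ ∧ j = j₀) := by
              rintro ⟨hA, hB⟩
              exact hCne (st.hdisR C₀ hC₀ C₁ hC₁ i₁ (hA ▸ h1) hi₁C)
            have hcne4 : ¬(i = i₁ ∧ j = j₁) := by
              rintro ⟨hA, hB⟩
              exact hCne (st.hdisR C₀ hC₀ C₁ hC₁ i₁ (hA ▸ h1) hi₁C)
            rw [hyval i j hcne1 hcne2 hcne3 hcne4]; exact h3
          · refine ⟨Finset.mem_union_right _ h1, Finset.mem_union_right _ h2, ?_⟩
            have hcne1 : ¬(i = i₀ ∧ j = j₀) := by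
              rintro ⟨hA, hB⟩
              exact hCne (st.hdisR C₀ hC₀ C₁ hC₁ i₀ hi₀C (hA ▸ h1))
            have hcne2 : ¬(i = i₀ ∧ j = j₁) := by
              rintro ⟨hA, hB⟩
              exact hCne (st.hdisR C₀ hC₀ C₁ hC₁ i₀ hi₀C (hA ▸ h1))
            have hcne3 : ¬(i = i₁ ∧ j = j₀) := by
              rintro ⟨hA, hB⟩
              exact hCne (st.hdisC C₀ hC₀ C₁ hC₁ j₀ hj₀C (hB ▸ h2))
            by_cases hcne4 : i = i₁ ∧ j = j₁
            · rw [hcne4.1, hcne4.2, hy11]; omega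
            · rw [hyval i j hcne1 hcne2 hcne3 hcne4]; exact h3
      have hd01 : Disjoint ((cedges st.x C₀).erase (i₀, j₀)) (cedges st.x C₁) := by
        rw [Finset.disjoint_left]
        intro e he1 he2
        have h1 := (mem_cedges.1 (Finset.mem_of_mem_erase he1)).1
        have h2 := (mem_cedges.1 he2).1
        exact hCne (st.hdisR C₀ hC₀ C₁ hC₁ e.1 h1 h2)
      have hnm1 : (i₁, j₀) ∉ (cedges st.x C₀).erase (i₀, j₀) ∪ cedges st.x C₁ := by
        intro h
        rcases Finset.mem_union.1 h with h | h
        · exact (mem_cedges.1 (Finset.mem_of_mem_erase h)).2.2 hx10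
        · exact (mem_cedges.1 h).2.2 hx10
      have hnm0 : (i₀, j₁) ∉ insert (i₁, j₀) ((cedges st.x C₀).erase (i₀, j₀) ∪ cedges st.x C₁) := by
        intro h
        rcases Finset.mem_insert.1 h with h | h
        · exact hine (Prod.mk.injEq .. ▸ h).1
        · rcases Finset.mem_union.1 h with h | h
          · exact (mem_cedges.1 (Finset.mem_of_mem_erase h)).2.2 hx01
          · exact (mem_cedges.1 h).2.2 hx01
      have hM1card : M.1.card = C₀.1.card + C₁.1.card := by
        rw [hMdef]
        exact Finset.card_union_of_disjoint (by
          rw [Finset.disjoint_left]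
          intro i h1 h2
          exact hCne (st.hdisR C₀ hC₀ C₁ hC₁ i h1 h2))
      have hM2card : M.2.card = C₀.2.card + C₁.2.card := by
        rw [hMdef]
        exact Finset.card_union_of_disjoint (by
          rw [Finset.disjoint_left]
          intro j h1 h2
          exact hCne (st.hdisC C₀ hC₀ C₁ hC₁ j h1 h2))
      have ht0 := st.htree C₀ hC₀
      have ht1 := st.htree C₁ hC₁
      have hc0pos : (i₀, j₀) ∈ cedges st.x C₀ := he₀
      rw [hceq, Finset.card_insert_of_notMem hnm0, Finset.card_insert_of_notMem hnm1,
        Finset.card_union_of_disjoint hd01, Finset.card_erase_of_mem hc0pos, hM1card, hM2card]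
      have : 1 ≤ (cedges st.x C₀).card := Finset.card_pos.2 ⟨_, he₀⟩
      omega
    · -- other components
      obtain ⟨hCmem, hn0, hn1⟩ := herase C hC'
      have : cedges y C = cedges st.x C := by
        ext ⟨i, j⟩
        simp only [mem_cedges]
        constructor
        · rintro ⟨h1, h2, h3⟩
          exact ⟨h1, h2, by rwa [hyvalC C hCmem hn0 hn1 i j h1] at h3⟩
        · rintro ⟨h1, h2, h3⟩
          exact ⟨h1, h2, by rwa [hyvalC C hCmem hn0 hn1 i j h1]⟩
      rw [this]
      exact st.htree C hCmem
  · -- cardinality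
    have hM : M ∉ (st.comps.erase C₀).erase C₁ := by
      intro h
      obtain ⟨hmem, hn0, hn1⟩ := herase M h
      exact hn0 (st.hdisR M hmem C₀ hC₀ i₀ (Finset.mem_union_left _ hi₀C) hi₀C)
    rw [Finset.card_insert_of_notMem hM, Finset.card_erase_of_mem
      (Finset.mem_erase.2 ⟨fun h => hCne h.symm, hC₁⟩), Finset.card_erase_of_mem hC₀]
    have h2 : 2 ≤ st.comps.card := Finset.one_lt_card.2 ⟨C₀, hC₀, C₁, hC₁, hCne⟩
    omega

/-- every component has at least one edge -/
lemma pps_comp_edge {R Cs} {a : Fin m → ℕ} {b : Fin n → ℕ} (st : PPS R Cs a b)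
    {C} (hC : C ∈ st.comps) : ∃ e, e ∈ cedges st.x C := by
  have h1 := st.htree C hC
  have h2 := Finset.card_pos.2 (st.hneR C hC)
  have h3 := Finset.card_pos.2 (st.hneC C hC)
  have : 0 < (cedges st.x C).card := by omega
  obtain ⟨e, he⟩ := Finset.card_pos.1 this
  exact ⟨e, he⟩

/-- every nonzero entry lies in the edge set of some component -/
lemma pps_edge_comp {R Cs} {a : Fin m → ℕ} {b : Fin n → ℕ} (st : PPS R Cs a b)
    {i j} (h : st.x i j ≠ 0) : ∃ C ∈ st.comps, (i, j) ∈ cedges st.x C := by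
  obtain ⟨C, hC, hiC⟩ := st.hcovR i (st.hsupp i j h).1
  exact ⟨C, hC, mem_cedges.2 ⟨hiC, (st.hedge i j h C hC).1 hiC, h⟩⟩

/-- support size plus number of components equals the number of vertices -/
lemma pps_supp_card {a : Fin m → ℕ} {b : Fin n → ℕ}
    (st : PPS (Finset.univ : Finset (Fin m)) (Finset.univ : Finset (Fin n)) a b) :
    ((Finset.univ : Finset (Fin m × Fin n)).filter fun e => st.x e.1 e.2 ≠ 0).card
      + st.comps.card = m + n := by
  classical
  have hsuppeq : ((Finset.univ : Finset (Fin m × Fin n)).filter fun e => st.x e.1 e.2 ≠ 0)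
      = st.comps.biUnion (fun C => cedges st.x C) := by
    ext e
    simp only [Finset.mem_filter, Finset.mem_univ, true_and, Finset.mem_biUnion]
    constructor
    · intro h
      obtain ⟨C, hC, he⟩ := pps_edge_comp st h
      exact ⟨C, hC, he⟩
    · rintro ⟨C, hC, he⟩
      exact (mem_cedges.1 he).2.2
  have hdisj : ∀ C₁ ∈ st.comps, ∀ C₂ ∈ st.comps, C₁ ≠ C₂ →
      Disjoint (cedges st.x C₁) (cedges st.x C₂) := by
    intro C₁ h1 C₂ h2 hne
    rw [Finset.disjoint_left]
    intro e he1 he2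
    exact hne (st.hdisR C₁ h1 C₂ h2 e.1 (mem_cedges.1 he1).1 (mem_cedges.1 he2).1)
  rw [hsuppeq, Finset.card_biUnion hdisj]
  have hrows : ∑ C ∈ st.comps, C.1.card = m := by
    have : (Finset.univ : Finset (Fin m)) = st.comps.biUnion (fun C => C.1) := by
      ext i
      simp only [Finset.mem_univ, true_iff, Finset.mem_biUnion]
      obtain ⟨C, hC, hiC⟩ := st.hcovR i (Finset.mem_univ i)
      exact ⟨C, hC, hiC⟩
    have hcard : (st.comps.biUnion fun C => C.1).card = ∑ C ∈ st.comps, C.1.card := by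
      refine Finset.card_biUnion ?_
      intro C₁ h1 C₂ h2 hne
      rw [Function.onFun, Finset.disjoint_left]
      intro i hi1 hi2
      exact hne (st.hdisR C₁ h1 C₂ h2 i hi1 hi2)
    rw [← this, Finset.card_univ, Fintype.card_fin] at hcard
    omega
  have hcols : ∑ C ∈ st.comps, C.2.card = n := by
    have : (Finset.univ : Finset (Fin n)) = st.comps.biUnion (fun C => C.2) := by
      ext j
      simp only [Finset.mem_univ, true_iff, Finset.mem_biUnion]
      obtain ⟨C, hC, hjC⟩ := st.hcovC j (Finset.mem_univ j)
      exact ⟨C, hC, hjC⟩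
    have hcard : (st.comps.biUnion fun C => C.2).card = ∑ C ∈ st.comps, C.2.card := by
      refine Finset.card_biUnion ?_
      intro C₁ h1 C₂ h2 hne
      rw [Function.onFun, Finset.disjoint_left]
      intro j hj1 hj2
      exact hne (st.hdisC C₁ h1 C₂ h2 j hj1 hj2)
    rw [← this, Finset.card_univ, Fintype.card_fin] at hcard
    omega
  have htrees : ∑ C ∈ st.comps, ((cedges st.x C).card + 1)
      = ∑ C ∈ st.comps, (C.1.card + C.2.card) :=
    Finset.sum_congr rfl (fun C hC => st.htree C hC)
  rw [Finset.sum_add_distrib] at htrees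
  rw [Finset.sum_add_distrib, hrows, hcols] at htrees
  simp only [Finset.sum_const, smul_eq_mul, mul_one] at htrees
  omega

/-- total mass equals the sum of the row margins -/
lemma pps_total {a : Fin m → ℕ} {b : Fin n → ℕ}
    (st : PPS (Finset.univ : Finset (Fin m)) (Finset.univ : Finset (Fin n)) a b) :
    ∑ e ∈ (Finset.univ : Finset (Fin m × Fin n)), st.x e.1 e.2 = ∑ i, a i := by
  rw [← Finset.univ_product_univ, Finset.sum_product]
  exact Finset.sum_congr rfl (fun i _ => st.hrow i (Finset.mem_univ i))

/-- if no merge is possible, all nonzero entries are equal -/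
lemma pps_stuck {a : Fin m → ℕ} {b : Fin n → ℕ}
    (st : PPS (Finset.univ : Finset (Fin m)) (Finset.univ : Finset (Fin n)) a b)
    (h2 : 2 ≤ st.comps.card)
    (hstuck : ¬ ∃ C₀, C₀ ∈ st.comps ∧ ∃ C₁, C₁ ∈ st.comps ∧ C₀ ≠ C₁ ∧
      ∃ i₀ j₀ i₁ j₁, (i₀, j₀) ∈ cedges st.x C₀ ∧ (i₁, j₁) ∈ cedges st.x C₁ ∧
        st.x i₀ j₀ < st.x i₁ j₁) :
    ∀ i j i' j', st.x i j ≠ 0 → st.x i' j' ≠ 0 → st.x i j = st.x i' j' := by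
  push_neg at hstuck
  have cross : ∀ C₀ (hC₀ : C₀ ∈ st.comps) C₁ (hC₁ : C₁ ∈ st.comps), C₀ ≠ C₁ →
      ∀ i j i' j', (i, j) ∈ cedges st.x C₀ → (i', j') ∈ cedges st.x C₁ →
      st.x i j = st.x i' j' := by
    intro C₀ hC₀ C₁ hC₁ hne i j i' j' he he'
    have h1 := hstuck C₀ hC₀ C₁ hC₁ hne i j i' j' he he'
    have h2 := hstuck C₁ hC₁ C₀ hC₀ (Ne.symm hne) i' j' i j he' he
    omega
  intro i j i' j' hij hij'
  obtain ⟨C, hC, he⟩ := pps_edge_comp st hij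
  obtain ⟨C', hC', he'⟩ := pps_edge_comp st hij'
  by_cases hne : C = C'
  · subst hne
    obtain ⟨C'', hC'', hne''⟩ : ∃ C'', C'' ∈ st.comps ∧ C ≠ C'' := by
      obtain ⟨D, hD, D', hD', hDne⟩ := Finset.one_lt_card.1 h2
      by_cases h : C = D
      · exact ⟨D', hD', h ▸ hDne⟩
      · exact ⟨D, hD, h⟩
    obtain ⟨⟨i'', j''⟩, he''⟩ := pps_comp_edge st hC''
    rw [cross C hC C'' hC'' hne'' i j i'' j'' he he'',
      ← cross C hC C'' hC'' hne'' i' j' i'' j'' he' he'']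
  · exact cross C hC C' hC' hne i j i' j' he he'

/-- case A loop: merge components down to exactly `d` -/
lemma pps_loopA {a : Fin m → ℕ} {b : Fin n → ℕ} (d : ℕ) (hd : 1 ≤ d)
    (hgcd : ∀ w : ℕ, 0 < w → (∀ i, w ∣ a i) → (∀ j, w ∣ b j) → w = 1)
    (hA : m + n ≤ (∑ i, a i) + d) :
    ∀ c, ∀ st : PPS (Finset.univ : Finset (Fin m)) (Finset.univ : Finset (Fin n)) a b,
      st.comps.card = c → d ≤ c →
      ∃ st' : PPS (Finset.univ : Finset (Fin m)) (Finset.univ : Finset (Fin n)) a b,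
        st'.comps.card = d := by
  intro c
  induction c using Nat.strong_induction_on with
  | _ c ih =>
      intro st hc hdc
      rcases eq_or_lt_of_le hdc with heq | hlt
      · exact ⟨st, heq ▸ hc⟩
      · have h2 : 2 ≤ st.comps.card := by omega
        by_cases hmerge : ∃ C₀, C₀ ∈ st.comps ∧ ∃ C₁, C₁ ∈ st.comps ∧ C₀ ≠ C₁ ∧
            ∃ i₀ j₀ i₁ j₁, (i₀, j₀) ∈ cedges st.x C₀ ∧ (i₁, j₁) ∈ cedges st.x C₁ ∧
              st.x i₀ j₀ < st.x i₁ j₁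
        · obtain ⟨C₀, hC₀, C₁, hC₁, hne, i₀, j₀, i₁, j₁, he₀, he₁, hflt⟩ := hmerge
          obtain ⟨st', hst'⟩ := pps_merge st hC₀ hC₁ hne he₀ he₁ hflt
          exact ih (c - 1) (by omega) st' (by omega) (by omega)
        · exfalso
          have hall := pps_stuck st h2 hmerge
          -- pick a nonzero entry and get the common value w
          obtain ⟨C, hC⟩ : ∃ C, C ∈ st.comps := by
            obtain ⟨C, hC⟩ := Finset.card_pos.1 (by omega : 0 < st.comps.card)
            exact ⟨C, hC⟩
          obtain ⟨⟨ii, jj⟩, he⟩ := pps_comp_edge st hC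
          set w := st.x ii jj with hwdef
          have hw0 : w ≠ 0 := (mem_cedges.1 he).2.2
          have hval : ∀ i j, st.x i j ≠ 0 → st.x i j = w :=
            fun i j h => hall i j ii jj h (mem_cedges.1 he).2.2
          have hwa : ∀ i, w ∣ a i := by
            intro i
            rw [← st.hrow i (Finset.mem_univ i)]
            refine Finset.dvd_sum (fun j _ => ?_)
            by_cases h : st.x i j = 0
            · rw [h]; exact dvd_zero w
            · rw [hval i j h]
          have hwb : ∀ j, w ∣ b j := by
            intro j
            rw [← st.hcol j (Finset.mem_univ j)]
            refine Finset.dvd_sum (fun i _ => ?_)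
            by_cases h : st.x i j = 0
            · rw [h]; exact dvd_zero w
            · rw [hval i j h]
          have hw1 : w = 1 := hgcd w (Nat.pos_of_ne_zero hw0) hwa hwb
          -- total mass equals the support size
          have htot : ∑ i, a i
              = ((Finset.univ : Finset (Fin m × Fin n)).filter
                  fun e => st.x e.1 e.2 ≠ 0).card := by
            rw [← pps_total st, ← Finset.sum_filter_ne_zero]
            rw [Finset.card_eq_sum_ones]
            refine Finset.sum_congr rfl (fun e he' => ?_)
            have := hval e.1 e.2 (Finset.mem_filter.1 he').2
            rw [this, hw1]
          have hsc := pps_supp_card st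
          omega

end Aux

/-- finalize: a real solution with a component structure gives polytope nonemptiness
and the ERP number -/
lemma inCmp_inl {C : Finset (Fin m) × Finset (Fin n)} {i : Fin m} :
    inCmp C (Sum.inl i) ↔ i ∈ C.1 := Iff.rfl

lemma inCmp_inr {C : Finset (Fin m) × Finset (Fin n)} {j : Fin n} :
    inCmp C (Sum.inr j) ↔ j ∈ C.2 := Iff.rfl

lemma finalize_real (νr : Fin m → ℝ) (μr : Fin n → ℝ) (x : Fin m → Fin n → ℝ) (d : ℕ)
    (hx0 : ∀ i j, 0 ≤ x i j) (hrow : ∀ i, ∑ j, x i j = νr i)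
    (hcol : ∀ j, ∑ i, x i j = μr j)
    (comps : Finset (Finset (Fin m) × Finset (Fin n))) (hcard : comps.card = d)
    (hcovR : ∀ i, ∃ C ∈ comps, i ∈ C.1) (hcovC : ∀ j, ∃ C ∈ comps, j ∈ C.2)
    (hdisR : ∀ C ∈ comps, ∀ C' ∈ comps, ∀ i, i ∈ C.1 → i ∈ C'.1 → C = C')
    (hdisC : ∀ C ∈ comps, ∀ C' ∈ comps, ∀ j, j ∈ C.2 → j ∈ C'.2 → C = C')
    (hedge : ∀ i j, x i j ≠ 0 → ∀ C ∈ comps, i ∈ C.1 → j ∈ C.2)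
    (hconn : ∀ C ∈ comps, ∀ u v, inCmp C u → inCmp C v → reach x u v)
    (hneR : ∀ C ∈ comps, C.1.Nonempty) :
    (transportationPolytope νr μr (fsupp x)).Nonempty ∧
      erpNumber νr μr (fsupp x) = d := by
  classical
  have hex : ∀ u : Fin m ⊕ Fin n, ∃ C, C ∈ comps ∧ inCmp C u := by
    intro u
    match u with
    | Sum.inl i =>
        obtain ⟨C, hC, h⟩ := hcovR i
        exact ⟨C, hC, h⟩
    | Sum.inr j =>
        obtain ⟨C, hC, h⟩ := hcovC j
        exact ⟨C, hC, h⟩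
  choose Cof hCofmem hCofin using hex
  have huniq : ∀ u C, C ∈ comps → inCmp C u → Cof u = C := by
    intro u C hC hin
    match u with
    | Sum.inl i =>
        exact hdisR _ (hCofmem (Sum.inl i)) C hC i (inCmp_inl.1 (hCofin (Sum.inl i))) (inCmp_inl.1 hin)
    | Sum.inr j =>
        exact hdisC _ (hCofmem (Sum.inr j)) C hC j (inCmp_inr.1 (hCofin (Sum.inr j))) (inCmp_inr.1 hin)
  set lab : (Fin m ⊕ Fin n) → Fin d :=
    fun u => finCongr hcard (comps.equivFin ⟨Cof u, hCofmem u⟩) with hlabdef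
  have hlabeq : ∀ u v, Cof u = Cof v → lab u = lab v := by
    intro u v h
    simp only [hlabdef]
    have h2 : (⟨Cof u, hCofmem u⟩ : {C // C ∈ comps}) = ⟨Cof v, hCofmem v⟩ :=
      Subtype.ext h
    rw [h2]
  have hlabinj : ∀ u v, lab u = lab v → Cof u = Cof v := by
    intro u v h
    simp only [hlabdef] at h
    have h2 := (finCongr hcard).injective h
    have h3 := comps.equivFin.injective h2
    exact congrArg Subtype.val h3
  have hlab : ∀ i j, x i j ≠ 0 → lab (Sum.inl i) = lab (Sum.inr j) := by
    intro i j hne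
    refine hlabeq _ _ ?_
    have hj : j ∈ (Cof (Sum.inl i)).2 :=
      hedge i j hne (Cof (Sum.inl i)) (hCofmem (Sum.inl i))
        (inCmp_inl.1 (hCofin (Sum.inl i)))
    exact (huniq (Sum.inr j) (Cof (Sum.inl i)) (hCofmem (Sum.inl i))
      (inCmp_inr.2 hj)).symm
  have hconn2 : ∀ u v, lab u = lab v → reach x u v := by
    intro u v h
    have h2 := hlabinj u v h
    exact hconn (Cof u) (hCofmem u) u v (hCofin u) (h2 ▸ hCofin v)
  have hsurj : Function.Surjective lab := by
    intro t
    set s := comps.equivFin.symm (finCongr hcard.symm t) with hsdef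
    obtain ⟨i, hi⟩ := hneR s.1 s.2
    refine ⟨Sum.inl i, ?_⟩
    have h1 : Cof (Sum.inl i) = s.1 := huniq (Sum.inl i) s.1 s.2 (inCmp_inl.2 hi)
    simp only [hlabdef]
    have h2 : (⟨Cof (Sum.inl i), hCofmem _⟩ : {C // C ∈ comps}) = s := Subtype.ext h1
    rw [h2, hsdef]
    simp
  exact main_construct νr μr x d hx0 hrow hcol lab hlab hconn2 hsurj


/-- case B: cyclic surgery producing a real solution with `d` components and one extra edge -/
lemma pps_cycle (g : ℕ) (hg : 0 < g) {a : Fin m → ℕ} {b : Fin n → ℕ}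
    (st : PPS (Finset.univ : Finset (Fin m)) (Finset.univ : Finset (Fin n)) a b)
    (d : ℕ) (hd : 1 ≤ d) (hdc : d < st.comps.card) :
    ∃ (x : Fin m → Fin n → ℝ) (comps' : Finset (Finset (Fin m) × Finset (Fin n))),
      (∀ i j, 0 ≤ x i j) ∧
      (∀ i, ∑ j, x i j = (g : ℝ) * a i) ∧
      (∀ j, ∑ i, x i j = (g : ℝ) * b j) ∧
      comps'.card = d ∧
      (∀ i, ∃ C ∈ comps', i ∈ C.1) ∧
      (∀ j, ∃ C ∈ comps', j ∈ C.2) ∧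
      (∀ C ∈ comps', ∀ C' ∈ comps', ∀ i, i ∈ C.1 → i ∈ C'.1 → C = C') ∧
      (∀ C ∈ comps', ∀ C' ∈ comps', ∀ j, j ∈ C.2 → j ∈ C'.2 → C = C') ∧
      (∀ i j, x i j ≠ 0 → ∀ C ∈ comps', i ∈ C.1 → j ∈ C.2) ∧
      (∀ C ∈ comps', ∀ u v, inCmp C u → inCmp C v → reach x u v) ∧
      (∀ C ∈ comps', C.1.Nonempty) ∧
      (fsupp x).card + d = m + n + 1 := by
  classical
  set c := st.comps.card with hcdef
  set k := c - d + 1 with hkdef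
  have hk2 : 2 ≤ k := by omega
  have hkc : k ≤ c := by omega
  haveI : NeZero k := ⟨by omega⟩
  obtain ⟨S, hSsub, hScard⟩ := Finset.exists_subset_card_eq (show k ≤ st.comps.card by omega)
  set σ : Fin k ≃ {C // C ∈ S} := (S.equivFin.trans (finCongr hScard)).symm with hσdef
  set Cf : Fin k → Finset (Fin m) × Finset (Fin n) := fun t => (σ t : _) with hCfdef
  have hCfS : ∀ t, Cf t ∈ S := fun t => (σ t).2
  have hCfmem : ∀ t, Cf t ∈ st.comps := fun t => hSsub (hCfS t)
  have hCfinj : Function.Injective Cf := by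
    intro t t' h
    exact σ.injective (Subtype.ext h)
  have hE : ∀ t, ∃ e : Fin m × Fin n, e ∈ cedges st.x (Cf t) :=
    fun t => pps_comp_edge st (hCfmem t)
  choose ed hed using hE
  set it : Fin k → Fin m := fun t => (ed t).1 with hitdef
  set jt : Fin k → Fin n := fun t => (ed t).2 with hjtdef
  have hitC : ∀ t, it t ∈ (Cf t).1 := fun t => (mem_cedges.1 (hed t)).1
  have hjtC : ∀ t, jt t ∈ (Cf t).2 := fun t => (mem_cedges.1 (hed t)).2.1
  have hfne : ∀ t, st.x (it t) (jt t) ≠ 0 := fun t => (mem_cedges.1 (hed t)).2.2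
  have hitinj : ∀ t t', it t = it t' → t = t' := by
    intro t t' h
    exact hCfinj (st.hdisR (Cf t) (hCfmem t) (Cf t') (hCfmem t') (it t) (hitC t)
      (h ▸ hitC t'))
  have hjtinj : ∀ t t', jt t = jt t' → t = t' := by
    intro t t' h
    exact hCfinj (st.hdisC (Cf t) (hCfmem t) (Cf t') (hCfmem t') (jt t) (hjtC t)
      (h ▸ hjtC t'))
  have hcross : ∀ t t', t ≠ t' → st.x (it t) (jt t') = 0 := by
    intro t t' hne
    by_contra h
    have hj : jt t' ∈ (Cf t).2 := (st.hedge (it t) (jt t') h (Cf t) (hCfmem t)).1 (hitC t)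
    exact hne (hCfinj (st.hdisC (Cf t) (hCfmem t) (Cf t') (hCfmem t') (jt t') hj (hjtC t')))
  have hone : (1 : Fin k).val = 1 := by
    rw [Fin.val_one']
    exact Nat.mod_eq_of_lt (by omega)
  have hsucc_ne : ∀ t : Fin k, t + 1 ≠ t := by
    intro t h
    have h2 : t + 1 = t + 0 := by rw [add_zero]; exact h
    have h3 : (1 : Fin k) = 0 := add_left_cancel h2
    have h4 := congrArg Fin.val h3
    rw [hone] at h4
    simp at h4
  set τ : ℝ := (g : ℝ) / 2 with hτdef
  have hτpos : 0 < τ := by positivity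
  set x : Fin m → Fin n → ℝ := fun i j => (g : ℝ) * st.x i j +
      ∑ t : Fin k, ((if i = it t ∧ j = jt (t + 1) then τ else 0)
        - (if i = it t ∧ j = jt t then τ else 0)) with hxdef
  -- pointwise evaluations
  have hxvalC : ∀ i j, (∀ t, ¬(i = it t ∧ j = jt (t + 1))) →
      (∀ t, ¬(i = it t ∧ j = jt t)) → x i j = (g : ℝ) * st.x i j := by
    intro i j h1 h2
    simp only [hxdef]
    rw [Finset.sum_eq_zero (fun t _ => by simp [h1 t, h2 t])]
    ring
  have hxvalN : ∀ s, x (it s) (jt s) = (g : ℝ) * st.x (it s) (jt s) - τ := by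
    intro s
    have hsum : ∑ t : Fin k, ((if it s = it t ∧ jt s = jt (t + 1) then τ else 0)
        - (if it s = it t ∧ jt s = jt t then τ else 0)) = -τ := by
      rw [Finset.sum_eq_single s]
      · have hP : jt s ≠ jt (s + 1) := by
          intro h
          exact hsucc_ne s (hjtinj s (s + 1) h).symm
        simp [hP]
      · intro t _ hts
        have hP : it s ≠ it t := by
          intro h
          exact hts (hitinj s t h).symm
        simp [hP]
      · intro h
        exact absurd (Finset.mem_univ s) h
    simp only [hxdef]
    rw [hsum]
    ring
  have hxvalP : ∀ s, x (it s) (jt (s + 1)) = τ := by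
    intro s
    have hx0 : st.x (it s) (jt (s + 1)) = 0 := hcross s (s + 1) (hsucc_ne s).symm
    have hsum : ∑ t : Fin k, ((if it s = it t ∧ jt (s + 1) = jt (t + 1) then τ else 0)
        - (if it s = it t ∧ jt (s + 1) = jt t then τ else 0)) = τ := by
      rw [Finset.sum_eq_single s]
      · have hN : jt (s + 1) ≠ jt s := by
          intro h
          exact hsucc_ne s (hjtinj (s + 1) s h)
        simp [hN]
      · intro t _ hts
        have hP : it s ≠ it t := by
          intro h
          exact hts (hitinj s t h).symm
        simp [hP]
      · intro h
        exact absurd (Finset.mem_univ s) h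
    simp only [hxdef]
    rw [hsum, hx0]
    ring
  have hgR : (0 : ℝ) < g := by exact_mod_cast hg
  -- nonnegativity and support characterisation
  have hmain : ∀ i j, 0 ≤ x i j ∧ (x i j ≠ 0 ↔ (st.x i j ≠ 0 ∨
      ∃ s, i = it s ∧ j = jt (s + 1))) := by
    intro i j
    by_cases hA : ∃ s, i = it s ∧ j = jt s
    · obtain ⟨s, h1, h2⟩ := hA
      have hfge : (1 : ℝ) ≤ st.x (it s) (jt s) := by
        have := hfne s
        exact_mod_cast Nat.one_le_iff_ne_zero.2 this
      have hval : x i j = (g : ℝ) * st.x (it s) (jt s) - τ := by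
        rw [h1, h2]; exact hxvalN s
      have hpos : 0 < x i j := by
        rw [hval, hτdef]
        nlinarith
      constructor
      · exact le_of_lt hpos
      · constructor
        · intro _
          left
          rw [h1, h2]
          exact hfne s
        · intro _
          exact ne_of_gt hpos
    · by_cases hB : ∃ s, i = it s ∧ j = jt (s + 1)
      · obtain ⟨s, h1, h2⟩ := hB
        have hval : x i j = τ := by rw [h1, h2]; exact hxvalP s
        constructor
        · rw [hval]; exact le_of_lt hτpos
        · constructor
          · intro _
            exact Or.inr ⟨s, h1, h2⟩
          · intro _
            rw [hval]
            exact ne_of_gt hτpos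
      · push_neg at hA hB
        have hval : x i j = (g : ℝ) * st.x i j := by
          refine hxvalC i j ?_ ?_
          · intro t h
            exact hB t h.1 h.2
          · intro t h
            exact hA t h.1 h.2
        constructor
        · rw [hval]; positivity
        · rw [hval]
          constructor
          · intro h
            left
            intro hz
            rw [hz] at h
            simp at h
          · rintro (h | ⟨s, h1, h2⟩)
            · have : (st.x i j : ℝ) ≠ 0 := by exact_mod_cast h
              exact mul_ne_zero (ne_of_gt hgR) this
            · exact absurd h2 (hB s h1)
  have hx0 : ∀ i j, 0 ≤ x i j := fun i j => (hmain i j).1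
  have hxiff : ∀ i j, x i j ≠ 0 ↔ (st.x i j ≠ 0 ∨ ∃ s, i = it s ∧ j = jt (s + 1)) :=
    fun i j => (hmain i j).2
  -- margins
  have hchi : ∀ (q : Fin n) (i : Fin m) (p : Fin m),
      (∑ j, if i = p ∧ j = q then τ else 0) = if i = p then τ else 0 := by
    intro q i p
    by_cases h : i = p <;> simp [h]
  have hchic : ∀ (p : Fin m) (j : Fin n) (q : Fin n),
      (∑ i, if i = p ∧ j = q then τ else 0) = if j = q then τ else 0 := by
    intro p j q
    by_cases h : j = q <;> simp [h]
  have hrowx : ∀ i, ∑ j, x i j = (g : ℝ) * a i := by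
    intro i
    rw [hxdef]
    simp only [Finset.sum_add_distrib]
    rw [← Finset.mul_sum]
    have h1 : ∑ j, (st.x i j : ℝ) = (a i : ℝ) := by
      rw [← Nat.cast_sum]
      exact congrArg _ (st.hrow i (Finset.mem_univ i))
    rw [h1]
    have h2 : ∑ j, ∑ t : Fin k, ((if i = it t ∧ j = jt (t + 1) then τ else 0)
        - (if i = it t ∧ j = jt t then τ else 0)) = 0 := by
      rw [Finset.sum_comm]
      refine Finset.sum_eq_zero (fun t _ => ?_)
      simp only [Finset.sum_sub_distrib]
      rw [hchi (jt (t + 1)) i (it t), hchi (jt t) i (it t)]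
      ring
    rw [h2]
    ring
  have hcolx : ∀ j, ∑ i, x i j = (g : ℝ) * b j := by
    intro j
    rw [hxdef]
    simp only [Finset.sum_add_distrib]
    rw [← Finset.mul_sum]
    have h1 : ∑ i, (st.x i j : ℝ) = (b j : ℝ) := by
      rw [← Nat.cast_sum]
      exact congrArg _ (st.hcol j (Finset.mem_univ j))
    rw [h1]
    have h2 : ∑ i, ∑ t : Fin k, ((if i = it t ∧ j = jt (t + 1) then τ else 0)
        - (if i = it t ∧ j = jt t then τ else 0)) = 0 := by
      rw [Finset.sum_comm]
      have h3 : ∀ t : Fin k, (∑ i, ((if i = it t ∧ j = jt (t + 1) then τ else 0)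
          - (if i = it t ∧ j = jt t then τ else 0)))
          = (if j = jt (t + 1) then τ else 0) - (if j = jt t then τ else 0) := by
        intro t
        simp only [Finset.sum_sub_distrib]
        rw [hchic (it t) j (jt (t + 1)), hchic (it t) j (jt t)]
      rw [Finset.sum_congr rfl (fun t _ => h3 t), Finset.sum_sub_distrib]
      have h4 : (∑ t : Fin k, if j = jt (t + 1) then τ else 0)
          = ∑ t : Fin k, if j = jt t then τ else 0 :=
        Fintype.sum_equiv (Equiv.addRight (1 : Fin k)) _ _ (fun t => by simp; rfl)
      rw [h4]
      ring
    rw [h2]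
    ring
  -- the merged component and the new component set
  set M : Finset (Fin m) × Finset (Fin n) :=
    (S.biUnion Prod.fst, S.biUnion Prod.snd) with hMdef
  set comps' := insert M (st.comps \ S) with hcompsdef
  have hMrow : ∀ i, i ∈ M.1 ↔ ∃ D ∈ S, i ∈ D.1 := by
    intro i
    simp [hMdef, Finset.mem_biUnion]
  have hMcol : ∀ j, j ∈ M.2 ↔ ∃ D ∈ S, j ∈ D.2 := by
    intro j
    simp [hMdef, Finset.mem_biUnion]
  set t0 : Fin k := ⟨0, by omega⟩ with ht0def
  have hMnot : M ∉ st.comps \ S := by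
    intro h
    obtain ⟨hmem, hnotS⟩ := Finset.mem_sdiff.1 h
    have hi : it t0 ∈ M.1 := (hMrow (it t0)).2 ⟨Cf t0, hCfS t0, hitC t0⟩
    have := st.hdisR M hmem (Cf t0) (hCfmem t0) (it t0) hi (hitC t0)
    exact hnotS (this ▸ hCfS t0)
  have hcard' : comps'.card = d := by
    rw [hcompsdef, Finset.card_insert_of_notMem hMnot, Finset.card_sdiff_of_subset hSsub]
    omega
  have hkey : ∀ C, C ∈ comps' → C = M ∨ (C ∈ st.comps ∧ C ∉ S) := by
    intro C hC
    rcases Finset.mem_insert.1 hC with rfl | hC'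
    · exact Or.inl rfl
    · exact Or.inr (Finset.mem_sdiff.1 hC')
  -- reach lifting
  have hxne : ∀ i j, st.x i j ≠ 0 → x i j ≠ 0 := by
    intro i j h
    exact (hxiff i j).2 (Or.inl h)
  have hxnew : ∀ s, x (it s) (jt (s + 1)) ≠ 0 := by
    intro s
    exact (hxiff _ _).2 (Or.inr ⟨s, rfl, rfl⟩)
  have hestep : ∀ u v, estep st.x u v → reach x u v := by
    intro u v ⟨i, j, hij, h⟩
    exact estep.reach ⟨i, j, hxne i j hij, h⟩
  have hlink : ∀ t : Fin k, reach x (Sum.inr (jt (t + 1))) (Sum.inr (jt t)) := by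
    intro t
    refine reach.trans ((estep.reach (estep_of_entries (hxnew t))).symm) ?_
    exact estep.reach (estep_of_entries (hxne _ _ (hfne t)))
  have hmk : ∀ v (h : v + 1 < k) (h' : v < k), (⟨v, h'⟩ : Fin k) + 1 = ⟨v + 1, h⟩ := by
    intro v h h'
    apply Fin.ext
    rw [Fin.val_add, hone]
    exact Nat.mod_eq_of_lt h
  have chain : ∀ v (hv : v < k), reach x (Sum.inr (jt ⟨v, hv⟩)) (Sum.inr (jt t0)) := by
    intro v
    induction v with
    | zero => intro hv; exact reach.refl
    | succ v ih =>
        intro hv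
        have hv' : v < k := by omega
        rw [show (⟨v + 1, hv⟩ : Fin k) = ⟨v, hv'⟩ + 1 from (hmk v hv hv').symm]
        exact reach.trans (hlink ⟨v, hv'⟩) (ih hv')
  have chain' : ∀ t : Fin k, reach x (Sum.inr (jt t)) (Sum.inr (jt t0)) := by
    intro t
    exact chain t.val t.isLt
  have hreachM : ∀ w, inCmp M w → reach x w (Sum.inr (jt t0)) := by
    intro w hw
    have hgen : ∀ (D : Finset (Fin m) × Finset (Fin n)), D ∈ S → inCmp D w →
        reach x w (Sum.inr (jt t0)) := by
      intro D hD hin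
      set t : Fin k := σ.symm ⟨D, hD⟩ with htdef
      have hCft : Cf t = D := by
        rw [hCfdef, htdef]
        simp
      have h1 : reach x w (Sum.inr (jt t)) := by
        refine reach_lift hestep (st.hconn (Cf t) (hCfmem t) w (Sum.inr (jt t)) ?_ (hjtC t))
        rw [hCft]
        exact hin
      exact reach.trans h1 (chain' t)
    match w with
    | Sum.inl i =>
        obtain ⟨D, hD, hiD⟩ := (hMrow i).1 (inCmp_inl.1 hw)
        exact hgen D hD (inCmp_inl.2 hiD)
    | Sum.inr j =>
        obtain ⟨D, hD, hjD⟩ := (hMcol j).1 (inCmp_inr.1 hw)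
        exact hgen D hD (inCmp_inr.2 hjD)
  refine ⟨x, comps', hx0, hrowx, hcolx, hcard', ?_, ?_, ?_, ?_, ?_, ?_, ?_, ?_⟩
  · -- hcovR
    intro i
    obtain ⟨C, hC, hiC⟩ := st.hcovR i (Finset.mem_univ i)
    by_cases hCS : C ∈ S
    · exact ⟨M, Finset.mem_insert_self _ _, (hMrow i).2 ⟨C, hCS, hiC⟩⟩
    · exact ⟨C, Finset.mem_insert_of_mem (Finset.mem_sdiff.2 ⟨hC, hCS⟩), hiC⟩
  · -- hcovC
    intro j
    obtain ⟨C, hC, hjC⟩ := st.hcovC j (Finset.mem_univ j)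
    by_cases hCS : C ∈ S
    · exact ⟨M, Finset.mem_insert_self _ _, (hMcol j).2 ⟨C, hCS, hjC⟩⟩
    · exact ⟨C, Finset.mem_insert_of_mem (Finset.mem_sdiff.2 ⟨hC, hCS⟩), hjC⟩
  · -- hdisR
    intro C hC C' hC' i hiC hiC'
    rcases hkey C hC with rfl | ⟨h1, h2⟩ <;> rcases hkey C' hC' with rfl | ⟨g1, g2⟩
    · rfl
    · exfalso
      obtain ⟨D, hD, hiD⟩ := (hMrow i).1 hiC
      exact g2 ((st.hdisR C' g1 D (hSsub hD) i hiC' hiD) ▸ hD)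
    · exfalso
      obtain ⟨D, hD, hiD⟩ := (hMrow i).1 hiC'
      exact h2 ((st.hdisR C h1 D (hSsub hD) i hiC hiD) ▸ hD)
    · exact st.hdisR C h1 C' g1 i hiC hiC'
  · -- hdisC
    intro C hC C' hC' j hjC hjC'
    rcases hkey C hC with rfl | ⟨h1, h2⟩ <;> rcases hkey C' hC' with rfl | ⟨g1, g2⟩
    · rfl
    · exfalso
      obtain ⟨D, hD, hjD⟩ := (hMcol j).1 hjC
      exact g2 ((st.hdisC C' g1 D (hSsub hD) j hjC' hjD) ▸ hD)
    · exfalso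
      obtain ⟨D, hD, hjD⟩ := (hMcol j).1 hjC'
      exact h2 ((st.hdisC C h1 D (hSsub hD) j hjC hjD) ▸ hD)
    · exact st.hdisC C h1 C' g1 j hjC hjC'
  · -- hedge
    intro i j hne C hC hiC
    rcases (hxiff i j).1 hne with hold | ⟨s, hs1, hs2⟩
    · rcases hkey C hC with rfl | ⟨h1, h2⟩
      · obtain ⟨D, hD, hiD⟩ := (hMrow i).1 hiC
        exact (hMcol j).2 ⟨D, hD, (st.hedge i j hold D (hSsub hD)).1 hiD⟩
      · exact (st.hedge i j hold C h1).1 hiC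
    · rcases hkey C hC with rfl | ⟨h1, h2⟩
      · exact (hMcol j).2 ⟨Cf (s + 1), hCfS (s + 1), hs2 ▸ hjtC (s + 1)⟩
      · exfalso
        have : C = Cf s := st.hdisR C h1 (Cf s) (hCfmem s) i hiC (hs1 ▸ hitC s)
        exact h2 (this ▸ hCfS s)
  · -- hconn
    intro C hC u v hu hv
    rcases hkey C hC with rfl | ⟨h1, h2⟩
    · exact reach.trans (hreachM u hu) (hreachM v hv).symm
    · exact reach_lift hestep (st.hconn C h1 u v hu hv)
  · -- hneR
    intro C hC
    rcases hkey C hC with rfl | ⟨h1, h2⟩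
    · exact ⟨it t0, (hMrow (it t0)).2 ⟨Cf t0, hCfS t0, hitC t0⟩⟩
    · exact st.hneR C h1
  · -- support size
    have hsuppeq : fsupp x = ((Finset.univ : Finset (Fin m × Fin n)).filter
        fun e => st.x e.1 e.2 ≠ 0)
        ∪ Finset.image (fun t => (it t, jt (t + 1))) Finset.univ := by
      ext ⟨i, j⟩
      rw [Finset.mem_union, mem_fsupp, Finset.mem_filter, Finset.mem_image]
      constructor
      · intro h
        rcases (hxiff i j).1 h with h | ⟨s, h1, h2⟩
        · exact Or.inl ⟨Finset.mem_univ _, h⟩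
        · exact Or.inr ⟨s, Finset.mem_univ s, by rw [h1, h2]⟩
      · rintro (⟨-, h⟩ | ⟨s, -, h⟩)
        · exact (hxiff i j).2 (Or.inl h)
        · obtain ⟨h1, h2⟩ := Prod.mk.injEq .. ▸ h.symm
          exact (hxiff i j).2 (Or.inr ⟨s, h1, h2⟩)
    have hdisj2 : Disjoint ((Finset.univ : Finset (Fin m × Fin n)).filter
        fun e => st.x e.1 e.2 ≠ 0)
        (Finset.image (fun t => (it t, jt (t + 1))) Finset.univ) := by
      rw [Finset.disjoint_right]
      intro e he1 he2
      obtain ⟨s, -, hs⟩ := Finset.mem_image.1 he1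
      have := (Finset.mem_filter.1 he2).2
      rw [← hs] at this
      exact this (hcross s (s + 1) (hsucc_ne s).symm)
    have himcard : (Finset.image (fun t => (it t, jt (t + 1))) Finset.univ).card = k := by
      rw [Finset.card_image_of_injective _ (fun t t' h => ?_), Finset.card_univ,
        Fintype.card_fin]
      exact hitinj t t' (Prod.mk.injEq .. ▸ h).1
    have hsc := pps_supp_card st
    rw [hsuppeq, Finset.card_union_of_disjoint hdisj2, himcard]
    omega

/-- sufficiency: given compatible partitions of `I` and `J` into `d` blocks with
matching block sums, there is an edge set `E` with nonempty `T_E(ν,μ)`, ERP number `d`, and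
`|E| = m + n − d` if `d ≥ d_⋆`, resp. `|E| = m + n − d + 1` if `d < d_⋆`. -/
theorem stmt_8 {m n : ℕ} (hm : 1 ≤ m) (hn : 1 ≤ n)
    (ν : Fin m → ℕ) (μ : Fin n → ℕ)
    (hν : ∀ i, 0 < ν i) (hμ : ∀ j, 0 < μ j)
    (htot : (∑ i, ν i) = ∑ j, μ j)
    (d : ℕ) (hd : 1 ≤ d)
    (P : Fin d → Finset (Fin m)) (Q : Fin d → Finset (Fin n))
    (hPne : ∀ l, (P l).Nonempty) (hQne : ∀ l, (Q l).Nonempty)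
    (hPdisj : ∀ l₁ l₂, l₁ ≠ l₂ → Disjoint (P l₁) (P l₂))
    (hQdisj : ∀ l₁ l₂, l₁ ≠ l₂ → Disjoint (Q l₁) (Q l₂))
    (hPcov : Finset.univ.biUnion P = Finset.univ)
    (hQcov : Finset.univ.biUnion Q = Finset.univ)
    (hsum : ∀ l, (∑ i ∈ P l, ν i) = ∑ j ∈ Q l, μ j) :
    ∃ E : Finset (Fin m × Fin n),
      (transportationPolytope (fun i => (ν i : ℝ)) (fun j => (μ j : ℝ)) E).Nonempty ∧
      erpNumber (fun i => (ν i : ℝ)) (fun j => (μ j : ℝ)) E = d ∧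
      (dStar ν μ ≤ d → E.card + d = m + n) ∧
      (d < dStar ν μ → E.card + d = m + n + 1) := by
  classical
  set g := gcdVec ν μ with hgdef
  have hgdν : ∀ i, g ∣ ν i := fun i =>
    dvd_trans (Nat.gcd_dvd_left _ _) (Finset.gcd_dvd (Finset.mem_univ i))
  have hgdμ : ∀ j, g ∣ μ j := fun j =>
    dvd_trans (Nat.gcd_dvd_right _ _) (Finset.gcd_dvd (Finset.mem_univ j))
  have hgpos : 0 < g := by
    rcases Nat.eq_zero_or_pos g with h | h
    · exfalso
      have := hgdν ⟨0, hm⟩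
      rw [h] at this
      have := Nat.eq_zero_of_zero_dvd this
      exact absurd this (Nat.pos_iff_ne_zero.1 (hν ⟨0, hm⟩))
    · exact h
  set ν' : Fin m → ℕ := fun i => ν i / g with hν'def
  set μ' : Fin n → ℕ := fun j => μ j / g with hμ'def
  have hνeq : ∀ i, ν i = g * ν' i := fun i => (Nat.mul_div_cancel' (hgdν i)).symm
  have hμeq : ∀ j, μ j = g * μ' j := fun j => (Nat.mul_div_cancel' (hgdμ j)).symm
  have hν'pos : ∀ i, 0 < ν' i := fun i =>
    Nat.div_pos (Nat.le_of_dvd (hν i) (hgdν i)) hgpos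
  have hμ'pos : ∀ j, 0 < μ' j := fun j =>
    Nat.div_pos (Nat.le_of_dvd (hμ j) (hgdμ j)) hgpos
  have hgcd1 : ∀ w : ℕ, 0 < w → (∀ i, w ∣ ν' i) → (∀ j, w ∣ μ' j) → w = 1 := by
    intro w hw h1 h2
    have hgw : ∀ i, g * w ∣ ν i := by
      intro i
      rw [hνeq i]
      exact mul_dvd_mul_left g (h1 i)
    have hgw' : ∀ j, g * w ∣ μ j := by
      intro j
      rw [hμeq j]
      exact mul_dvd_mul_left g (h2 j)
    have hdg : g * w ∣ g := by
      rw [hgdef, gcdVec]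
      exact Nat.dvd_gcd (Finset.dvd_gcd (fun i _ => hgw i))
        (Finset.dvd_gcd (fun j _ => hgw' j))
    have hw1 : w ∣ 1 := (mul_dvd_mul_iff_left (show g ≠ 0 by omega)).1
      (by rw [mul_one]; exact hdg)
    exact Nat.dvd_one.1 hw1
  have hsum' : ∀ l, (∑ i ∈ P l, ν' i) = ∑ j ∈ Q l, μ' j := by
    intro l
    have h1 : g * (∑ i ∈ P l, ν' i) = g * ∑ j ∈ Q l, μ' j := by
      rw [Finset.mul_sum, Finset.mul_sum]
      rw [Finset.sum_congr rfl (fun i _ => (hνeq i).symm),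
        Finset.sum_congr rfl (fun j _ => (hμeq j).symm)]
      exact hsum l
    exact Nat.eq_of_mul_eq_mul_left hgpos h1
  have htotal' : (∑ i, ν i) / g = ∑ i, ν' i := by
    have h1 : ∑ i, ν i = g * ∑ i, ν' i := by
      rw [Finset.mul_sum]
      exact Finset.sum_congr rfl (fun i _ => hνeq i)
    rw [h1]
    exact Nat.mul_div_cancel_left _ hgpos
  -- initial forest
  have hinit := pps_init P Q ν' μ' hPne hPdisj hQdisj hν'pos hμ'pos hsum' Finset.univ
  rw [hPcov, hQcov] at hinit
  obtain ⟨st0, hst0⟩ := hinit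
  have hcge : d ≤ st0.comps.card := by
    simpa using hst0
  have hdstar : dStar ν μ = max 1 (m + n - ∑ i, ν' i) := by
    rw [dStar, ← hgdef, htotal']
  have hgR : (0 : ℝ) < (g : ℝ) := by exact_mod_cast hgpos
  by_cases hAB : dStar ν μ ≤ d
  · -- case A
    have hA : m + n ≤ (∑ i, ν' i) + d := by
      rw [hdstar] at hAB
      have := le_trans (le_max_right 1 (m + n - ∑ i, ν' i)) hAB
      omega
    obtain ⟨st1, hst1⟩ := pps_loopA d hd hgcd1 hA st0.comps.card st0 rfl hcge
    set xr : Fin m → Fin n → ℝ := fun i j => (g : ℝ) * st1.x i j with hxrdef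
    have hxriff : ∀ i j, xr i j ≠ 0 ↔ st1.x i j ≠ 0 := by
      intro i j
      simp [hxrdef, hgR.ne', Nat.cast_ne_zero]
    have hrowr : ∀ i, ∑ j, xr i j = ((ν i : ℝ)) := by
      intro i
      simp only [hxrdef]
      rw [← Finset.mul_sum, ← Nat.cast_sum, st1.hrow i (Finset.mem_univ i), hνeq i]
      push_cast
      ring
    have hcolr : ∀ j, ∑ i, xr i j = ((μ j : ℝ)) := by
      intro j
      simp only [hxrdef]
      rw [← Finset.mul_sum, ← Nat.cast_sum, st1.hcol j (Finset.mem_univ j), hμeq j]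
      push_cast
      ring
    have hestepr : ∀ u v, estep st1.x u v → reach xr u v := by
      intro u v ⟨i, j, hij, h⟩
      exact estep.reach ⟨i, j, (hxriff i j).2 hij, h⟩
    have hfin := finalize_real (fun i => (ν i : ℝ)) (fun j => (μ j : ℝ)) xr d
      (fun i j => by positivity)
      hrowr hcolr st1.comps hst1
      (fun i => st1.hcovR i (Finset.mem_univ i))
      (fun j => st1.hcovC j (Finset.mem_univ j))
      st1.hdisR st1.hdisC
      (fun i j hne C hC hiC => (st1.hedge i j ((hxriff i j).1 hne) C hC).1 hiC)
      (fun C hC u v hu hv => reach_lift hestepr (st1.hconn C hC u v hu hv))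
      st1.hneR
    refine ⟨fsupp xr, hfin.1, hfin.2, ?_, ?_⟩
    · intro _
      have hsupp : fsupp xr = (Finset.univ : Finset (Fin m × Fin n)).filter
          fun e => st1.x e.1 e.2 ≠ 0 := by
        ext e
        rw [mem_fsupp, Finset.mem_filter]
        simp [hxriff e.1 e.2]
      rw [hsupp]
      have := pps_supp_card st1
      omega
    · intro h
      exact absurd hAB (not_le.2 h)
  · -- case B
    push_neg at hAB
    have hB : (∑ i, ν' i) + d < m + n := by
      rw [hdstar] at hAB
      have h1 : 1 ≤ d := hd
      have h2 : d < m + n - ∑ i, ν' i := by omega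
      omega
    have hgt : d < st0.comps.card := by
      rcases eq_or_lt_of_le hcge with heq | h
      · exfalso
        have htot := pps_total st0
        have hsc := pps_supp_card st0
        have hge : ((Finset.univ : Finset (Fin m × Fin n)).filter
            fun e => st0.x e.1 e.2 ≠ 0).card ≤ ∑ i, ν' i := by
          rw [← htot, ← Finset.sum_filter_ne_zero]
          rw [Finset.card_eq_sum_ones]
          refine Finset.sum_le_sum (fun e he => ?_)
          exact Nat.one_le_iff_ne_zero.2 (Finset.mem_filter.1 he).2
        omega
      · exact h
    obtain ⟨x, comps', hx0, hrowx, hcolx, hcard', hcovR', hcovC', hdisR', hdisC',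
      hedge', hconn', hneR', hcardsupp⟩ := pps_cycle g hgpos st0 d hd hgt
    have hrowr : ∀ i, ∑ j, x i j = ((ν i : ℝ)) := by
      intro i
      rw [hrowx i, hνeq i]
      push_cast
      ring
    have hcolr : ∀ j, ∑ i, x i j = ((μ j : ℝ)) := by
      intro j
      rw [hcolx j, hμeq j]
      push_cast
      ring
    have hfin := finalize_real (fun i => (ν i : ℝ)) (fun j => (μ j : ℝ)) x d
      hx0 hrowr hcolr comps' hcard' hcovR' hcovC' hdisR' hdisC' hedge' hconn' hneR'
    refine ⟨fsupp x, hfin.1, hfin.2, ?_, ?_⟩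
    · intro h
      exact absurd h (not_le.2 hAB)
    · intro _
      exact hcardsupp
end

section
/- Let ν ∈ ℤ_{>0}^m and μ ∈ ℤ_{>0}^n with ∑_{i∈I} ν_i = ∑_{j∈J} μ_j. Then there exists E ⊆ I × J with |E| = m + n − 1 such that (ν,μ,E) satisfies the CRP condition if and only if ∑_{i∈I} ν_i ≥ (m + n − 1)·gcd(ν,μ). -/
open scoped Classical

namespace Stmt9

open Finset

variable {α β : Type*} [DecidableEq α] [DecidableEq β]

lemma add_g_le {g x y : ℕ} (hg : g ∣ x) (hg' : g ∣ y) (h : x < y) : x + g ≤ y := by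
  have h1 : g ∣ y - x := Nat.dvd_sub hg' hg
  have h2 : g ≤ y - x := Nat.le_of_dvd (by omega) h1
  omega

lemma claimX : ∀ (c : ℕ) (A : Finset α) (B : Finset β) (a : α → ℕ) (b : β → ℕ)
    (E : Finset (α × β)) (k g : ℕ),
    A.card + B.card ≤ c →
    0 < g → A.Nonempty →
    E ⊆ A ×ˢ B →
    (∀ i ∈ A, g ∣ a i ∧ 0 < a i) →
    (∀ j ∈ B, g ∣ b j ∧ 0 < b j) →
    (∀ j ∈ B, ∃ i, (i, j) ∈ E) →
    E.card + 1 ≤ A.card + B.card + k →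
    (∀ S ⊆ A, S.Nonempty → S ≠ A →
      ∑ i ∈ S, a i < ∑ j ∈ B.filter (fun j => ∃ i ∈ S, (i, j) ∈ E), b j) →
    (∑ j ∈ B, b j) + k * g ≤ ∑ i ∈ A, a i →
    (A.card + B.card) * g ≤ (∑ j ∈ B, b j) + g := by
  intro c
  induction c with
  | zero =>
    intro A B a b E k g hc hg hA hEsub ha hb hcov hcard hhall hsum
    have := hA.card_pos; omega
  | succ c ih =>
    intro A B a b E k g hc hg hA hEsub ha hb hcov hcard hhall hsum
    by_cases hA1 : A.card = 1
    · -- base: single row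
      have hbg : ∀ j ∈ B, g ≤ b j := fun j hj => Nat.le_of_dvd (hb j hj).2 (hb j hj).1
      have h1 : B.card • g ≤ ∑ j ∈ B, b j := Finset.card_nsmul_le_sum B b g hbg
      simp only [smul_eq_mul] at h1
      have h2 : (A.card + B.card) * g = g + B.card * g := by rw [hA1]; ring
      omega
    · have hA2 : 2 ≤ A.card := by have := hA.card_pos; omega
      have hhallg : ∀ S ⊆ A, S.Nonempty → S ≠ A →
          (∑ i ∈ S, a i) + g ≤ ∑ j ∈ B.filter (fun j => ∃ i ∈ S, (i, j) ∈ E), b j := by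
        intro S hS hS1 hS2
        refine add_g_le ?_ ?_ (hhall S hS hS1 hS2)
        · exact Finset.dvd_sum (fun i hi => (ha i (hS hi)).1)
        · exact Finset.dvd_sum (fun j hj => (hb j (Finset.mem_filter.1 hj).1).1)
      by_cases hcol1 : ∃ j₀ ∈ B, (E.filter (fun e => e.2 = j₀)).card = 1
      · -- CASE (a): a column of degree 1
        obtain ⟨j₀, hj₀B, hdeg⟩ := hcol1
        rw [Finset.card_eq_one] at hdeg
        obtain ⟨e₀, he₀⟩ := hdeg
        have hmem : e₀ ∈ E.filter (fun e => e.2 = j₀) := by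
          rw [he₀]; exact Finset.mem_singleton_self _
        have he2 : e₀.2 = j₀ := (Finset.mem_filter.1 hmem).2
        have hE0 : e₀ ∈ E := (Finset.mem_filter.1 hmem).1
        set i₀ := e₀.1 with hi₀def
        have he₀eq : (i₀, j₀) = e₀ := by
          rw [hi₀def, ← he2]
        have hEj₀ : (i₀, j₀) ∈ E := he₀eq ▸ hE0
        have huniq : ∀ i j, (i, j) ∈ E → j = j₀ → i = i₀ := by
          intro i j hij hj
          subst hj
          have hm2 : (i, j) ∈ E.filter (fun e => e.2 = j) := Finset.mem_filter.2 ⟨hij, rfl⟩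
          rw [he₀, Finset.mem_singleton] at hm2
          rw [hi₀def, ← hm2]
        have hi₀A : i₀ ∈ A := (Finset.mem_product.1 (hEsub hEj₀)).1
        -- key: b j₀ + g ≤ a i₀
        have hSerne : (A.erase i₀).Nonempty := by
          rw [← Finset.card_pos, Finset.card_erase_of_mem hi₀A]; omega
        have hSerneA : A.erase i₀ ≠ A := by
          intro h
          have : i₀ ∈ A.erase i₀ := h.symm ▸ hi₀A
          exact (Finset.notMem_erase i₀ A) this
        have h1 := hhallg (A.erase i₀) (Finset.erase_subset _ _) hSerne hSerneA
        have hsubF : B.filter (fun j => ∃ i ∈ A.erase i₀, (i, j) ∈ E) ⊆ B.erase j₀ := by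
          intro j hj
          obtain ⟨hjB, i, hiS, hij⟩ := Finset.mem_filter.1 hj
          refine Finset.mem_erase.2 ⟨?_, hjB⟩
          intro hjj₀
          exact (Finset.mem_erase.1 hiS).1 (huniq i j hij hjj₀)
        have h2 : ∑ j ∈ B.filter (fun j => ∃ i ∈ A.erase i₀, (i, j) ∈ E), b j
            ≤ ∑ j ∈ B.erase j₀, b j := Finset.sum_le_sum_of_subset hsubF
        have h3 : (∑ i ∈ A.erase i₀, a i) + a i₀ = ∑ i ∈ A, a i :=
          Finset.sum_erase_add _ _ hi₀A
        have h4 : (∑ j ∈ B.erase j₀, b j) + b j₀ = ∑ j ∈ B, b j :=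
          Finset.sum_erase_add _ _ hj₀B
        have hkey : b j₀ + g ≤ a i₀ := by omega
        have hB1 : 1 ≤ B.card := Finset.card_pos.2 ⟨_, hj₀B⟩
        have hE1 : 1 ≤ E.card := Finset.card_pos.2 ⟨_, hEj₀⟩
        -- child instance
        have hrec := ih A (B.erase j₀) (Function.update a i₀ (a i₀ - b j₀)) b
          (E.erase (i₀, j₀)) k g
          (by rw [Finset.card_erase_of_mem hj₀B]; omega) hg hA
          (by
            intro e he
            obtain ⟨hne, heE⟩ := Finset.mem_erase.1 he
            have hp := Finset.mem_product.1 (hEsub heE)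
            refine Finset.mem_product.2 ⟨hp.1, Finset.mem_erase.2 ⟨?_, hp.2⟩⟩
            intro h2j
            apply hne
            have : e.1 = i₀ := huniq e.1 e.2 (by simpa using heE) h2j
            calc e = (e.1, e.2) := rfl
            _ = (i₀, j₀) := by rw [this, h2j])
          (by
            intro i hiA
            by_cases hii : i = i₀
            · rw [hii, Function.update_self]
              have hiA' : i₀ ∈ A := hii ▸ hiA
              exact ⟨Nat.dvd_sub (ha i₀ hiA').1 (hb j₀ hj₀B).1, by omega⟩
            · rw [Function.update_of_ne hii]
              exact ha i hiA)
          (fun j hj => hb j (Finset.mem_of_mem_erase hj))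
          (by
            intro j hj
            obtain ⟨hjne, hjB⟩ := Finset.mem_erase.1 hj
            obtain ⟨i, hij⟩ := hcov j hjB
            refine ⟨i, Finset.mem_erase.2 ⟨?_, hij⟩⟩
            intro h
            exact hjne (congrArg Prod.snd h))
          (by
            rw [Finset.card_erase_of_mem hEj₀, Finset.card_erase_of_mem hj₀B]
            omega)
          (by
            -- hall for child
            intro S hS hS1 hS2
            by_cases hiS : i₀ ∈ S
            · have hFj₀ : j₀ ∈ B.filter (fun j => ∃ i ∈ S, (i, j) ∈ E) :=
                Finset.mem_filter.2 ⟨hj₀B, i₀, hiS, hEj₀⟩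
              have hset : (B.erase j₀).filter (fun j => ∃ i ∈ S, (i, j) ∈ E.erase (i₀, j₀))
                  = (B.filter (fun j => ∃ i ∈ S, (i, j) ∈ E)).erase j₀ := by
                ext j
                simp only [Finset.mem_filter, Finset.mem_erase]
                constructor
                · rintro ⟨⟨hjne, hjB⟩, i, hiS', hij⟩
                  exact ⟨hjne, hjB, i, hiS', hij.2⟩
                · rintro ⟨hjne, hjB, i, hiS', hij⟩
                  refine ⟨⟨hjne, hjB⟩, i, hiS', ?_, hij⟩
                  intro h
                  exact hjne (congrArg Prod.snd h)
              rw [hset]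
              have h5 : (∑ j ∈ (B.filter (fun j => ∃ i ∈ S, (i, j) ∈ E)).erase j₀, b j) + b j₀
                  = ∑ j ∈ B.filter (fun j => ∃ i ∈ S, (i, j) ∈ E), b j :=
                Finset.sum_erase_add _ _ hFj₀
              have h6 := hhall S hS hS1 hS2
              have h7 : (∑ i ∈ S.erase i₀, a i) + a i₀ = ∑ i ∈ S, a i :=
                Finset.sum_erase_add _ _ hiS
              have h8 : ∑ i ∈ S, Function.update a i₀ (a i₀ - b j₀) i
                  = (a i₀ - b j₀) + ∑ i ∈ S.erase i₀, a i := by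
                rw [Finset.sum_update_of_mem hiS, Finset.erase_eq]
              rw [h8]
              omega
            · have h9 : ∑ i ∈ S, Function.update a i₀ (a i₀ - b j₀) i = ∑ i ∈ S, a i := by
                refine Finset.sum_congr rfl (fun i hi => ?_)
                exact Function.update_of_ne (fun h => hiS (by rwa [h] at hi)) _ _
              have hset : (B.erase j₀).filter (fun j => ∃ i ∈ S, (i, j) ∈ E.erase (i₀, j₀))
                  = B.filter (fun j => ∃ i ∈ S, (i, j) ∈ E) := by
                ext j
                simp only [Finset.mem_filter, Finset.mem_erase]
                constructor
                · rintro ⟨⟨hjne, hjB⟩, i, hiS', hij⟩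
                  exact ⟨hjB, i, hiS', hij.2⟩
                · rintro ⟨hjB, i, hiS', hij⟩
                  have hjne : j ≠ j₀ := by
                    intro h
                    have : i = i₀ := huniq i j hij h
                    exact hiS (by rwa [this] at hiS')
                  refine ⟨⟨hjne, hjB⟩, i, hiS', ?_, hij⟩
                  intro h
                  exact hjne (congrArg Prod.snd h)
              rw [h9, hset]
              exact hhall S hS hS1 hS2)
          (by
            -- sums hyp for child
            have h8 : ∑ i ∈ A, Function.update a i₀ (a i₀ - b j₀) i
                = (a i₀ - b j₀) + ∑ i ∈ A.erase i₀, a i := by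
              rw [Finset.sum_update_of_mem hi₀A, Finset.erase_eq]
            rw [h8]
            omega)
        -- conclude
        rw [Finset.card_erase_of_mem hj₀B] at hrec
        have hbj₀g : g ≤ b j₀ := Nat.le_of_dvd (hb j₀ hj₀B).2 (hb j₀ hj₀B).1
        have hm : (A.card + B.card) * g = (A.card + (B.card - 1)) * g + g := by
          have h : A.card + B.card = (A.card + (B.card - 1)) + 1 := by omega
          rw [h, add_mul, one_mul]
        omega
      · -- no column of degree 1: every column has degree ≥ 2
        have hcoldeg : ∀ j ∈ B, 2 ≤ (E.filter (fun e => e.2 = j)).card := by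
          intro j hj
          obtain ⟨i, hij⟩ := hcov j hj
          have h1 : 0 < (E.filter (fun e => e.2 = j)).card :=
            Finset.card_pos.2 ⟨(i, j), Finset.mem_filter.2 ⟨hij, rfl⟩⟩
          have h2 : (E.filter (fun e => e.2 = j)).card ≠ 1 := fun h => hcol1 ⟨j, hj, h⟩
          omega
        have htwo : ∀ j ∈ B, ∀ i : α, ∃ i' , i' ≠ i ∧ (i', j) ∈ E := by
          intro j hj i
          have h2 : 1 < (E.filter (fun e => e.2 = j)).card := hcoldeg j hj
          obtain ⟨f₁, hf₁, f₂, hf₂, hne⟩ := Finset.one_lt_card.1 h2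
          obtain ⟨hf₁E, hf₁j⟩ := Finset.mem_filter.1 hf₁
          obtain ⟨hf₂E, hf₂j⟩ := Finset.mem_filter.1 hf₂
          have hfst : f₁.1 ≠ f₂.1 := by
            intro h
            exact hne (Prod.ext h (hf₁j.trans hf₂j.symm))
          have hm₁ : (f₁.1, j) ∈ E := by rw [← hf₁j]; exact hf₁E
          have hm₂ : (f₂.1, j) ∈ E := by rw [← hf₂j]; exact hf₂E
          by_cases hc1 : f₁.1 = i
          · exact ⟨f₂.1, by rw [← hc1]; exact hfst.symm, hm₂⟩
          · exact ⟨f₁.1, hc1, hm₁⟩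
        have hrowdeg1 : ∀ i ∈ A, ∃ j, (i, j) ∈ E := by
          intro i hiA
          have hne : ({i} : Finset α) ≠ A := by
            intro h
            have := congrArg Finset.card h
            simp at this
            omega
          have hhi := hhall {i} (Finset.singleton_subset_iff.2 hiA)
            ⟨i, Finset.mem_singleton_self i⟩ hne
          by_contra hno
          push_neg at hno
          have hempty : B.filter (fun j => ∃ i' ∈ ({i} : Finset α), (i', j) ∈ E) = ∅ := by
            ext j
            simp only [Finset.mem_filter, Finset.mem_singleton, Finset.notMem_empty, iff_false,
              not_and, not_exists]
            rintro hjB i' rfl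
            exact hno j
          rw [hempty] at hhi
          simp at hhi
        by_cases hrow1 : ∃ i₀ ∈ A, (E.filter (fun e => e.1 = i₀)).card = 1
        · -- CASE (b): a row of degree 1
          obtain ⟨i₀, hi₀A, hdeg⟩ := hrow1
          rw [Finset.card_eq_one] at hdeg
          obtain ⟨e₀, he₀⟩ := hdeg
          have hmem : e₀ ∈ E.filter (fun e => e.1 = i₀) := by
            rw [he₀]; exact Finset.mem_singleton_self _
          have he1 : e₀.1 = i₀ := (Finset.mem_filter.1 hmem).2
          have hE0 : e₀ ∈ E := (Finset.mem_filter.1 hmem).1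
          set j₀ := e₀.2 with hj₀def
          have he₀eq : (i₀, j₀) = e₀ := by rw [hj₀def, ← he1]
          have hEj₀ : (i₀, j₀) ∈ E := he₀eq ▸ hE0
          have hj₀B : j₀ ∈ B := (Finset.mem_product.1 (hEsub hEj₀)).2
          have huniqr : ∀ i j, (i, j) ∈ E → i = i₀ → j = j₀ := by
            intro i j hij hi
            subst hi
            have hm2 : (i, j) ∈ E.filter (fun e => e.1 = i) := Finset.mem_filter.2 ⟨hij, rfl⟩
            rw [he₀, Finset.mem_singleton] at hm2
            rw [hj₀def, ← hm2]
          obtain ⟨i₁, hi₁ne, hi₁E⟩ := htwo j₀ hj₀B i₀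
          -- key: a i₀ + g ≤ b j₀
          have hsing : B.filter (fun j => ∃ i ∈ ({i₀} : Finset α), (i, j) ∈ E) = {j₀} := by
            ext j
            simp only [Finset.mem_filter, Finset.mem_singleton]
            constructor
            · rintro ⟨hjB, i, rfl, hij⟩
              exact huniqr _ _ hij rfl
            · rintro rfl
              exact ⟨hj₀B, i₀, rfl, hEj₀⟩
          have hAne : ({i₀} : Finset α) ≠ A := by
            intro h
            have := congrArg Finset.card h
            simp at this
            omega
          have hkey0 := hhallg {i₀} (Finset.singleton_subset_iff.2 hi₀A)
            ⟨i₀, Finset.mem_singleton_self i₀⟩ hAne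
          rw [hsing, Finset.sum_singleton, Finset.sum_singleton] at hkey0
          -- hkey0 : a i₀ + g ≤ b j₀
          have hA'ne : (A.erase i₀).Nonempty := by
            rw [← Finset.card_pos, Finset.card_erase_of_mem hi₀A]; omega
          have hE1 : 1 ≤ E.card := Finset.card_pos.2 ⟨_, hEj₀⟩
          have hag : g ≤ a i₀ := Nat.le_of_dvd (ha i₀ hi₀A).2 (ha i₀ hi₀A).1
          have hrec := ih (A.erase i₀) B a (Function.update b j₀ (b j₀ - a i₀))
            (E.erase (i₀, j₀)) k g
            (by rw [Finset.card_erase_of_mem hi₀A]; omega) hg hA'ne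
            (by
              intro e he
              obtain ⟨hne, heE⟩ := Finset.mem_erase.1 he
              have hp := Finset.mem_product.1 (hEsub heE)
              refine Finset.mem_product.2 ⟨Finset.mem_erase.2 ⟨?_, hp.1⟩, hp.2⟩
              intro h1j
              apply hne
              have h2j : e.2 = j₀ := huniqr e.1 e.2 (by simpa using heE) h1j
              calc e = (e.1, e.2) := rfl
              _ = (i₀, j₀) := by rw [h1j, h2j])
            (fun i hi => ha i (Finset.mem_of_mem_erase hi))
            (by
              intro j hjB
              by_cases hjj : j = j₀
              · rw [hjj, Function.update_self]
                exact ⟨Nat.dvd_sub (hb j₀ hj₀B).1 (ha i₀ hi₀A).1, by omega⟩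
              · rw [Function.update_of_ne hjj]
                exact hb j hjB)
            (by
              intro j hjB
              by_cases hjj : j = j₀
              · subst hjj
                exact ⟨i₁, Finset.mem_erase.2 ⟨fun h => hi₁ne (congrArg Prod.fst h), hi₁E⟩⟩
              · obtain ⟨i, hij⟩ := hcov j hjB
                refine ⟨i, Finset.mem_erase.2 ⟨?_, hij⟩⟩
                intro h
                exact hjj (congrArg Prod.snd h))
            (by
              rw [Finset.card_erase_of_mem hEj₀, Finset.card_erase_of_mem hi₀A]
              omega)
            (by
              -- hall for child
              intro S hS hS1 hS2
              have hi₀S : i₀ ∉ S := fun h => (Finset.mem_erase.1 (hS h)).1 rfl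
              have hSsubA : S ⊆ A := hS.trans (Finset.erase_subset _ _)
              have hSneA : S ≠ A := by
                intro h
                exact hi₀S (h ▸ hi₀A)
              have hnbr_eq : B.filter (fun j => ∃ i ∈ S, (i, j) ∈ E.erase (i₀, j₀))
                  = B.filter (fun j => ∃ i ∈ S, (i, j) ∈ E) := by
                ext j
                simp only [Finset.mem_filter]
                constructor
                · rintro ⟨hjB, i, hiS, hij⟩
                  exact ⟨hjB, i, hiS, Finset.mem_of_mem_erase hij⟩
                · rintro ⟨hjB, i, hiS, hij⟩
                  refine ⟨hjB, i, hiS, Finset.mem_erase.2 ⟨?_, hij⟩⟩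
                  intro h
                  have hii : i = i₀ := (Prod.ext_iff.1 h).1
                  exact hi₀S (hii ▸ hiS)
              rw [hnbr_eq]
              by_cases hj₀F : j₀ ∈ B.filter (fun j => ∃ i ∈ S, (i, j) ∈ E)
              · have hTsub : insert i₀ S ⊆ A := Finset.insert_subset hi₀A hSsubA
                have hTne : insert i₀ S ≠ A := by
                  intro h
                  apply hS2
                  rw [← h, Finset.erase_insert hi₀S]
                have h6 := hhall (insert i₀ S) hTsub ⟨i₀, Finset.mem_insert_self _ _⟩ hTne
                rw [Finset.sum_insert hi₀S] at h6
                have hfilT : B.filter (fun j => ∃ i ∈ insert i₀ S, (i, j) ∈ E)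
                    = B.filter (fun j => ∃ i ∈ S, (i, j) ∈ E) := by
                  ext j
                  simp only [Finset.mem_filter, Finset.mem_insert]
                  constructor
                  · rintro ⟨hjB, i, (rfl | hiS), hij⟩
                    · have : j = j₀ := huniqr _ _ hij rfl
                      subst this
                      exact Finset.mem_filter.1 hj₀F
                    · exact ⟨hjB, i, hiS, hij⟩
                  · rintro ⟨hjB, i, hiS, hij⟩
                    exact ⟨hjB, i, Or.inr hiS, hij⟩
                rw [hfilT] at h6
                have h7 : ∑ j ∈ B.filter (fun j => ∃ i ∈ S, (i, j) ∈ E),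
                    Function.update b j₀ (b j₀ - a i₀) j
                    = (b j₀ - a i₀) + ∑ j ∈ (B.filter (fun j => ∃ i ∈ S, (i, j) ∈ E)).erase j₀, b j := by
                  rw [Finset.sum_update_of_mem hj₀F, Finset.erase_eq]
                have h8 : (∑ j ∈ (B.filter (fun j => ∃ i ∈ S, (i, j) ∈ E)).erase j₀, b j) + b j₀
                    = ∑ j ∈ B.filter (fun j => ∃ i ∈ S, (i, j) ∈ E), b j :=
                  Finset.sum_erase_add _ _ hj₀F
                rw [h7]
                omega
              · have h9 : ∑ j ∈ B.filter (fun j => ∃ i ∈ S, (i, j) ∈ E),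
                    Function.update b j₀ (b j₀ - a i₀) j
                    = ∑ j ∈ B.filter (fun j => ∃ i ∈ S, (i, j) ∈ E), b j := by
                  refine Finset.sum_congr rfl (fun j hj => ?_)
                  exact Function.update_of_ne (fun h => hj₀F (by rwa [h] at hj)) _ _
                rw [h9]
                exact hhall S hSsubA hS1 hSneA)
            (by
              -- sums hyp for child
              have h3 : (∑ i ∈ A.erase i₀, a i) + a i₀ = ∑ i ∈ A, a i :=
                Finset.sum_erase_add _ _ hi₀A
              have h7 : ∑ j ∈ B, Function.update b j₀ (b j₀ - a i₀) j
                  = (b j₀ - a i₀) + ∑ j ∈ B.erase j₀, b j := by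
                rw [Finset.sum_update_of_mem hj₀B, Finset.erase_eq]
              have h4 : (∑ j ∈ B.erase j₀, b j) + b j₀ = ∑ j ∈ B, b j :=
                Finset.sum_erase_add _ _ hj₀B
              rw [h7]
              omega)
          -- conclude case (b)
          rw [Finset.card_erase_of_mem hi₀A] at hrec
          have h7 : ∑ j ∈ B, Function.update b j₀ (b j₀ - a i₀) j
              = (b j₀ - a i₀) + ∑ j ∈ B.erase j₀, b j := by
            rw [Finset.sum_update_of_mem hj₀B, Finset.erase_eq]
          have h4 : (∑ j ∈ B.erase j₀, b j) + b j₀ = ∑ j ∈ B, b j :=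
            Finset.sum_erase_add _ _ hj₀B
          rw [h7] at hrec
          have hm : (A.card + B.card) * g = (A.card - 1 + B.card) * g + g := by
            have h : A.card + B.card = (A.card - 1 + B.card) + 1 := by omega
            rw [h, add_mul, one_mul]
          omega
        · -- CASE (c): all degrees ≥ 2
          have hrowdeg2 : ∀ i ∈ A, 2 ≤ (E.filter (fun e => e.1 = i)).card := by
            intro i hiA
            obtain ⟨j, hij⟩ := hrowdeg1 i hiA
            have h1 : 0 < (E.filter (fun e => e.1 = i)).card :=
              Finset.card_pos.2 ⟨(i, j), Finset.mem_filter.2 ⟨hij, rfl⟩⟩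
            have h2 : (E.filter (fun e => e.1 = i)).card ≠ 1 := fun h => hrow1 ⟨i, hiA, h⟩
            omega
          have hEfibA : E.card = ∑ i ∈ A, (E.filter (fun e => e.1 = i)).card :=
            Finset.card_eq_sum_card_fiberwise (fun e he => (Finset.mem_product.1 (hEsub he)).1)
          have hEfibB : E.card = ∑ j ∈ B, (E.filter (fun e => e.2 = j)).card :=
            Finset.card_eq_sum_card_fiberwise (fun e he => (Finset.mem_product.1 (hEsub he)).2)
          have h2m : A.card * 2 ≤ E.card := by
            rw [hEfibA]
            have := Finset.card_nsmul_le_sum A (fun i => (E.filter (fun e => e.1 = i)).card) 2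
              hrowdeg2
            simpa using this
          have h2n : B.card * 2 ≤ E.card := by
            rw [hEfibB]
            have := Finset.card_nsmul_le_sum B (fun j => (E.filter (fun e => e.2 = j)).card) 2
              hcoldeg
            simpa using this
          have hallA : ∀ i ∈ A, (∑ i' ∈ A, a i') + g ≤ (∑ j ∈ B, b j) + a i := by
            intro i hiA
            have hSer : (A.erase i).Nonempty := by
              rw [← Finset.card_pos, Finset.card_erase_of_mem hiA]; omega
            have hSerneA : A.erase i ≠ A := by
              intro h
              have : i ∈ A.erase i := h.symm ▸ hiA
              exact (Finset.notMem_erase i A) this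
            have h1 := hhallg (A.erase i) (Finset.erase_subset _ _) hSer hSerneA
            have hNfull : B.filter (fun j => ∃ i' ∈ A.erase i, (i', j) ∈ E) = B := by
              refine Finset.filter_eq_self.2 (fun j hjB => ?_)
              obtain ⟨i', hi'ne, hi'E⟩ := htwo j hjB i
              exact ⟨i', Finset.mem_erase.2 ⟨hi'ne, (Finset.mem_product.1 (hEsub hi'E)).1⟩, hi'E⟩
            rw [hNfull] at h1
            have h3 : (∑ i' ∈ A.erase i, a i') + a i = ∑ i' ∈ A, a i' :=
              Finset.sum_erase_add _ _ hiA
            omega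
          have hsumA : A.card * ((∑ i' ∈ A, a i') + g) ≤ A.card * (∑ j ∈ B, b j) + ∑ i ∈ A, a i := by
            calc A.card * ((∑ i' ∈ A, a i') + g)
                = ∑ _i ∈ A, ((∑ i' ∈ A, a i') + g) := by
                  rw [Finset.sum_const, smul_eq_mul]
              _ ≤ ∑ i ∈ A, ((∑ j ∈ B, b j) + a i) := Finset.sum_le_sum hallA
              _ = A.card * (∑ j ∈ B, b j) + ∑ i ∈ A, a i := by
                  rw [Finset.sum_add_distrib, Finset.sum_const, smul_eq_mul]
          -- final arithmetic
          obtain ⟨M, hM⟩ : ∃ M, A.card = M + 2 := ⟨A.card - 2, by omega⟩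
          have hk1 : 1 ≤ k := by omega
          have hKb : B.card ≤ M + k + 1 := by omega
          set Sa := ∑ i ∈ A, a i with hSa
          set Sb := ∑ j ∈ B, b j with hSb
          have hmul1 : (M + 1) * Sb + (M + 1) * (k * g) ≤ (M + 1) * Sa := by
            calc (M + 1) * Sb + (M + 1) * (k * g) = (M + 1) * (Sb + k * g) := by ring
            _ ≤ (M + 1) * Sa := Nat.mul_le_mul_left _ hsum
          have hmul2 : (M + 1) * Sa + Sa + (M + 2) * g ≤ (M + 1) * Sb + Sb + Sa := by
            have e1 : (M + 2) * (Sa + g) = (M + 1) * Sa + Sa + (M + 2) * g := by ring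
            have e2 : (M + 2) * Sb + Sa = (M + 1) * Sb + Sb + Sa := by ring
            rw [hM] at hsumA
            omega
          have hSb_ge : (M + 1) * (k * g) + (M + 2) * g ≤ Sb + Sa - Sa := by omega
          have hSb_ge' : (M + 1) * (k * g) + (M + 2) * g ≤ Sb := by omega
          have hgoal1 : (A.card + B.card) * g ≤ (2 * M + k + 3) * g :=
            Nat.mul_le_mul_right g (by omega)
          have hgkg : M * g ≤ M * (k * g) := by
            refine Nat.mul_le_mul_left _ ?_
            calc g = 1 * g := (one_mul g).symm
            _ ≤ k * g := Nat.mul_le_mul_right g hk1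
          have e3 : (2 * M + k + 3) * g = M * g + M * g + k * g + 3 * g := by ring
          have e4 : (M + 1) * (k * g) + (M + 2) * g = M * (k * g) + k * g + M * g + 2 * g := by ring
          omega

open Finset

variable {α β : Type*} [DecidableEq α] [DecidableEq β]

lemma two_le_mul {x y : ℕ} (hx : 1 ≤ x) (hy : 1 ≤ y) : x + y ≤ x * y + 1 := by
  obtain ⟨x, rfl⟩ := Nat.exists_eq_add_of_le hx
  obtain ⟨y, rfl⟩ := Nat.exists_eq_add_of_le hy
  have h : (1 + x) * (1 + y) = x * y + x + y + 1 := by ring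
  omega

lemma le_two_pow_pred : ∀ n : ℕ, n ≤ 2 ^ (n - 1) := by
  intro n
  induction n with
  | zero => simp
  | succ k ih =>
    rcases Nat.eq_zero_or_pos k with h | h
    · subst h; simp
    · have h2 : k + 1 - 1 = (k - 1) + 1 := by omega
      rw [h2, pow_succ]
      have h3 : 1 ≤ 2 ^ (k - 1) := Nat.one_le_two_pow
      omega

lemma prod_dvd_of_pairwise_coprime (s : Finset β) (f : β → ℕ) (x : ℕ)
    (hd : ∀ j ∈ s, f j ∣ x)
    (hc : ∀ j ∈ s, ∀ j' ∈ s, j ≠ j' → Nat.Coprime (f j) (f j')) :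
    (∏ j ∈ s, f j) ∣ x := by
  induction s using Finset.induction_on with
  | empty => simpa using one_dvd x
  | @insert j₀ s hnm ih =>
    rw [Finset.prod_insert hnm]
    refine Nat.Coprime.mul_dvd_of_dvd_of_dvd ?_ (hd _ (Finset.mem_insert_self _ _)) ?_
    · refine Nat.Coprime.prod_right (fun j hj => ?_)
      exact hc j₀ (Finset.mem_insert_self _ _) j (Finset.mem_insert_of_mem hj)
        (fun h => hnm (h ▸ hj))
    · exact ih (fun j hj => hd j (Finset.mem_insert_of_mem hj))
        (fun j hj j' hj' hne => hc j (Finset.mem_insert_of_mem hj) j'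
          (Finset.mem_insert_of_mem hj') hne)

/-- The key partner-existence lemma for the backward construction. -/
lemma exists_good (A : Finset α) (B : Finset β) (a : α → ℕ) (b : β → ℕ) (N w : ℕ)
    (i₀ : α) (hi₀A : i₀ ∈ A) (hw : a i₀ = w)
    (hA2 : 2 ≤ A.card)
    (hapos : ∀ i ∈ A, 0 < a i)
    (hsa : ∑ i ∈ A, a i = N)
    (hminB : ∀ j ∈ B, w ≤ b j)
    (hgcd : Nat.gcd (A.gcd a) (B.gcd b) = 1)
    (hpart : ∃ j ∈ B, w < b j)
    (hX : w + (A.card + B.card) ≤ N + 2) :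
    ∃ j₀ ∈ B, w < b j₀ ∧
      (A.card + B.card - 2) *
        Nat.gcd ((A.erase i₀).gcd a) (B.gcd (Function.update b j₀ (b j₀ - w))) + w ≤ N := by
  by_contra hcon
  push_neg at hcon
  set D : β → ℕ := fun j =>
    Nat.gcd ((A.erase i₀).gcd a) (B.gcd (Function.update b j (b j - w))) with hD
  have hbad : ∀ j ∈ B, w < b j → N + 1 ≤ (A.card + B.card - 2) * D j + w := by
    intro j hj hwj
    have h0 := hcon j hj hwj
    simp only [hD]
    omega
  have hDa : ∀ (j : β), ∀ i ∈ A.erase i₀, D j ∣ a i := by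
    intro j i hi
    exact (Nat.gcd_dvd_left _ _).trans (Finset.gcd_dvd hi)
  have hDb : ∀ j ∈ B, ∀ j' ∈ B, j' ≠ j → D j ∣ b j' := by
    intro j hj j' hj' hne
    have h1 : D j ∣ Function.update b j (b j - w) j' :=
      (Nat.gcd_dvd_right _ _).trans (Finset.gcd_dvd hj')
    rwa [Function.update_of_ne hne] at h1
  have hDbw : ∀ j ∈ B, D j ∣ b j - w := by
    intro j hj
    have h1 : D j ∣ Function.update b j (b j - w) j :=
      (Nat.gcd_dvd_right _ _).trans (Finset.gcd_dvd hj)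
    rwa [Function.update_self] at h1
  have hs3 : 3 ≤ A.card + B.card := by
    obtain ⟨js, hjs, _⟩ := hpart
    have : 1 ≤ B.card := Finset.card_pos.2 ⟨_, hjs⟩
    omega
  have hD2 : ∀ j ∈ B, w < b j → 2 ≤ D j := by
    intro j hj hwj
    by_contra hle
    have h1 : D j ≤ 1 := by omega
    have h2 := hbad j hj hwj
    have h3 : (A.card + B.card - 2) * D j ≤ A.card + B.card - 2 := by
      calc (A.card + B.card - 2) * D j ≤ (A.card + B.card - 2) * 1 :=
        Nat.mul_le_mul_left _ h1
      _ = A.card + B.card - 2 := mul_one _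
    omega
  -- if D j ∣ w for some j ∈ B with w < b j, we contradict gcd = 1
  have hnotdvdw : ∀ j ∈ B, w < b j → ¬ (D j ∣ w) := by
    intro j hj hwj hdvd
    have hga : D j ∣ A.gcd a := by
      refine Finset.dvd_gcd (fun i hi => ?_)
      by_cases hii : i = i₀
      · rw [hii, hw]; exact hdvd
      · exact hDa j i (Finset.mem_erase.2 ⟨hii, hi⟩)
    have hgb : D j ∣ B.gcd b := by
      refine Finset.dvd_gcd (fun j' hj' => ?_)
      by_cases hjj : j' = j
      · subst hjj
        have hwle : w ≤ b j' := hminB j' hj'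
        have : b j' = (b j' - w) + w := by omega
        rw [this]
        exact Nat.dvd_add (hDbw j' hj') hdvd
      · exact hDb j hj j' hj' hjj
    have : D j ∣ 1 := hgcd ▸ Nat.dvd_gcd hga hgb
    have := Nat.le_of_dvd one_pos this
    have := hD2 j hj hwj
    omega
  -- every element of B is a strict partner
  obtain ⟨js, hjsB, hjsb⟩ := hpart
  have hall : ∀ j ∈ B, w < b j := by
    intro j' hj'
    by_cases hne : j' = js
    · rw [hne]; exact hjsb
    · by_contra hle
      have hbw : b j' = w := le_antisymm (by omega) (hminB j' hj')
      exact hnotdvdw js hjsB hjsb (hbw ▸ hDb js hjsB j' hj' hne)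
  -- pairwise coprimality
  have hcop : ∀ j ∈ B, ∀ j' ∈ B, j ≠ j' → Nat.Coprime (D j) (D j') := by
    intro j hj j' hj' hne
    set e := Nat.gcd (D j) (D j') with he
    have h1 : e ∣ b j := (Nat.gcd_dvd_right _ _).trans (hDb j' hj' j hj hne)
    have h2 : e ∣ b j - w := (Nat.gcd_dvd_left _ _).trans (hDbw j hj)
    have h3 : e ∣ w := by
      have : w = b j - (b j - w) := by
        have := hminB j hj
        omega
      rw [this]
      exact Nat.dvd_sub h1 h2
    -- as before e divides everything
    have hga : e ∣ A.gcd a := by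
      refine Finset.dvd_gcd (fun i hi => ?_)
      by_cases hii : i = i₀
      · rw [hii, hw]; exact h3
      · exact ((Nat.gcd_dvd_left _ _).trans (hDa j i (Finset.mem_erase.2 ⟨hii, hi⟩)) :)
    have hgb : e ∣ B.gcd b := by
      refine Finset.dvd_gcd (fun j'' hj'' => ?_)
      by_cases hjj : j'' = j
      · subst hjj; exact h1
      · exact (Nat.gcd_dvd_left _ _).trans (hDb j hj j'' hj'' hjj)
    have h4 : e ∣ 1 := hgcd ▸ Nat.dvd_gcd hga hgb
    exact Nat.eq_one_of_dvd_one h4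
  -- the product of the D j divides each a i, i ≠ i₀
  have hProddvd : ∀ i ∈ A.erase i₀, (∏ j ∈ B, D j) ∣ a i := by
    intro i hi
    exact prod_dvd_of_pairwise_coprime B D (a i) (fun j hj => hDa j i hi) hcop
  have hXsum : (∑ i ∈ A.erase i₀, a i) + w = N := by
    have := Finset.sum_erase_add A a hi₀A
    rw [hw] at this
    omega
  have hcardA : (A.erase i₀).card = A.card - 1 := Finset.card_erase_of_mem hi₀A
  have hXcard : (A.card - 1) * (∏ j ∈ B, D j) ≤ ∑ i ∈ A.erase i₀, a i := by
    have h1 := Finset.card_nsmul_le_sum (A.erase i₀) a (∏ j ∈ B, D j)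
      (fun i hi => Nat.le_of_dvd (hapos i (Finset.mem_of_mem_erase hi)) (hProddvd i hi))
    rwa [hcardA, smul_eq_mul] at h1
  -- the contradiction
  have hQ : (∏ j ∈ B.erase js, D j) ≥ 2 ^ (B.card - 1) := by
    have h1 := Finset.pow_card_le_prod (B.erase js) D 2
      (fun j hj => hD2 j (Finset.mem_of_mem_erase hj) (hall j (Finset.mem_of_mem_erase hj)))
    rwa [Finset.card_erase_of_mem hjsB] at h1
  have hBQ : B.card ≤ ∏ j ∈ B.erase js, D j :=
    le_trans (le_two_pow_pred B.card) hQ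
  have hsplit : ∏ j ∈ B, D j = D js * ∏ j ∈ B.erase js, D j :=
    (Finset.mul_prod_erase B D hjsB).symm
  have hbadjs := hbad js hjsB hjsb
  -- N + 1 ≤ (s-2) * D js + w  and  (A.card-1) * (D js * Q) + w ≤ N
  have hchain : (A.card - 1) * ((∏ j ∈ B.erase js, D j) * D js) < (A.card + B.card - 2) * D js := by
    have e1 : (A.card - 1) * ((∏ j ∈ B.erase js, D j) * D js)
        = (A.card - 1) * (∏ j ∈ B, D j) := by
      rw [hsplit]; ring
    rw [e1]
    omega
  have hlt : (A.card - 1) * (∏ j ∈ B.erase js, D j) < A.card + B.card - 2 := by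
    have := hchain
    rw [← mul_assoc] at this
    have hDpos : 0 < D js := by
      have := hD2 js hjsB hjsb; omega
    exact Nat.lt_of_mul_lt_mul_right this
  have hge : A.card + B.card - 2 ≤ (A.card - 1) * (∏ j ∈ B.erase js, D j) := by
    have h1 : (A.card - 1) * B.card ≤ (A.card - 1) * (∏ j ∈ B.erase js, D j) :=
      Nat.mul_le_mul_left _ hBQ
    have h2 : (A.card - 1) + B.card ≤ (A.card - 1) * B.card + 1 :=
      two_le_mul (by omega) (by have : 1 ≤ B.card := Finset.card_pos.2 ⟨_, hjsB⟩; omega)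
    omega
  omega

open Finset

variable {α β : Type*} [DecidableEq α] [DecidableEq β]

lemma sum_div_distrib {A : Finset α} {f : α → ℕ} {d : ℕ}
    (h : ∀ i ∈ A, d ∣ f i) : ∑ i ∈ A, f i / d = (∑ i ∈ A, f i) / d := by
  rcases Nat.eq_zero_or_pos d with hd | hd
  · subst hd; simp
  · symm
    apply Nat.div_eq_of_eq_mul_left hd
    rw [Finset.sum_mul]
    exact Finset.sum_congr rfl (fun i hi => (Nat.div_mul_cancel (h i hi)).symm)

lemma gcd_div_distrib {A : Finset α} {f : α → ℕ} {d : ℕ}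
    (h : ∀ i ∈ A, d ∣ f i) (hd : 0 < d) :
    A.gcd (fun i => f i / d) = A.gcd f / d := by
  have hdg : d ∣ A.gcd f := Finset.dvd_gcd h
  apply Nat.dvd_antisymm
  · have h1 : (A.gcd fun i => f i / d) * d ∣ A.gcd f := by
      refine Finset.dvd_gcd (fun i hi => ?_)
      have h2 : (A.gcd fun i => f i / d) ∣ f i / d := Finset.gcd_dvd hi
      calc (A.gcd fun i => f i / d) * d ∣ (f i / d) * d := mul_dvd_mul_right h2 d
      _ = f i := Nat.div_mul_cancel (h i hi)
    exact (Nat.dvd_div_iff_mul_dvd hdg).2 (by rwa [mul_comm] at h1)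
  · refine Finset.dvd_gcd (fun i hi => ?_)
    obtain ⟨t, ht⟩ := hdg
    obtain ⟨s, hs⟩ := Finset.gcd_dvd hi (f := f)
    have h3 : f i / d = t * s := by
      rw [hs, ht]
      rw [mul_assoc, Nat.mul_div_cancel_left _ hd]
    rw [ht, Nat.mul_div_cancel_left _ hd, h3]
    exact Dvd.intro s rfl




lemma bwd (exists_good :
    ∀ (A : Finset α) (B : Finset β) (a : α → ℕ) (b : β → ℕ) (N w : ℕ)
      (i₀ : α), i₀ ∈ A → a i₀ = w → 2 ≤ A.card →
      (∀ i ∈ A, 0 < a i) → (∑ i ∈ A, a i = N) → (∀ j ∈ B, w ≤ b j) →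
      Nat.gcd (A.gcd a) (B.gcd b) = 1 → (∃ j ∈ B, w < b j) →
      (w + (A.card + B.card) ≤ N + 2) →
      ∃ j₀ ∈ B, w < b j₀ ∧
        (A.card + B.card - 2) *
          Nat.gcd ((A.erase i₀).gcd a) (B.gcd (Function.update b j₀ (b j₀ - w))) + w ≤ N)
    (exists_good' :
    ∀ (B : Finset β) (A : Finset α) (b : β → ℕ) (a : α → ℕ) (N w : ℕ)
      (j₀ : β), j₀ ∈ B → b j₀ = w → 2 ≤ B.card →
      (∀ j ∈ B, 0 < b j) → (∑ j ∈ B, b j = N) → (∀ i ∈ A, w ≤ a i) →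
      Nat.gcd (B.gcd b) (A.gcd a) = 1 → (∃ i ∈ A, w < a i) →
      (w + (B.card + A.card) ≤ N + 2) →
      ∃ i₀ ∈ A, w < a i₀ ∧
        (B.card + A.card - 2) *
          Nat.gcd ((B.erase j₀).gcd b) (A.gcd (Function.update a i₀ (a i₀ - w))) + w ≤ N) :
    ∀ (N : ℕ) (A : Finset α) (B : Finset β) (a : α → ℕ) (b : β → ℕ),
    A.Nonempty → B.Nonempty →
    (∀ i ∈ A, 0 < a i) → (∀ j ∈ B, 0 < b j) →
    (∑ i ∈ A, a i = N) → (∑ j ∈ B, b j = N) →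
    Nat.gcd (A.gcd a) (B.gcd b) = 1 →
    A.card + B.card ≤ N + 1 →
    ∃ E : Finset (α × β), E ⊆ A ×ˢ B ∧ E.card + 1 = A.card + B.card ∧
      (∀ j ∈ B, ∃ i ∈ A, (i, j) ∈ E) ∧
      ∀ S ⊆ A, S.Nonempty → S ≠ A →
        ∑ i ∈ S, a i < ∑ j ∈ B.filter (fun j => ∃ i ∈ S, (i, j) ∈ E), b j := by
  intro N
  induction N using Nat.strong_induction_on with
  | _ N ih =>
  intro A B a b hAne hBne hapos hbpos hsA hsB hgcd hcard
  by_cases hA1 : A.card = 1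
  · -- base: single row, star
    obtain ⟨i₁, hAeq⟩ := Finset.card_eq_one.1 hA1
    refine ⟨A ×ˢ B, Finset.Subset.refl _, ?_, ?_, ?_⟩
    · rw [Finset.card_product, hA1, one_mul]; omega
    · intro j hj
      exact ⟨i₁, by rw [hAeq]; exact Finset.mem_singleton_self _,
        Finset.mem_product.2 ⟨by rw [hAeq]; exact Finset.mem_singleton_self _, hj⟩⟩
    · intro S hS hS1 hS2
      exfalso
      rw [hAeq] at hS hS2
      rcases Finset.subset_singleton_iff.1 hS with h | h
      · exact hS1.ne_empty h
      · exact hS2 h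
  · by_cases hB1 : B.card = 1
    · -- base: single column, star
      obtain ⟨j₁, hBeq⟩ := Finset.card_eq_one.1 hB1
      have hj₁B : j₁ ∈ B := by rw [hBeq]; exact Finset.mem_singleton_self _
      refine ⟨A ×ˢ B, Finset.Subset.refl _, ?_, ?_, ?_⟩
      · rw [Finset.card_product, hB1, mul_one]
      · intro j hj
        obtain ⟨i, hi⟩ := hAne
        exact ⟨i, hi, Finset.mem_product.2 ⟨hi, hj⟩⟩
      · intro S hS hS1 hS2
        obtain ⟨i, hiS⟩ := hS1
        have hfilt : B.filter (fun j => ∃ i ∈ S, (i, j) ∈ A ×ˢ B) = B := by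
          refine Finset.filter_eq_self.2 (fun j hj => ?_)
          exact ⟨i, hiS, Finset.mem_product.2 ⟨hS hiS, hj⟩⟩
        rw [hfilt, hsB]
        -- ∑_S a < N since S is a proper subset
        obtain ⟨x, hxA, hxS⟩ := Finset.exists_of_ssubset (Finset.ssubset_iff_subset_ne.2 ⟨hS, hS2⟩)
        have h1 : ∑ i ∈ insert x S, a i ≤ ∑ i ∈ A, a i :=
          Finset.sum_le_sum_of_subset (Finset.insert_subset hxA hS)
        rw [Finset.sum_insert hxS] at h1
        have h2 : 0 < a x := hapos x hxA
        omega
    · -- main step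
      have hA2 : 2 ≤ A.card := by have := hAne.card_pos; omega
      have hB2 : 2 ≤ B.card := by have := hBne.card_pos; omega
      have hNpos : 0 < N := by
        obtain ⟨i, hi⟩ := hAne
        have := hapos i hi
        have h1 : a i ≤ ∑ i ∈ A, a i := Finset.single_le_sum (fun i _ => Nat.zero_le _) hi
        omega
      obtain ⟨ia, hiaA, hwa⟩ := Finset.exists_mem_eq_inf' hAne a
      obtain ⟨jb, hjbB, hwb⟩ := Finset.exists_mem_eq_inf' hBne b
      set w := min (A.inf' hAne a) (B.inf' hBne b) with hwdef
      have hwA : ∀ i ∈ A, w ≤ a i :=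
        fun i hi => le_trans (min_le_left _ _) (Finset.inf'_le a hi)
      have hwB : ∀ j ∈ B, w ≤ b j :=
        fun j hj => le_trans (min_le_right _ _) (Finset.inf'_le b hj)
      have hw1 : 1 ≤ w := by
        have h1 := hapos ia hiaA
        have h2 := hbpos jb hjbB
        rw [hwdef]
        omega
      have hwattain : (∃ i ∈ A, a i = w) ∨ (∃ j ∈ B, b j = w) := by
        rcases le_total (A.inf' hAne a) (B.inf' hBne b) with h | h
        · left; exact ⟨ia, hiaA, by rw [← hwa, hwdef]; omega⟩
        · right; exact ⟨jb, hjbB, by rw [← hwb, hwdef]; omega⟩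
      have hnotall : ¬ ((∀ i ∈ A, a i = w) ∧ (∀ j ∈ B, b j = w)) := by
        rintro ⟨h1, h2⟩
        have hga : w ∣ A.gcd a := Finset.dvd_gcd (fun i hi => (h1 i hi) ▸ dvd_refl w)
        have hgb : w ∣ B.gcd b := Finset.dvd_gcd (fun j hj => (h2 j hj) ▸ dvd_refl w)
        have hw1' : w = 1 := Nat.eq_one_of_dvd_one (hgcd ▸ Nat.dvd_gcd hga hgb)
        have hNA : N = A.card := by
          rw [← hsA]
          rw [Finset.sum_congr rfl (fun i hi => (h1 i hi).trans hw1'), Finset.sum_const,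
            smul_eq_mul, mul_one]
        have hNB : N = B.card := by
          rw [← hsB]
          rw [Finset.sum_congr rfl (fun j hj => (h2 j hj).trans hw1'), Finset.sum_const,
            smul_eq_mul, mul_one]
        omega
      have hXbound : w + (A.card + B.card) ≤ N + 2 := by
        by_contra hgt
        push_neg at hgt
        have h1 : A.card * w ≤ N := by
          have := Finset.card_nsmul_le_sum A a w hwA
          rw [smul_eq_mul, hsA] at this; omega
        have h2 : B.card * w ≤ N := by
          have := Finset.card_nsmul_le_sum B b w hwB
          rw [smul_eq_mul, hsB] at this; omega
        -- quadratic contradiction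
        have h4 : (4 : ℤ) ≤ (A.card : ℤ) + B.card := by
          have := hA2; have := hB2; push_cast; omega
        have h5 : ((A.card : ℤ) + B.card) ≤ (N : ℤ) + 1 := by exact_mod_cast hcard
        have h6 : (N : ℤ) + 3 ≤ (w : ℤ) + (A.card + B.card) := by exact_mod_cast hgt
        have h7 : ((A.card : ℤ)) * w ≤ N := by exact_mod_cast h1
        have h8 : ((B.card : ℤ)) * w ≤ N := by exact_mod_cast h2
        nlinarith [mul_nonneg (by linarith : (0:ℤ) ≤ (A.card : ℤ) + B.card - 4)
          (by linarith : (0:ℤ) ≤ (N : ℤ) + 1 - ((A.card : ℤ) + B.card))]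
      -- leaf selection
      have hleaf : (∃ i₀ ∈ A, a i₀ = w ∧ ∃ j ∈ B, w < b j) ∨
          (∃ j₀ ∈ B, b j₀ = w ∧ ∃ i ∈ A, w < a i) := by
        by_cases hAw : ∃ i ∈ A, a i = w
        · by_cases hBbig : ∃ j ∈ B, w < b j
          · obtain ⟨i₀, hi₀, hai⟩ := hAw
            exact Or.inl ⟨i₀, hi₀, hai, hBbig⟩
          · push_neg at hBbig
            have hballw : ∀ j ∈ B, b j = w := fun j hj => le_antisymm (hBbig j hj) (hwB j hj)
            have hAex : ∃ i ∈ A, w < a i := by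
              by_contra hno
              push_neg at hno
              exact hnotall ⟨fun i hi => le_antisymm (hno i hi) (hwA i hi), hballw⟩
            exact Or.inr ⟨jb, hjbB, hballw jb hjbB, hAex⟩
        · push_neg at hAw
          have hjw : ∃ j ∈ B, b j = w := by
            rcases hwattain with h | h
            · obtain ⟨i, hi, hai⟩ := h
              exact absurd hai (hAw i hi)
            · exact h
          obtain ⟨j₀, hj₀, hbj⟩ := hjw
          refine Or.inr ⟨j₀, hj₀, hbj, ia, hiaA, ?_⟩
          have h1 := hwA ia hiaA
          have h2 := hAw ia hiaA
          omega
      rcases hleaf with ⟨i₀, hi₀A, hai₀, hBbig⟩ | ⟨j₀, hj₀B, hbj₀, hAbig⟩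
      · -- ROW-LEAF
        obtain ⟨j₀, hj₀B, hbj₀, hgood⟩ :=
          exists_good A B a b N w i₀ hi₀A hai₀ hA2 hapos hsA hwB hgcd hBbig hXbound
        set b' := Function.update b j₀ (b j₀ - w) with hb'def
        set d := Nat.gcd ((A.erase i₀).gcd a) (B.gcd b') with hddef
        have hA'ne : (A.erase i₀).Nonempty := by
          rw [← Finset.card_pos, Finset.card_erase_of_mem hi₀A]; omega
        have hb'pos : ∀ j ∈ B, 0 < b' j := by
          intro j hj
          by_cases hjj : j = j₀
          · rw [hjj, hb'def, Function.update_self]; omega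
          · rw [hb'def, Function.update_of_ne hjj]; exact hbpos j hj
        have hd_a : ∀ i ∈ A.erase i₀, d ∣ a i :=
          fun i hi => (Nat.gcd_dvd_left _ _).trans (Finset.gcd_dvd hi)
        have hd_b : ∀ j ∈ B, d ∣ b' j :=
          fun j hj => (Nat.gcd_dvd_right _ _).trans (Finset.gcd_dvd hj)
        have hdpos : 0 < d := by
          rcases Nat.eq_zero_or_pos d with h0 | h
          · exfalso
            obtain ⟨i1, hi1⟩ := hA'ne
            have h2 := hd_a i1 hi1
            rw [h0] at h2
            have h3 := Nat.eq_zero_of_zero_dvd h2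
            have h4 := hapos i1 (Finset.mem_of_mem_erase hi1)
            omega
          · exact h
        have hXA : (∑ i ∈ A.erase i₀, a i) + w = N := by
          have h0 := Finset.sum_erase_add A a hi₀A
          rw [hai₀] at h0; omega
        have hXB : (∑ j ∈ B, b' j) + w = N := by
          have h7 : ∑ j ∈ B, b' j = (b j₀ - w) + ∑ j ∈ B.erase j₀, b j := by
            rw [hb'def, Finset.sum_update_of_mem hj₀B, Finset.erase_eq]
          have h4 : (∑ j ∈ B.erase j₀, b j) + b j₀ = ∑ j ∈ B, b j :=
            Finset.sum_erase_add _ _ hj₀B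
          omega
        have hsAs : ∑ i ∈ A.erase i₀, (a i / d) = (N - w) / d := by
          rw [sum_div_distrib hd_a]
          congr 1
          omega
        have hsBs : ∑ j ∈ B, (b' j / d) = (N - w) / d := by
          rw [sum_div_distrib hd_b]
          congr 1
          omega
        have hgcds : Nat.gcd ((A.erase i₀).gcd (fun i => a i / d))
            (B.gcd (fun j => b' j / d)) = 1 := by
          rw [gcd_div_distrib hd_a hdpos, gcd_div_distrib hd_b hdpos, hddef]
          exact Nat.coprime_div_gcd_div_gcd (hddef ▸ hdpos)
        have hcards : (A.erase i₀).card + B.card ≤ (N - w) / d + 1 := by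
          rw [Finset.card_erase_of_mem hi₀A]
          have h1 : (A.card + B.card - 2) * d ≤ N - w := by omega
          have h2 : A.card + B.card - 2 ≤ (N - w) / d := (Nat.le_div_iff_mul_le hdpos).2 h1
          omega
        have hlt : (N - w) / d < N := by
          have := Nat.div_le_self (N - w) d
          omega
        obtain ⟨E', hE'sub, hE'card, hE'cov, hE'hall⟩ := ih ((N - w) / d) hlt (A.erase i₀) B
          (fun i => a i / d) (fun j => b' j / d) hA'ne hBne
          (fun i hi => Nat.div_pos
            (Nat.le_of_dvd (hapos i (Finset.mem_of_mem_erase hi)) (hd_a i hi)) hdpos)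
          (fun j hj => Nat.div_pos (Nat.le_of_dvd (hb'pos j hj) (hd_b j hj)) hdpos)
          hsAs hsBs hgcds hcards
        have hhall_child : ∀ S ⊆ A.erase i₀, S.Nonempty → S ≠ A.erase i₀ →
            ∑ i ∈ S, a i < ∑ j ∈ B.filter (fun j => ∃ i ∈ S, (i, j) ∈ E'), b' j := by
          intro S hS hS1 hS2
          have h1 := hE'hall S hS hS1 hS2
          have h2 : ∑ i ∈ S, a i = (∑ i ∈ S, a i / d) * d := by
            rw [Finset.sum_mul]
            exact Finset.sum_congr rfl
              (fun i hi => (Nat.div_mul_cancel (hd_a i (hS hi))).symm)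
          have h3 : ∑ j ∈ B.filter (fun j => ∃ i ∈ S, (i, j) ∈ E'), b' j
              = (∑ j ∈ B.filter (fun j => ∃ i ∈ S, (i, j) ∈ E'), b' j / d) * d := by
            rw [Finset.sum_mul]
            exact Finset.sum_congr rfl (fun j hj =>
              (Nat.div_mul_cancel (hd_b j (Finset.mem_filter.1 hj).1)).symm)
          rw [h2, h3]
          exact Nat.mul_lt_mul_of_lt_of_le h1 (le_refl d) hdpos
        have hnm : (i₀, j₀) ∉ E' := by
          intro h
          have h1 := (Finset.mem_product.1 (hE'sub h)).1
          exact (Finset.mem_erase.1 h1).1 rfl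
        refine ⟨insert (i₀, j₀) E', ?_, ?_, ?_, ?_⟩
        · refine Finset.insert_subset (Finset.mem_product.2 ⟨hi₀A, hj₀B⟩) ?_
          exact hE'sub.trans (Finset.product_subset_product (Finset.erase_subset _ _)
            (Finset.Subset.refl _))
        · rw [Finset.card_insert_of_notMem hnm]
          rw [Finset.card_erase_of_mem hi₀A] at hE'card
          omega
        · intro j hj
          obtain ⟨i, hiA', hiE'⟩ := hE'cov j hj
          exact ⟨i, Finset.mem_of_mem_erase hiA', Finset.mem_insert_of_mem hiE'⟩
        · intro S hS hS1 hS2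
          by_cases hi₀S : i₀ ∈ S
          · have hj₀F : j₀ ∈ B.filter (fun j => ∃ i ∈ S, (i, j) ∈ insert (i₀, j₀) E') :=
              Finset.mem_filter.2 ⟨hj₀B, i₀, hi₀S, Finset.mem_insert_self _ _⟩
            have hsplitS : (∑ i ∈ S.erase i₀, a i) + w = ∑ i ∈ S, a i := by
              have h0 := Finset.sum_erase_add S a hi₀S
              rw [hai₀] at h0; omega
            by_cases hSe : (S.erase i₀).Nonempty
            · have hSesub : S.erase i₀ ⊆ A.erase i₀ := Finset.erase_subset_erase i₀ hS
              have hSene : S.erase i₀ ≠ A.erase i₀ := by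
                intro h
                apply hS2
                have h1 : S = insert i₀ (S.erase i₀) := (Finset.insert_erase hi₀S).symm
                rw [h1, h, Finset.insert_erase hi₀A]
              have hch := hhall_child (S.erase i₀) hSesub hSe hSene
              set F' := B.filter (fun j => ∃ i ∈ S.erase i₀, (i, j) ∈ E') with hF'def
              have hF'sub : F' ⊆ B.filter (fun j => ∃ i ∈ S, (i, j) ∈ insert (i₀, j₀) E') := by
                intro j hj
                obtain ⟨hjB, i, hiSe, hijE'⟩ := Finset.mem_filter.1 hj
                exact Finset.mem_filter.2 ⟨hjB, i, Finset.mem_of_mem_erase hiSe,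
                  Finset.mem_insert_of_mem hijE'⟩
              by_cases hj₀F' : j₀ ∈ F'
              · have hbb' : ∑ j ∈ F', b j = (∑ j ∈ F', b' j) + w := by
                  have e1 : (∑ j ∈ F'.erase j₀, b j) + b j₀ = ∑ j ∈ F', b j :=
                    Finset.sum_erase_add _ _ hj₀F'
                  have e2 : (∑ j ∈ F'.erase j₀, b' j) + b' j₀ = ∑ j ∈ F', b' j :=
                    Finset.sum_erase_add _ _ hj₀F'
                  have e3 : ∑ j ∈ F'.erase j₀, b' j = ∑ j ∈ F'.erase j₀, b j :=
                    Finset.sum_congr rfl (fun j hj => by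
                      rw [hb'def, Function.update_of_ne (Finset.mem_erase.1 hj).1])
                  have e4 : b' j₀ = b j₀ - w := by rw [hb'def, Function.update_self]
                  have e5 : w ≤ b j₀ := le_of_lt hbj₀
                  omega
                have hle : ∑ j ∈ F', b j
                    ≤ ∑ j ∈ B.filter (fun j => ∃ i ∈ S, (i, j) ∈ insert (i₀, j₀) E'), b j :=
                  Finset.sum_le_sum_of_subset hF'sub
                omega
              · have hbb' : ∑ j ∈ F', b' j = ∑ j ∈ F', b j :=
                  Finset.sum_congr rfl (fun j hj => by
                    rw [hb'def, Function.update_of_ne (fun h => hj₀F' (by rwa [h] at hj))])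
                have hj₀nm : j₀ ∉ F' := hj₀F'
                have hins : insert j₀ F'
                    ⊆ B.filter (fun j => ∃ i ∈ S, (i, j) ∈ insert (i₀, j₀) E') :=
                  Finset.insert_subset hj₀F hF'sub
                have hle : ∑ j ∈ insert j₀ F', b j
                    ≤ ∑ j ∈ B.filter (fun j => ∃ i ∈ S, (i, j) ∈ insert (i₀, j₀) E'), b j :=
                  Finset.sum_le_sum_of_subset hins
                rw [Finset.sum_insert hj₀nm] at hle
                omega
            · have hSeq : S.erase i₀ = ∅ := Finset.not_nonempty_iff_eq_empty.1 hSe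
              have hsum0 : ∑ i ∈ S.erase i₀, a i = 0 := by rw [hSeq]; rfl
              have hbig : b j₀
                  ≤ ∑ j ∈ B.filter (fun j => ∃ i ∈ S, (i, j) ∈ insert (i₀, j₀) E'), b j :=
                Finset.single_le_sum (fun j _ => Nat.zero_le _) hj₀F
              omega
          · have hSsub' : S ⊆ A.erase i₀ := fun i hi =>
              Finset.mem_erase.2 ⟨fun h => hi₀S (h ▸ hi), hS hi⟩
            have hFeq : B.filter (fun j => ∃ i ∈ S, (i, j) ∈ insert (i₀, j₀) E')
                = B.filter (fun j => ∃ i ∈ S, (i, j) ∈ E') := by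
              ext j
              simp only [Finset.mem_filter, Finset.mem_insert]
              constructor
              · rintro ⟨hjB, i, hiS, (heq | hE)⟩
                · exfalso
                  have h1 : i = i₀ := (Prod.ext_iff.1 heq).1
                  exact hi₀S (h1 ▸ hiS)
                · exact ⟨hjB, i, hiS, hE⟩
              · rintro ⟨hjB, i, hiS, hE⟩
                exact ⟨hjB, i, hiS, Or.inr hE⟩
            rw [hFeq]
            by_cases hSA' : S = A.erase i₀
            · have hfull : B.filter (fun j => ∃ i ∈ S, (i, j) ∈ E') = B := by
                refine Finset.filter_eq_self.2 (fun j hj => ?_)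
                obtain ⟨i, hiA', hiE'⟩ := hE'cov j hj
                exact ⟨i, hSA' ▸ hiA', hiE'⟩
              rw [hfull, hsB, hSA']
              omega
            · have hch := hhall_child S hSsub' hS1 hSA'
              have hble : ∑ j ∈ B.filter (fun j => ∃ i ∈ S, (i, j) ∈ E'), b' j
                  ≤ ∑ j ∈ B.filter (fun j => ∃ i ∈ S, (i, j) ∈ E'), b j := by
                refine Finset.sum_le_sum (fun j hj => ?_)
                by_cases hjj : j = j₀
                · rw [hjj, hb'def, Function.update_self]; omega
                · rw [hb'def, Function.update_of_ne hjj]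
              omega
      · -- COL-LEAF
        obtain ⟨i₀, hi₀A, hai₀gt, hgood⟩ :=
          exists_good' B A b a N w j₀ hj₀B hbj₀ hB2 hbpos hsB hwA
            (by rw [Nat.gcd_comm]; exact hgcd) hAbig (by omega)
        set a' := Function.update a i₀ (a i₀ - w) with ha'def
        set d := Nat.gcd ((B.erase j₀).gcd b) (A.gcd a') with hddef
        have hB'ne : (B.erase j₀).Nonempty := by
          rw [← Finset.card_pos, Finset.card_erase_of_mem hj₀B]; omega
        have ha'pos : ∀ i ∈ A, 0 < a' i := by
          intro i hi
          by_cases hii : i = i₀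
          · rw [hii, ha'def, Function.update_self]; omega
          · rw [ha'def, Function.update_of_ne hii]; exact hapos i hi
        have hd_b : ∀ j ∈ B.erase j₀, d ∣ b j :=
          fun j hj => (Nat.gcd_dvd_left _ _).trans (Finset.gcd_dvd hj)
        have hd_a : ∀ i ∈ A, d ∣ a' i :=
          fun i hi => (Nat.gcd_dvd_right _ _).trans (Finset.gcd_dvd hi)
        have hdpos : 0 < d := by
          rcases Nat.eq_zero_or_pos d with h0 | h
          · exfalso
            obtain ⟨i1, hi1⟩ := hAne
            have h2 := hd_a i1 hi1
            rw [h0] at h2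
            have h3 := Nat.eq_zero_of_zero_dvd h2
            have h4 := ha'pos i1 hi1
            omega
          · exact h
        have hXB : (∑ j ∈ B.erase j₀, b j) + w = N := by
          have h0 := Finset.sum_erase_add B b hj₀B
          rw [hbj₀] at h0; omega
        have hXA : (∑ i ∈ A, a' i) + w = N := by
          have h7 : ∑ i ∈ A, a' i = (a i₀ - w) + ∑ i ∈ A.erase i₀, a i := by
            rw [ha'def, Finset.sum_update_of_mem hi₀A, Finset.erase_eq]
          have h4 : (∑ i ∈ A.erase i₀, a i) + a i₀ = ∑ i ∈ A, a i :=
            Finset.sum_erase_add _ _ hi₀A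
          have h5 : w ≤ a i₀ := le_of_lt hai₀gt
          omega
        have hsAs : ∑ i ∈ A, (a' i / d) = (N - w) / d := by
          rw [sum_div_distrib hd_a]; congr 1; omega
        have hsBs : ∑ j ∈ B.erase j₀, (b j / d) = (N - w) / d := by
          rw [sum_div_distrib hd_b]; congr 1; omega
        have hgcds : Nat.gcd (A.gcd (fun i => a' i / d))
            ((B.erase j₀).gcd (fun j => b j / d)) = 1 := by
          rw [gcd_div_distrib hd_a hdpos, gcd_div_distrib hd_b hdpos, Nat.gcd_comm, hddef]
          exact Nat.coprime_div_gcd_div_gcd (hddef ▸ hdpos)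
        have hcards : A.card + (B.erase j₀).card ≤ (N - w) / d + 1 := by
          rw [Finset.card_erase_of_mem hj₀B]
          have h1 : (B.card + A.card - 2) * d ≤ N - w := by omega
          have hcomm : A.card + B.card - 2 = B.card + A.card - 2 := by omega
          have h2 : A.card + B.card - 2 ≤ (N - w) / d :=
            (Nat.le_div_iff_mul_le hdpos).2 (by rw [hcomm]; exact h1)
          omega
        have hlt : (N - w) / d < N := by
          have := Nat.div_le_self (N - w) d
          omega
        obtain ⟨E', hE'sub, hE'card, hE'cov, hE'hall⟩ := ih ((N - w) / d) hlt A (B.erase j₀)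
          (fun i => a' i / d) (fun j => b j / d) hAne hB'ne
          (fun i hi => Nat.div_pos (Nat.le_of_dvd (ha'pos i hi) (hd_a i hi)) hdpos)
          (fun j hj => Nat.div_pos
            (Nat.le_of_dvd (hbpos j (Finset.mem_of_mem_erase hj)) (hd_b j hj)) hdpos)
          hsAs hsBs hgcds hcards
        have hhall_child : ∀ S ⊆ A, S.Nonempty → S ≠ A →
            ∑ i ∈ S, a' i < ∑ j ∈ (B.erase j₀).filter (fun j => ∃ i ∈ S, (i, j) ∈ E'), b j := by
          intro S hS hS1 hS2
          have h1 := hE'hall S hS hS1 hS2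
          have h2 : ∑ i ∈ S, a' i = (∑ i ∈ S, a' i / d) * d := by
            rw [Finset.sum_mul]
            exact Finset.sum_congr rfl
              (fun i hi => (Nat.div_mul_cancel (hd_a i (hS hi))).symm)
          have h3 : ∑ j ∈ (B.erase j₀).filter (fun j => ∃ i ∈ S, (i, j) ∈ E'), b j
              = (∑ j ∈ (B.erase j₀).filter (fun j => ∃ i ∈ S, (i, j) ∈ E'), b j / d) * d := by
            rw [Finset.sum_mul]
            exact Finset.sum_congr rfl (fun j hj =>
              (Nat.div_mul_cancel (hd_b j (Finset.mem_filter.1 hj).1)).symm)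
          rw [h2, h3]
          exact Nat.mul_lt_mul_of_lt_of_le h1 (le_refl d) hdpos
        have hnm : (i₀, j₀) ∉ E' := fun h =>
          (Finset.mem_erase.1 (Finset.mem_product.1 (hE'sub h)).2).1 rfl
        refine ⟨insert (i₀, j₀) E', ?_, ?_, ?_, ?_⟩
        · refine Finset.insert_subset (Finset.mem_product.2 ⟨hi₀A, hj₀B⟩) ?_
          exact hE'sub.trans (Finset.product_subset_product (Finset.Subset.refl _)
            (Finset.erase_subset _ _))
        · rw [Finset.card_insert_of_notMem hnm]
          rw [Finset.card_erase_of_mem hj₀B] at hE'card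
          omega
        · intro j hj
          by_cases hjj : j = j₀
          · exact ⟨i₀, hi₀A, by rw [hjj]; exact Finset.mem_insert_self _ _⟩
          · obtain ⟨i, hiA, hiE'⟩ := hE'cov j (Finset.mem_erase.2 ⟨hjj, hj⟩)
            exact ⟨i, hiA, Finset.mem_insert_of_mem hiE'⟩
        · intro S hS hS1 hS2
          by_cases hi₀S : i₀ ∈ S
          · have hj₀F' : j₀ ∉ (B.erase j₀).filter (fun j => ∃ i ∈ S, (i, j) ∈ E') :=
              fun h => (Finset.mem_erase.1 (Finset.mem_filter.1 h).1).1 rfl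
            have hFeq : B.filter (fun j => ∃ i ∈ S, (i, j) ∈ insert (i₀, j₀) E')
                = insert j₀ ((B.erase j₀).filter (fun j => ∃ i ∈ S, (i, j) ∈ E')) := by
              ext j
              simp only [Finset.mem_filter, Finset.mem_insert, Finset.mem_erase]
              constructor
              · rintro ⟨hjB, i, hiS, (heq | hE)⟩
                · left
                  have h1 : j = j₀ := (Prod.ext_iff.1 heq).2
                  exact h1
                · by_cases hjj : j = j₀
                  · left; exact hjj
                  · right; exact ⟨⟨hjj, hjB⟩, i, hiS, hE⟩
              · rintro (rfl | ⟨⟨hjj, hjB⟩, i, hiS, hE⟩)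
                · exact ⟨hj₀B, i₀, hi₀S, Or.inl rfl⟩
                · exact ⟨hjB, i, hiS, Or.inr hE⟩
            rw [hFeq, Finset.sum_insert hj₀F']
            have hsplitS : ∑ i ∈ S, a i = (∑ i ∈ S, a' i) + w := by
              have e1 := Finset.sum_erase_add S a hi₀S
              have e2 := Finset.sum_erase_add S a' hi₀S
              have e3 : ∑ i ∈ S.erase i₀, a' i = ∑ i ∈ S.erase i₀, a i :=
                Finset.sum_congr rfl (fun i hi => by
                  rw [ha'def, Function.update_of_ne (Finset.mem_erase.1 hi).1])
              have e4 : a' i₀ = a i₀ - w := by rw [ha'def, Function.update_self]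
              have e5 : w ≤ a i₀ := le_of_lt hai₀gt
              omega
            have hch := hhall_child S hS hS1 hS2
            rw [hbj₀]
            omega
          · have hFeq : B.filter (fun j => ∃ i ∈ S, (i, j) ∈ insert (i₀, j₀) E')
                = (B.erase j₀).filter (fun j => ∃ i ∈ S, (i, j) ∈ E') := by
              ext j
              simp only [Finset.mem_filter, Finset.mem_insert, Finset.mem_erase]
              constructor
              · rintro ⟨hjB, i, hiS, (heq | hE)⟩
                · exfalso
                  have h1 : i = i₀ := (Prod.ext_iff.1 heq).1
                  exact hi₀S (h1 ▸ hiS)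
                · refine ⟨⟨?_, hjB⟩, i, hiS, hE⟩
                  intro hjj
                  have h2 := (Finset.mem_erase.1 (Finset.mem_product.1 (hE'sub hE)).2).1
                  exact h2 hjj
              · rintro ⟨⟨hjj, hjB⟩, i, hiS, hE⟩
                exact ⟨hjB, i, hiS, Or.inr hE⟩
            rw [hFeq]
            have hsame : ∑ i ∈ S, a i = ∑ i ∈ S, a' i :=
              (Finset.sum_congr rfl (fun i hi => by
                rw [ha'def, Function.update_of_ne (fun h => hi₀S (by rwa [h] at hi))])).symm
            rw [hsame]
            exact hhall_child S hS hS1 hS2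

end Stmt9

/-- there exists an edge set with `m + n − 1` edges satisfying the CRP condition
iff `∑ᵢ νᵢ ≥ (m + n − 1)·gcd(ν,μ)`. -/
theorem stmt_9 {m n : ℕ} (hm : 1 ≤ m) (hn : 1 ≤ n)
    (ν : Fin m → ℕ) (μ : Fin n → ℕ)
    (hν : ∀ i, 0 < ν i) (hμ : ∀ j, 0 < μ j)
    (htot : (∑ i, ν i) = ∑ j, μ j) :
    (∃ E : Finset (Fin m × Fin n), E.card = m + n - 1 ∧
      crpCond (fun i => (ν i : ℝ)) (fun j => (μ j : ℝ)) E) ↔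
    (m + n - 1) * gcdVec ν μ ≤ ∑ i, ν i := by
  classical
  have hg0 : 0 < gcdVec ν μ := by
    have h1 : Finset.univ.gcd ν ≠ 0 := by
      intro h
      rw [Finset.gcd_eq_zero_iff] at h
      exact (hν ⟨0, hm⟩).ne' (h _ (Finset.mem_univ _))
    exact Nat.gcd_pos_of_pos_left _ (Nat.pos_of_ne_zero h1)
  have hgdν : ∀ i, gcdVec ν μ ∣ ν i :=
    fun i => (Nat.gcd_dvd_left _ _).trans (Finset.gcd_dvd (Finset.mem_univ i))
  have hgdμ : ∀ j, gcdVec ν μ ∣ μ j :=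
    fun j => (Nat.gcd_dvd_right _ _).trans (Finset.gcd_dvd (Finset.mem_univ j))
  constructor
  · rintro ⟨E, hEcard, htotR, hallR⟩
    have hallN : ∀ S : Finset (Fin m), S.Nonempty → S ≠ Finset.univ →
        ∑ i ∈ S, ν i < ∑ j ∈ nbr E S, μ j := by
      intro S h1 h2
      have h := hallR S h1 h2
      beta_reduce at h
      exact_mod_cast h
    set Bc := Finset.univ.filter (fun j : Fin n => ∃ i, (i, j) ∈ E) with hBc
    have hEsub : E ⊆ (Finset.univ : Finset (Fin m)) ×ˢ Bc := by
      intro e he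
      refine Finset.mem_product.2 ⟨Finset.mem_univ _, ?_⟩
      rw [hBc]
      exact Finset.mem_filter.2 ⟨Finset.mem_univ _, e.1, by simpa using he⟩
    have hBcle : Bc.card ≤ n := by
      have h1 : Bc.card ≤ (Finset.univ : Finset (Fin n)).card :=
        Finset.card_le_card (Finset.filter_subset _ _)
      simpa using h1
    have hhallX : ∀ S ⊆ (Finset.univ : Finset (Fin m)), S.Nonempty → S ≠ Finset.univ →
        ∑ i ∈ S, ν i < ∑ j ∈ Bc.filter (fun j => ∃ i ∈ S, (i, j) ∈ E), μ j := by
      intro S _ h1 h2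
      have heq : Bc.filter (fun j => ∃ i ∈ S, (i, j) ∈ E) = nbr E S := by
        ext j
        simp only [nbr, hBc, Finset.mem_filter, Finset.mem_univ, true_and]
        constructor
        · rintro ⟨_, hP⟩
          exact hP
        · rintro ⟨i, hiS, hij⟩
          exact ⟨⟨i, hij⟩, i, hiS, hij⟩
      rw [heq]
      exact hallN S h1 h2
    have hcompl : (n - Bc.card) * gcdVec ν μ ≤ ∑ j ∈ Finset.univ \ Bc, μ j := by
      have hcard : (Finset.univ \ Bc).card = n - Bc.card := by
        rw [Finset.card_sdiff_of_subset (Finset.subset_univ _)]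
        simp
      have h1 := Finset.card_nsmul_le_sum (Finset.univ \ Bc) μ (gcdVec ν μ)
        (fun j _ => Nat.le_of_dvd (hμ j) (hgdμ j))
      rwa [hcard, smul_eq_mul] at h1
    have hsplit : (∑ j ∈ Finset.univ \ Bc, μ j) + ∑ j ∈ Bc, μ j = ∑ j, μ j :=
      Finset.sum_sdiff (Finset.subset_univ _)
    have hclaim := Stmt9.claimX (m + n) Finset.univ Bc ν μ E (n - Bc.card) (gcdVec ν μ)
      (by simp only [Finset.card_univ, Fintype.card_fin]; omega) hg0
      ⟨⟨0, hm⟩, Finset.mem_univ _⟩ hEsub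
      (fun i _ => ⟨hgdν i, hν i⟩) (fun j _ => ⟨hgdμ j, hμ j⟩)
      (by
        intro j hj
        rw [hBc] at hj
        exact (Finset.mem_filter.1 hj).2)
      (by
        simp only [Finset.card_univ, Fintype.card_fin]
        omega)
      (fun S hS h1 h2 => by convert hhallX S hS h1 h2)
      (by
        -- ∑_{Bc} μ + (n - Bc.card) * g ≤ ∑ ν
        have h1 : ∑ i ∈ Finset.univ, ν i = ∑ j, μ j := htot
        omega)
    simp only [Finset.card_univ, Fintype.card_fin] at hclaim
    have e1 : (m + Bc.card) * gcdVec ν μ + (n - Bc.card) * gcdVec ν μ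
        = (m + n) * gcdVec ν μ := by
      rw [← add_mul]
      congr 1
      omega
    have e2 : (m + n) * gcdVec ν μ = (m + n - 1) * gcdVec ν μ + gcdVec ν μ := by
      have h : m + n = (m + n - 1) + 1 := by omega
      nth_rewrite 1 [h]
      rw [add_mul, one_mul]
    have h1 : ∑ i ∈ Finset.univ, ν i = ∑ j, μ j := htot
    omega
  · intro hineq
    have hgdvd : ∀ i ∈ (Finset.univ : Finset (Fin m)), gcdVec ν μ ∣ ν i := fun i _ => hgdν i
    have hgdvd' : ∀ j ∈ (Finset.univ : Finset (Fin n)), gcdVec ν μ ∣ μ j := fun j _ => hgdμ j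
    have hsa : ∑ i ∈ Finset.univ, (ν i / gcdVec ν μ) = (∑ i, ν i) / gcdVec ν μ :=
      Stmt9.sum_div_distrib hgdvd
    have hsb : ∑ j ∈ Finset.univ, (μ j / gcdVec ν μ) = (∑ i, ν i) / gcdVec ν μ := by
      rw [Stmt9.sum_div_distrib hgdvd', htot]
    have hgcd1 : Nat.gcd (Finset.univ.gcd (fun i => ν i / gcdVec ν μ))
        (Finset.univ.gcd (fun j => μ j / gcdVec ν μ)) = 1 := by
      rw [Stmt9.gcd_div_distrib hgdvd hg0, Stmt9.gcd_div_distrib hgdvd' hg0]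
      exact Nat.coprime_div_gcd_div_gcd hg0
    have hcards : (Finset.univ : Finset (Fin m)).card + (Finset.univ : Finset (Fin n)).card
        ≤ (∑ i, ν i) / gcdVec ν μ + 1 := by
      simp only [Finset.card_univ, Fintype.card_fin]
      have h1 : m + n - 1 ≤ (∑ i, ν i) / gcdVec ν μ :=
        (Nat.le_div_iff_mul_le hg0).2 hineq
      omega
    obtain ⟨E, hEsub, hEcard, hEcov, hEhall⟩ :=
      Stmt9.bwd Stmt9.exists_good Stmt9.exists_good ((∑ i, ν i) / gcdVec ν μ)
        Finset.univ Finset.univ (fun i => ν i / gcdVec ν μ) (fun j => μ j / gcdVec ν μ)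
        ⟨⟨0, hm⟩, Finset.mem_univ _⟩ ⟨⟨0, hn⟩, Finset.mem_univ _⟩
        (fun i _ => Nat.div_pos (Nat.le_of_dvd (hν i) (hgdν i)) hg0)
        (fun j _ => Nat.div_pos (Nat.le_of_dvd (hμ j) (hgdμ j)) hg0)
        hsa hsb hgcd1 hcards
    refine ⟨E, ?_, ?_, ?_⟩
    · simp only [Finset.card_univ, Fintype.card_fin] at hEcard
      omega
    · beta_reduce
      exact_mod_cast htot
    · intro S hS1 hS2
      have hh := hEhall S (Finset.subset_univ S) hS1 hS2
      have h2 : ∑ i ∈ S, ν i = (∑ i ∈ S, ν i / gcdVec ν μ) * gcdVec ν μ := by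
        rw [Finset.sum_mul]
        exact Finset.sum_congr rfl (fun i _ => (Nat.div_mul_cancel (hgdν i)).symm)
      have h3 : ∑ j ∈ nbr E S, μ j
          = (∑ j ∈ nbr E S, μ j / gcdVec ν μ) * gcdVec ν μ := by
        rw [Finset.sum_mul]
        exact Finset.sum_congr rfl (fun j _ => (Nat.div_mul_cancel (hgdμ j)).symm)
      have hnbr : Finset.univ.filter (fun j => ∃ i ∈ S, (i, j) ∈ E) = nbr E S := rfl
      replace hh : ∑ i ∈ S, ν i / gcdVec ν μ < ∑ j ∈ nbr E S, μ j / gcdVec ν μ := by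
        convert hh using 2
        ext j
        simp [nbr]
      have h4 : ∑ i ∈ S, ν i < ∑ j ∈ nbr E S, μ j := by
        rw [h2, h3]
        exact Nat.mul_lt_mul_of_lt_of_le hh (le_refl _) hg0
      beta_reduce
      exact_mod_cast h4
end
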